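/- arXiv:1802.00317 — 2 statements merged into one kernel-verified Lean document; each statement's English description precedes it below -/
import Mathlib

section
/- Let X be a finite species set and 𝒯 a set of MUL-trees with label sets contained in X. For any integer k, there exists a duplication tree on X with exactly k duplication nodes that is consistent with every MUL-tree in 𝒯 if and only if there exists a beaded tree on X with exactly k beads that weakly displays every MUL-tree in 𝒯. -/
/-!
Common formal framework for MUL-trees, phylogenetic networks, beaded trees,
duplication trees, weak embeddings and related operations, following
van Iersel, Janssen, Jones, Murakami, Zeh,
"Polynomial-Time Algorithms for Phylogenetic Inference Problems involving
duplication and reticulation".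

All graphs are directed multigraphs on natural-number vertices, given by a
finite vertex set, an edge-multiplicity function and a (partial) leaf
labelling by species (also natural numbers).
-/

open scoped Classical

structure DG where
  verts : Finset ℕ
  mult : ℕ → ℕ → ℕ
  label : ℕ → Option ℕ

namespace DG

/-- An arc is a pair of endpoints together with the index of the parallel copy. -/
abbrev Arc := ℕ × ℕ × ℕ

def Adj (G : DG) (u v : ℕ) : Prop := 0 < G.mult u v

def outDeg (G : DG) (u : ℕ) : ℕ := ∑ v ∈ G.verts, G.mult u v
def inDeg (G : DG) (v : ℕ) : ℕ := ∑ u ∈ G.verts, G.mult u v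

/-- `G.Reaches u v` : `u` is an ancestor of `v` (possibly `u = v`). -/
def Reaches (G : DG) : ℕ → ℕ → Prop := Relation.ReflTransGen G.Adj
/-- `G.SReaches u v` : `u` is a strict ancestor of `v` (in an acyclic graph). -/
def SReaches (G : DG) : ℕ → ℕ → Prop := Relation.TransGen G.Adj
def Acyclic (G : DG) : Prop := ∀ v, ¬ G.SReaches v v

def IsRoot (G : DG) (v : ℕ) : Prop := v ∈ G.verts ∧ G.inDeg v = 0 ∧ G.outDeg v = 1
def IsLeafNode (G : DG) (v : ℕ) : Prop := v ∈ G.verts ∧ G.inDeg v = 1 ∧ G.outDeg v = 0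
def IsTreeNode (G : DG) (v : ℕ) : Prop := v ∈ G.verts ∧ G.inDeg v = 1 ∧ G.outDeg v = 2
def IsRetic (G : DG) (v : ℕ) : Prop := v ∈ G.verts ∧ G.inDeg v = 2 ∧ G.outDeg v = 1
def IsDupNode (G : DG) (v : ℕ) : Prop := v ∈ G.verts ∧ G.inDeg v = 1 ∧ G.outDeg v = 1

/-- The reticulation number: the number of reticulation nodes. -/
def reticNum (G : DG) : ℕ := (G.verts.filter (fun v => G.inDeg v = 2 ∧ G.outDeg v = 1)).card
/-- The duplication number: the number of duplication nodes. -/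
def dupNum (G : DG) : ℕ := (G.verts.filter (fun v => G.inDeg v = 1 ∧ G.outDeg v = 1)).card
/-- The number of beads (counted by their bottom nodes). -/
noncomputable def beadNum (G : DG) : ℕ :=
  (G.verts.filter (fun v => ∃ u ∈ G.verts, G.mult u v = 2)).card

def Supported (G : DG) : Prop := ∀ u v, G.Adj u v → u ∈ G.verts ∧ v ∈ G.verts
/-- Exactly the leaves carry labels. -/
def LabelsOnLeaves (G : DG) : Prop := ∀ v, (∃ x, G.label v = some x) ↔ G.IsLeafNode v

/-- The number of leaves (= labelled nodes). -/
def numLeaves (G : DG) : ℕ := (G.verts.filter (fun v => (G.label v).isSome)).card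

/-- A multi-labelled tree (MUL-tree) with labels contained in `X`. -/
structure IsMulTree (X : Finset ℕ) (G : DG) : Prop where
  root : ∃! r, G.IsRoot r
  nodes : ∀ v ∈ G.verts, G.IsRoot v ∨ G.IsTreeNode v ∨ G.IsLeafNode v
  acyclic : G.Acyclic
  simple : ∀ u v, G.mult u v ≤ 1
  supported : G.Supported
  labels : G.LabelsOnLeaves
  labelsSub : ∀ v x, G.label v = some x → x ∈ X

/-- A rooted binary phylogenetic network on `X` (parallel edges allowed). -/
structure IsNetwork (X : Finset ℕ) (G : DG) : Prop where
  root : ∃! r, G.IsRoot r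
  nodes : ∀ v ∈ G.verts, G.IsRoot v ∨ G.IsTreeNode v ∨ G.IsRetic v ∨ G.IsLeafNode v
  acyclic : G.Acyclic
  supported : G.Supported
  labels : G.LabelsOnLeaves
  labelsSub : ∀ v x, G.label v = some x → x ∈ X
  labelsOnto : ∀ x ∈ X, ∃! v, G.label v = some x

/-- A duplication tree on `X`. -/
structure IsDupTree (X : Finset ℕ) (G : DG) : Prop where
  root : ∃! r, G.IsRoot r
  nodes : ∀ v ∈ G.verts, G.IsRoot v ∨ G.IsTreeNode v ∨ G.IsDupNode v ∨ G.IsLeafNode v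
  acyclic : G.Acyclic
  simple : ∀ u v, G.mult u v ≤ 1
  supported : G.Supported
  labels : G.LabelsOnLeaves
  labelsSub : ∀ v x, G.label v = some x → x ∈ X
  labelsOnto : ∀ x ∈ X, ∃! v, G.label v = some x

/-- A beaded tree: a phylogenetic network in which every reticulation node is
the bottom node of a bead (a pair of parallel edges). -/
def IsBeadedTree (X : Finset ℕ) (G : DG) : Prop :=
  IsNetwork X G ∧ ∀ v ∈ G.verts, G.inDeg v = 2 → ∃ u, G.mult u v = 2

def ArcOK (G : DG) (e : Arc) : Prop := e.2.2 < G.mult e.1 e.2.1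

/-- `G.IsWalk p a b` : `p` is a (nonempty) directed path of arcs from `a` to `b`. -/
def IsWalk (G : DG) (p : List Arc) (a b : ℕ) : Prop :=
  p ≠ [] ∧ (∀ e ∈ p, G.ArcOK e) ∧
  List.Chain' (fun e f : Arc => e.2.1 = f.1) p ∧
  p.head?.map Prod.fst = some a ∧
  p.getLast?.map (fun e => e.2.1) = some b

/-- `v` is a node visited by the walk `p`. -/
def OnWalk (p : List Arc) (v : ℕ) : Prop := ∃ e ∈ p, e.1 = v ∨ e.2.1 = v

/-- A weak embedding of a MUL-tree `T` into a network `N`: nodes map to nodes,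
edges map to directed paths and the two paths out of an internal node start
with different out-edges. -/
def WeakEmbedding (T N : DG) (h : ℕ → ℕ) (hE : ℕ → ℕ → List Arc) : Prop :=
  (∀ v ∈ T.verts, h v ∈ N.verts) ∧
  (∀ v, T.IsLeafNode v → N.IsLeafNode (h v) ∧ N.label (h v) = T.label v) ∧
  (∀ u v, T.Adj u v → N.IsWalk (hE u v) (h u) (h v)) ∧
  (∀ x y y', T.Adj x y → T.Adj x y' → y ≠ y' → (hE x y).head? ≠ (hE x y').head?)

/-- `N.Displays T` : `N` weakly displays `T`. -/
def Displays (N T : DG) : Prop := ∃ h hE, WeakEmbedding T N h hE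

/-- `x` is a least common ancestor of `y` and `z`. -/
def IsLCA (G : DG) (x y z : ℕ) : Prop :=
  G.Reaches x y ∧ G.Reaches x z ∧
  ∀ w, G.SReaches x w → ¬ (G.Reaches w y ∧ G.Reaches w z)

/-- A duplication mapping from a MUL-tree `T` to a duplication tree `D`. -/
def DupMapping (T D : DG) (M : ℕ → ℕ) : Prop :=
  (∀ v, T.IsLeafNode v → D.IsLeafNode (M v) ∧ D.label (M v) = T.label v) ∧
  (∀ u v, T.Adj u v → D.SReaches (M u) (M v)) ∧
  (∀ u v v', T.Adj u v → T.Adj u v' → v ≠ v' →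
    D.IsLCA (M u) (M v) (M v') ∨ D.IsDupNode (M u))

/-- `D.ConsistentWith T` : there is a duplication mapping from `T` to `D`. -/
def ConsistentWith (D T : DG) : Prop := ∃ M, DupMapping T D M

/-- A solution to Beaded Tree on `𝒯`: a beaded tree on `X` weakly displaying
every MUL-tree of `𝒯`. -/
def Solution (X : Finset ℕ) (Ts : Set DG) (B : DG) : Prop :=
  IsBeadedTree X B ∧ ∀ T ∈ Ts, B.Displays T

/-- An optimal solution: minimum reticulation number among all solutions. -/
def OptSolution (X : Finset ℕ) (Ts : Set DG) (B : DG) : Prop :=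
  Solution X Ts B ∧ ∀ B', Solution X Ts B' → B.reticNum ≤ B'.reticNum

/-- Number of beads traversed by a walk. -/
def beadsOnWalk (G : DG) (p : List Arc) : ℕ :=
  p.countP (fun e => decide (G.mult e.1 e.2.1 = 2))

/-- Number of duplication nodes traversed by a walk (as arc sources). -/
def dupsOnWalk (G : DG) (p : List Arc) : ℕ :=
  p.countP (fun e => decide (G.inDeg e.1 = 1 ∧ G.outDeg e.1 = 1))

/-- The bead depth: the maximum number of beads on any directed path. -/
noncomputable def beadDepth (G : DG) : ℕ :=
  sSup {n | ∃ p a b, G.IsWalk p a b ∧ G.beadsOnWalk p = n}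

/-- A solution to Beaded Tree Depth of minimum bead depth. -/
def DepthOptSolution (X : Finset ℕ) (Ts : Set DG) (B : DG) : Prop :=
  Solution X Ts B ∧ ∀ B', Solution X Ts B' → B.beadDepth ≤ B'.beadDepth

/-- The child of the root is the top node of a bead. -/
def HasBeadAtRoot (G : DG) : Prop :=
  ∃ r u v, G.IsRoot r ∧ G.Adj r u ∧ G.mult u v = 2

/-- `B` is obtained from `B'` by inserting a new bead `(u,v)` between the root
`r` of `B'` and its child `a`.  Equivalently, `B'` is obtained from `B` by
deleting `u` and `v` and adding an edge from the root to the child of `v`. -/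
def AddBeadAtRoot (B' B : DG) : Prop :=
  ∃ r a u v, B'.IsRoot r ∧ B'.Adj r a ∧ u ∉ B'.verts ∧ v ∉ B'.verts ∧ u ≠ v ∧
    B.verts = insert u (insert v B'.verts) ∧
    B.label = (fun w => if w = u ∨ w = v then none else B'.label w) ∧
    B.mult = (fun s t =>
      if s = r ∧ t = a then 0
      else if s = r ∧ t = u then 1
      else if s = u ∧ t = v then 2
      else if s = v ∧ t = a then 1
      else if s = u ∨ s = v ∨ t = u ∨ t = v then 0
      else B'.mult s t)

/-- `N` is obtained by joining `N1` and `N2`: the two roots are identified into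
a single node `u`, which becomes the child of a new root `r`.  The embeddings
`f1`, `f2` realise the copies of `N1` and `N2` inside `N`. -/
def IsJoinOf (N N1 N2 : DG) : Prop :=
  ∃ (f1 f2 : ℕ → ℕ) (r u : ℕ),
    N.IsRoot r ∧ u ∈ N.verts ∧ N.mult r u = 1 ∧
    Set.InjOn f1 N1.verts ∧ Set.InjOn f2 N2.verts ∧
    (∀ v, N1.IsRoot v → f1 v = u) ∧ (∀ v, N2.IsRoot v → f2 v = u) ∧
    (∀ w, w ∈ N.verts ↔ (w = r ∨ (∃ v ∈ N1.verts, f1 v = w) ∨ (∃ v ∈ N2.verts, f2 v = w))) ∧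
    (∀ v1 ∈ N1.verts, ∀ v2 ∈ N2.verts, f1 v1 = f2 v2 → N1.IsRoot v1 ∧ N2.IsRoot v2) ∧
    (∀ v ∈ N1.verts, f1 v ≠ r) ∧ (∀ v ∈ N2.verts, f2 v ≠ r) ∧
    (∀ a ∈ N1.verts, ∀ b ∈ N1.verts, N.mult (f1 a) (f1 b) = N1.mult a b) ∧
    (∀ a ∈ N2.verts, ∀ b ∈ N2.verts, N.mult (f2 a) (f2 b) = N2.mult a b) ∧
    (∀ a b, N.Adj a b →
      (a = r ∧ b = u) ∨
      (∃ a' ∈ N1.verts, ∃ b' ∈ N1.verts, f1 a' = a ∧ f1 b' = b ∧ N1.Adj a' b') ∨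
      (∃ a' ∈ N2.verts, ∃ b' ∈ N2.verts, f2 a' = a ∧ f2 b' = b ∧ N2.Adj a' b')) ∧
    (∀ v ∈ N1.verts, N.label (f1 v) = N1.label v) ∧
    (∀ v ∈ N2.verts, N.label (f2 v) = N2.label v) ∧
    N.label r = none

/-- Delete a node and all incident edges. -/
def deleteNode (G : DG) (v : ℕ) : DG where
  verts := G.verts.erase v
  mult := fun a b => if a = v ∨ b = v then 0 else G.mult a b
  label := fun a => if a = v then none else G.label a

/-- Suppress an in-degree-1 out-degree-1 node `v` with parent `p` and child `c`. -/
def suppressNode (G : DG) (v p c : ℕ) : DG where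
  verts := G.verts.erase v
  mult := fun a b =>
    if a = v ∨ b = v then 0
    else if a = p ∧ b = c then G.mult a b + 1
    else G.mult a b
  label := fun a => if a = v then none else G.label a

/-- One step of the restriction procedure for label set `S`: delete a leaf
labelled in `S` or an unlabelled node of out-degree 0, or suppress an
unlabelled node of in-degree 1 and out-degree 1. -/
inductive RStep (S : Finset ℕ) : DG → DG → Prop
  | del (G : DG) (v : ℕ) : v ∈ G.verts →
      ((∃ x ∈ S, G.label v = some x) ∨ (G.label v = none ∧ G.outDeg v = 0)) →
      RStep S G (G.deleteNode v)
  | suppress (G : DG) (v p c : ℕ) : v ∈ G.verts → G.label v = none →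
      G.mult p v = 1 → G.inDeg v = 1 → G.mult v c = 1 → G.outDeg v = 1 →
      RStep S G (G.suppressNode v p c)

/-- `Restricts S G G'` : `G' = G ∖ S`, i.e. `G'` is obtained from `G` by
deleting all leaves labelled in `S` and exhaustively deleting unlabelled nodes
of out-degree 0 and suppressing in-degree-1 out-degree-1 nodes. -/
def Restricts (S : Finset ℕ) (G G' : DG) : Prop :=
  Relation.ReflTransGen (RStep S) G G' ∧ ∀ H, ¬ RStep S G' H

/-- `𝒯 ∖ S` for a set of MUL-trees (empty results discarded). -/
def SetRestrict (S : Finset ℕ) (Ts : Set DG) : Set DG :=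
  {T' | T'.verts.Nonempty ∧ ∃ T ∈ Ts, Restricts S T T'}

/-- The member of the depth-1 forest of `T` keeping `y` and discarding the
subtree rooted at `y'` (here `r` is the root, `x` its child, `y,y'` the
children of `x`, which is suppressed). -/
noncomputable def f1del (T : DG) (r x y y' : ℕ) : DG where
  verts := (T.verts.filter (fun v => ¬ T.Reaches y' v)).erase x
  mult := fun a b =>
    if a = r ∧ b = y then 1
    else if a = x ∨ b = x ∨ T.Reaches y' a ∨ T.Reaches y' b then 0
    else T.mult a b
  label := fun v => if v = x ∨ T.Reaches y' v then none else T.label v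

/-- `T'` is one of the two members of the depth-1 forest `F1(T)`. -/
def InF1 (T T' : DG) : Prop :=
  ∃ r x y y', T.IsRoot r ∧ T.Adj r x ∧ T.Adj x y ∧ T.Adj x y' ∧ y ≠ y' ∧
    T' = f1del T r x y y'

/-- `F1(𝒯)`. -/
def F1Set (Ts : Set DG) : Set DG := {T' | ∃ T ∈ Ts, InF1 T T'}

/-- Two species labels occur in the same member of `F1(𝒯)`. -/
def SplitRel (Ts : Set DG) (a b : ℕ) : Prop :=
  ∃ T' ∈ F1Set Ts, (∃ u, T'.label u = some a) ∧ (∃ v, T'.label v = some b)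

/-- `S` is one of the classes of the split partition of `X` for `𝒯`. -/
def SplitPart (X : Finset ℕ) (Ts : Set DG) (S : Finset ℕ) : Prop :=
  ∃ a ∈ X, S = X.filter (fun b => Relation.EqvGen (SplitRel Ts) a b)

end DG

namespace DG

/-! ### General auxiliary lemmas -/

lemma adj_mem_left {G : DG} (hS : G.Supported) {a b : ℕ} (h : G.Adj a b) : a ∈ G.verts :=
  (hS a b h).1

lemma adj_mem_right {G : DG} (hS : G.Supported) {a b : ℕ} (h : G.Adj a b) : b ∈ G.verts :=
  (hS a b h).2

lemma mult_le_outDeg {G : DG} (hS : G.Supported) {a b : ℕ} :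
    G.mult a b ≤ G.outDeg a := by
  rcases Nat.eq_zero_or_pos (G.mult a b) with h | h
  · omega
  · exact Finset.single_le_sum (f := fun v => G.mult a v) (fun _ _ => Nat.zero_le _)
      (adj_mem_right hS h)

lemma mult_le_inDeg {G : DG} (hS : G.Supported) {a b : ℕ} :
    G.mult a b ≤ G.inDeg b := by
  rcases Nat.eq_zero_or_pos (G.mult a b) with h | h
  · omega
  · exact Finset.single_le_sum (f := fun v => G.mult v b) (fun _ _ => Nat.zero_le _)
      (adj_mem_left hS h)

lemma two_mults_le_inDeg {G : DG} (hS : G.Supported) {p q b : ℕ} (hpq : p ≠ q)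
    (hp : G.Adj p b) (hq : G.Adj q b) :
    G.mult p b + G.mult q b ≤ G.inDeg b := by
  have hsub : ({p, q} : Finset ℕ) ⊆ G.verts := by
    intro x hx; simp only [Finset.mem_insert, Finset.mem_singleton] at hx
    rcases hx with rfl | rfl
    · exact adj_mem_left hS hp
    · exact adj_mem_left hS hq
  have := Finset.sum_le_sum_of_subset (f := fun v => G.mult v b) hsub
  rwa [Finset.sum_pair hpq] at this

lemma two_mults_le_outDeg {G : DG} (hS : G.Supported) {a p q : ℕ} (hpq : p ≠ q)
    (hp : G.Adj a p) (hq : G.Adj a q) :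
    G.mult a p + G.mult a q ≤ G.outDeg a := by
  have hsub : ({p, q} : Finset ℕ) ⊆ G.verts := by
    intro x hx; simp only [Finset.mem_insert, Finset.mem_singleton] at hx
    rcases hx with rfl | rfl
    · exact adj_mem_right hS hp
    · exact adj_mem_right hS hq
  have := Finset.sum_le_sum_of_subset (f := fun v => G.mult a v) hsub
  rwa [Finset.sum_pair hpq] at this

/-- unique parent from in-degree at most one. -/
lemma parent_unique {G : DG} (hS : G.Supported) (hin : ∀ z ∈ G.verts, G.inDeg z ≤ 1)
    {p q z : ℕ} (hp : G.Adj p z) (hq : G.Adj q z) : p = q := by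
  by_contra hne
  have h1 := two_mults_le_inDeg hS hne hp hq
  have := hin z (adj_mem_right hS hp)
  unfold Adj at hp hq
  omega

/-- In a graph where every node has at most one parent, the ancestors of a node are
totally ordered. -/
lemma reaches_comparable {G : DG} (hS : G.Supported) (hin : ∀ z ∈ G.verts, G.inDeg z ≤ 1) :
    ∀ {a c : ℕ}, G.Reaches a c → ∀ {b : ℕ}, G.Reaches b c → G.Reaches a b ∨ G.Reaches b a := by
  intro a c hac
  induction hac with
  | refl => intro b hbc; exact Or.inr hbc
  | @tail p c hap hpc ih =>
    intro b hbc
    rcases hbc.cases_tail with rfl | ⟨q, hbq, hqc⟩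
    · exact Or.inl (hap.tail hpc)
    · have : q = p := parent_unique hS hin hqc hpc
      subst this
      exact ih hbq

/-- A walk witnesses strict reachability. -/
lemma sreaches_of_isWalk {G : DG} : ∀ {p : List Arc} {a b : ℕ}, G.IsWalk p a b → G.SReaches a b := by
  intro p
  induction p with
  | nil => intro a b h; exact absurd rfl h.1
  | cons e rest ih =>
    intro a b h
    obtain ⟨-, hok, hch, hhd, hlast⟩ := h
    simp only [List.head?_cons, Option.map_some] at hhd
    have hea : e.1 = a := by injection hhd
    have hadj : G.Adj a e.2.1 := by
      have := hok e (List.mem_cons_self)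
      unfold ArcOK at this
      rw [hea] at this
      unfold Adj; omega
    cases rest with
    | nil =>
      simp only [List.getLast?, Option.map_some] at hlast
      have : e.2.1 = b := by injection hlast
      subst this
      exact Relation.TransGen.single hadj
    | cons f rest' =>
      have hwalk : G.IsWalk (f :: rest') e.2.1 b := by
        refine ⟨by simp, fun x hx => hok x (List.mem_cons_of_mem _ hx), (List.isChain_cons_cons.mp hch).2, ?_, ?_⟩
        · simp only [List.head?_cons, Option.map_some]
          have := (List.isChain_cons_cons.mp hch).1
          rw [this]
        · rw [← hlast]
          simp [List.getLast?_cons_cons]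
      exact Relation.TransGen.head hadj (ih hwalk)

/-- Extract a vertex chain from strict reachability. -/
lemma chain_of_sreaches {G : DG} {a b : ℕ} (h : G.SReaches a b) :
    ∃ l : List ℕ, l ≠ [] ∧ List.Chain G.Adj a l ∧
      (a :: l).getLast (List.cons_ne_nil _ _) = b := by
  obtain ⟨w, haw, hwb⟩ := Relation.TransGen.head'_iff.mp h
  obtain ⟨l, hch, hlast⟩ := List.exists_isChain_cons_of_relationReflTransGen hwb
  refine ⟨w :: l, by simp, List.chain_cons.mpr ⟨haw, hch⟩, ?_⟩
  rw [List.getLast_cons (List.cons_ne_nil _ _)]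
  exact hlast

lemma reaches_of_chain {G : DG} :
    ∀ (l : List ℕ) (a : ℕ), List.Chain G.Adj a l →
      G.Reaches a ((a :: l).getLast (List.cons_ne_nil _ _)) := by
  intro l
  induction l with
  | nil => intro a _; exact Relation.ReflTransGen.refl
  | cons w l' ih =>
    intro a hch
    unfold List.Chain at hch
    rw [List.chain_cons] at hch
    have := ih w hch.2
    rw [List.getLast_cons (List.cons_ne_nil _ _)]
    exact Relation.ReflTransGen.head hch.1 this

/-- A node of out-degree two in a simple graph has two distinct children. -/
lemma two_children {G : DG} (hS : G.Supported) (hsimple : ∀ u v, G.mult u v ≤ 1)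
    {a : ℕ} (h2 : G.outDeg a = 2) : ∃ y y', y ≠ y' ∧ G.Adj a y ∧ G.Adj a y' := by
  classical
  set s := G.verts.filter (fun u => 0 < G.mult a u) with hs
  have hsum : ∑ u ∈ s, G.mult a u = 2 := by
    rw [hs, Finset.sum_filter_of_ne]
    · exact h2
    · intro x _ hx; omega
  have hcard : 2 ≤ s.card := by
    by_contra hlt
    have := Finset.sum_le_card_nsmul s (fun u => G.mult a u) 1 (fun x _ => hsimple a x)
    simp only [smul_eq_mul, mul_one] at this
    omega
  obtain ⟨y, hy, y', hy', hne⟩ := Finset.one_lt_card.mp (show 1 < s.card by omega)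
  rw [hs, Finset.mem_filter] at hy hy'
  exact ⟨y, y', hne, hy.2, hy'.2⟩

/-- If `a` has out-degree two and only the children `y,y'`, the multiplicities to
other nodes vanish. -/
lemma children_eq_of_outDeg_two {G : DG} (hS : G.Supported) {a y : ℕ}
    (h2 : G.outDeg a = 2) (hy : G.mult a y = 2) {z : ℕ} (hz : G.Adj a z) : z = y := by
  by_contra hne
  have := two_mults_le_outDeg hS (Ne.symm hne) (by unfold Adj; omega) hz
  unfold Adj at hz
  omega

/-- The single out-arc of a node of out-degree one. -/
lemma out_arc_unique {G : DG} (hS : G.Supported) {v : ℕ} (h1 : G.outDeg v = 1)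
    {e f : DG.Arc} (he : G.ArcOK e) (hf : G.ArcOK f) (hev : e.1 = v) (hfv : f.1 = v) :
    e = f := by
  obtain ⟨e1, e2, e3⟩ := e
  obtain ⟨f1, f2, f3⟩ := f
  simp only at hev hfv
  unfold ArcOK at he hf
  simp only at he hf
  rw [hev] at he
  rw [hfv] at hf
  have hadj : G.Adj v e2 := by unfold Adj; omega
  have hadj' : G.Adj v f2 := by unfold Adj; omega
  have h22 : e2 = f2 := by
    by_contra hne
    have := two_mults_le_outDeg hS hne hadj hadj'
    omega
  subst h22
  have := mult_le_outDeg hS (G := G) (a := v) (b := e2)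
  simp only [Prod.mk.injEq]
  refine ⟨hev.trans hfv.symm, trivial, by omega⟩

end DG

namespace DG

/-! ### Direction 1: from a duplication tree to a beaded tree -/

/-- Replace every duplication node `d` by a bead `(2d, 2d+1)`. -/
noncomputable def beadify (D : DG) : DG where
  verts := D.verts.image (fun v => 2*v) ∪
    (D.verts.filter (fun v => D.IsDupNode v)).image (fun v => 2*v+1)
  mult := fun a b =>
    if b = a + 1 ∧ a % 2 = 0 ∧ D.IsDupNode (a/2) then 2
    else if b % 2 = 0 ∧ ((a % 2 = 0 ∧ ¬ D.IsDupNode (a/2)) ∨ (a % 2 = 1 ∧ D.IsDupNode (a/2)))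
      then D.mult (a/2) (b/2)
    else 0
  label := fun a => if a % 2 = 0 then D.label (a/2) else none

variable {D : DG}

lemma beadify_mem_verts {a : ℕ} :
    a ∈ (beadify D).verts ↔
      ((∃ v ∈ D.verts, a = 2*v) ∨ (∃ d, D.IsDupNode d ∧ a = 2*d+1)) := by
  simp only [beadify, Finset.mem_union, Finset.mem_image, Finset.mem_filter]
  constructor
  · rintro (⟨v, hv, rfl⟩ | ⟨d, ⟨hd1, hd2⟩, rfl⟩)
    · exact Or.inl ⟨v, hv, rfl⟩
    · exact Or.inr ⟨d, hd2, rfl⟩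
  · rintro (⟨v, hv, rfl⟩ | ⟨d, hd, rfl⟩)
    · exact Or.inl ⟨v, hv, rfl⟩
    · exact Or.inr ⟨d, ⟨hd.1, hd⟩, rfl⟩

lemma beadify_mult_ee (p q : ℕ) :
    (beadify D).mult (2*p) (2*q) = if D.IsDupNode p then 0 else D.mult p q := by
  have e1 : (2*p)/2 = p := by omega
  have e2 : (2*q)/2 = q := by omega
  simp only [beadify]
  rw [if_neg (by rintro ⟨h, -, -⟩; omega)]
  by_cases hd : D.IsDupNode p
  · rw [if_neg, if_pos hd]
    rintro ⟨-, (⟨-, h⟩ | ⟨h, -⟩)⟩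
    · rw [e1] at h; exact h hd
    · omega
  · rw [if_pos ⟨by omega, Or.inl ⟨by omega, by rw [e1]; exact hd⟩⟩, if_neg hd, e1, e2]

lemma beadify_mult_oe (d q : ℕ) :
    (beadify D).mult (2*d+1) (2*q) = if D.IsDupNode d then D.mult d q else 0 := by
  have e1 : (2*d+1)/2 = d := by omega
  simp only [beadify]
  rw [if_neg (by rintro ⟨-, h, -⟩; omega)]
  by_cases hd : D.IsDupNode d
  · rw [if_pos ⟨by omega, Or.inr ⟨by omega, by rw [e1]; exact hd⟩⟩, if_pos hd, e1]
    congr 1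
    omega
  · rw [if_neg, if_neg hd]
    rintro ⟨-, (⟨h, -⟩ | ⟨-, h⟩)⟩
    · omega
    · rw [e1] at h; exact hd h

lemma beadify_mult_eo (p d : ℕ) :
    (beadify D).mult (2*p) (2*d+1) = if p = d ∧ D.IsDupNode d then 2 else 0 := by
  have e1 : (2*p)/2 = p := by omega
  simp only [beadify]
  by_cases h : p = d ∧ D.IsDupNode d
  · obtain ⟨rfl, hd⟩ := h
    rw [if_pos ⟨by omega, by omega, by rw [e1]; exact hd⟩, if_pos ⟨rfl, hd⟩]
  · rw [if_neg, if_neg, if_neg h]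
    · rintro ⟨h1, -⟩; omega
    · rintro ⟨h1, h2, h3⟩
      rw [e1] at h3
      exact h ⟨by omega, by rw [show p = d by omega] at h3; exact h3⟩

lemma beadify_mult_oo (p d : ℕ) :
    (beadify D).mult (2*p+1) (2*d+1) = 0 := by
  simp only [beadify]
  rw [if_neg (by rintro ⟨-, h, -⟩; omega), if_neg (by rintro ⟨h, -⟩; omega)]

lemma beadify_label_e (v : ℕ) : (beadify D).label (2*v) = D.label v := by
  simp only [beadify]
  rw [if_pos (by omega), show (2*v)/2 = v by omega]

lemma beadify_label_o (v : ℕ) : (beadify D).label (2*v+1) = none := by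
  simp only [beadify]
  rw [if_neg (by omega)]

lemma beadify_adj {a b : ℕ} :
    (beadify D).Adj a b ↔
      ((∃ d, D.IsDupNode d ∧ a = 2*d ∧ b = 2*d+1) ∨
       (∃ p q, D.Adj p q ∧ b = 2*q ∧ ((a = 2*p ∧ ¬ D.IsDupNode p) ∨ (a = 2*p+1 ∧ D.IsDupNode p)))) := by
  unfold Adj
  constructor
  · intro h
    simp only [beadify] at h
    split_ifs at h with h1 h2
    · obtain ⟨hb, ha, hd⟩ := h1
      exact Or.inl ⟨a/2, hd, by omega, by omega⟩
    · obtain ⟨hb, hcase⟩ := h2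
      refine Or.inr ⟨a/2, b/2, h, by omega, ?_⟩
      rcases hcase with ⟨ha, hd⟩ | ⟨ha, hd⟩
      · exact Or.inl ⟨by omega, hd⟩
      · exact Or.inr ⟨by omega, hd⟩
    · omega
  · rintro (⟨d, hd, rfl, rfl⟩ | ⟨p, q, hpq, rfl, (⟨rfl, hp⟩ | ⟨rfl, hp⟩)⟩)
    · rw [beadify_mult_eo, if_pos ⟨rfl, hd⟩]; omega
    · rw [beadify_mult_ee, if_neg hp]; exact hpq
    · rw [beadify_mult_oe, if_pos hp]; exact hpq

lemma beadify_sum (f : ℕ → ℕ) :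
    ∑ w ∈ (beadify D).verts, f w =
      (∑ v ∈ D.verts, f (2*v)) +
      ∑ d ∈ D.verts.filter (fun v => D.IsDupNode v), f (2*d+1) := by
  show ∑ w ∈ _ ∪ _, f w = _
  rw [Finset.sum_union, Finset.sum_image (by intro _ _ _ _ h; beta_reduce at h; omega), Finset.sum_image (by intro _ _ _ _ h; beta_reduce at h; omega)]
  rw [Finset.disjoint_left]
  rintro a ha ha'
  simp only [Finset.mem_image, Finset.mem_filter] at ha ha'
  obtain ⟨v, -, rfl⟩ := ha
  obtain ⟨d, -, h⟩ := ha'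
  omega

lemma beadify_outDeg_e (p : ℕ) :
    (beadify D).outDeg (2*p) = if D.IsDupNode p then 2 else D.outDeg p := by
  unfold outDeg
  rw [beadify_sum]
  have h1 : ∑ v ∈ D.verts, (beadify D).mult (2*p) (2*v)
      = if D.IsDupNode p then 0 else D.outDeg p := by
    simp only [beadify_mult_ee]
    split_ifs with h
    · simp
    · rfl
  have h2 : ∑ d ∈ D.verts.filter (fun v => D.IsDupNode v), (beadify D).mult (2*p) (2*d+1)
      = if D.IsDupNode p then 2 else 0 := by
    simp only [beadify_mult_eo]
    rw [Finset.sum_eq_single p]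
    · simp
    · intro b _ hb; rw [if_neg (by rintro ⟨h, -⟩; exact hb h.symm)]
    · intro hp
      rw [if_neg]
      rintro ⟨-, hd⟩
      exact hp (Finset.mem_filter.mpr ⟨hd.1, hd⟩)
  rw [h1, h2]
  by_cases h : D.IsDupNode p <;> simp [h, outDeg]

lemma beadify_outDeg_o (d : ℕ) :
    (beadify D).outDeg (2*d+1) = if D.IsDupNode d then D.outDeg d else 0 := by
  unfold outDeg
  rw [beadify_sum]
  have h2 : ∑ e ∈ D.verts.filter (fun v => D.IsDupNode v), (beadify D).mult (2*d+1) (2*e+1) = 0 := by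
    simp [beadify_mult_oo]
  rw [h2]
  simp only [beadify_mult_oe]
  split_ifs with h
  · simp [outDeg]
  · simp

lemma beadify_inDeg_e (q : ℕ) : (beadify D).inDeg (2*q) = D.inDeg q := by
  unfold inDeg
  rw [beadify_sum]
  simp only [beadify_mult_ee, beadify_mult_oe]
  have ha : (∑ x ∈ D.verts, if D.IsDupNode x then 0 else D.mult x q)
      = ∑ x ∈ D.verts.filter (fun v => ¬ D.IsDupNode v), D.mult x q := by
    rw [Finset.sum_filter]
    apply Finset.sum_congr rfl
    intro x _
    by_cases h : D.IsDupNode x <;> simp [h]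
  have hb : (∑ x ∈ D.verts.filter (fun v => D.IsDupNode v), if D.IsDupNode x then D.mult x q else 0)
      = ∑ x ∈ D.verts.filter (fun v => D.IsDupNode v), D.mult x q :=
    Finset.sum_congr rfl (by intro x hx; rw [if_pos (Finset.mem_filter.mp hx).2])
  rw [ha, hb, add_comm, Finset.sum_filter_add_sum_filter_not]

lemma beadify_inDeg_o (d : ℕ) :
    (beadify D).inDeg (2*d+1) = if D.IsDupNode d then 2 else 0 := by
  unfold inDeg
  rw [beadify_sum]
  have h2 : ∑ e ∈ D.verts.filter (fun v => D.IsDupNode v), (beadify D).mult (2*e+1) (2*d+1) = 0 := by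
    simp [beadify_mult_oo]
  rw [h2, Nat.add_zero]
  simp only [beadify_mult_eo]
  rw [Finset.sum_eq_single d]
  · by_cases h : D.IsDupNode d <;> simp [h]
  · intro b _ hb; rw [if_neg (by rintro ⟨h, -⟩; exact hb h)]
  · intro hd
    rw [if_neg]
    rintro ⟨-, h⟩
    exact hd h.1

end DG

namespace DG

variable {D : DG} {X : Finset ℕ}

lemma beadify_supported (hS : D.Supported) : (beadify D).Supported := by
  intro a b hab
  rw [beadify_adj] at hab
  rcases hab with ⟨d, hd, rfl, rfl⟩ | ⟨p, q, hpq, rfl, hcase⟩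
  · exact ⟨beadify_mem_verts.mpr (Or.inl ⟨d, hd.1, rfl⟩),
      beadify_mem_verts.mpr (Or.inr ⟨d, hd, rfl⟩)⟩
  · obtain ⟨hp, hq⟩ := hS p q hpq
    refine ⟨?_, beadify_mem_verts.mpr (Or.inl ⟨q, hq, rfl⟩)⟩
    rcases hcase with ⟨rfl, -⟩ | ⟨rfl, hd⟩
    · exact beadify_mem_verts.mpr (Or.inl ⟨p, hp, rfl⟩)
    · exact beadify_mem_verts.mpr (Or.inr ⟨p, hd, rfl⟩)

lemma beadify_sreaches_proj {a b : ℕ} (h : (beadify D).SReaches a b) :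
    D.SReaches (a/2) (b/2) ∨ (b = a + 1 ∧ a % 2 = 0) := by
  induction h with
  | single hab =>
    rcases beadify_adj.mp hab with ⟨d, hd, rfl, rfl⟩ | ⟨p, q, hpq, rfl, hcase⟩
    · exact Or.inr ⟨rfl, by omega⟩
    · left
      rcases hcase with ⟨rfl, -⟩ | ⟨rfl, -⟩
      · rw [show 2*p/2 = p by omega, show 2*q/2 = q by omega]
        exact Relation.TransGen.single hpq
      · rw [show (2*p+1)/2 = p by omega, show 2*q/2 = q by omega]
        exact Relation.TransGen.single hpq
  | @tail b c hab hbc ih =>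
    rcases beadify_adj.mp hbc with ⟨d, hd, rfl, rfl⟩ | ⟨p, q, hpq, hc, hcase⟩
    · rcases ih with h | ⟨hba, ha⟩
      · left
        rw [show (2*d+1)/2 = d by omega]
        rwa [show 2*d/2 = d by omega] at h
      · omega
    · have hbp : b/2 = p := by rcases hcase with ⟨rfl, -⟩ | ⟨rfl, -⟩ <;> omega
      have hcq : c/2 = q := by omega
      rcases ih with h | ⟨hba, ha⟩
      · left; rw [hcq]; exact h.tail (hbp ▸ hpq)
      · left
        rw [hcq, show a/2 = p by omega]
        exact Relation.TransGen.single hpq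

lemma beadify_acyclic (hA : D.Acyclic) : (beadify D).Acyclic := by
  intro v hv
  rcases beadify_sreaches_proj hv with h | ⟨h, -⟩
  · exact hA _ h
  · omega

lemma beadify_root_of (hD : IsDupTree X D) {r : ℕ} (hr : D.IsRoot r) :
    (beadify D).IsRoot (2*r) := by
  have hnd : ¬ D.IsDupNode r := by
    rintro ⟨-, h1, -⟩
    rw [hr.2.1] at h1
    omega
  refine ⟨beadify_mem_verts.mpr (Or.inl ⟨r, hr.1, rfl⟩), ?_, ?_⟩
  · rw [beadify_inDeg_e, hr.2.1]
  · rw [beadify_outDeg_e, if_neg hnd, hr.2.2]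

lemma beadify_isBeadedTree (hD : IsDupTree X D) : IsBeadedTree X (beadify D) := by
  obtain ⟨r, hr, hru⟩ := hD.root
  constructor
  · constructor
    · -- root
      refine ⟨2*r, beadify_root_of hD hr, ?_⟩
      intro w hw
      obtain ⟨hwv, hw1, hw2⟩ := hw
      rcases beadify_mem_verts.mp hwv with ⟨v, hv, rfl⟩ | ⟨d, hd, rfl⟩
      · rw [beadify_inDeg_e] at hw1
        rw [beadify_outDeg_e] at hw2
        have hnd : ¬ D.IsDupNode v := by rintro ⟨-, h, -⟩; omega
        rw [if_neg hnd] at hw2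
        rw [hru v ⟨hv, hw1, hw2⟩]
      · rw [beadify_inDeg_o, if_pos hd] at hw1
        omega
    · -- nodes
      intro w hwv
      rcases beadify_mem_verts.mp hwv with ⟨v, hv, rfl⟩ | ⟨d, hd, rfl⟩
      · rcases hD.nodes v hv with h | h | h | h
        · exact Or.inl (beadify_root_of hD h)
        · have hnd : ¬ D.IsDupNode v := by
            rintro ⟨-, -, hh⟩
            have := h.2.2
            omega
          refine Or.inr (Or.inl ⟨hwv, ?_, ?_⟩)
          · rw [beadify_inDeg_e, h.2.1]
          · rw [beadify_outDeg_e, if_neg hnd, h.2.2]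
        · refine Or.inr (Or.inl ⟨hwv, ?_, ?_⟩)
          · rw [beadify_inDeg_e, h.2.1]
          · rw [beadify_outDeg_e, if_pos h]
        · have hnd : ¬ D.IsDupNode v := by
            rintro ⟨-, -, hh⟩
            have := h.2.2
            omega
          refine Or.inr (Or.inr (Or.inr ⟨hwv, ?_, ?_⟩))
          · rw [beadify_inDeg_e, h.2.1]
          · rw [beadify_outDeg_e, if_neg hnd, h.2.2]
      · refine Or.inr (Or.inr (Or.inl ⟨hwv, ?_, ?_⟩))
        · rw [beadify_inDeg_o, if_pos hd]
        · rw [beadify_outDeg_o, if_pos hd, hd.2.2]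
    · exact beadify_acyclic hD.acyclic
    · exact beadify_supported hD.supported
    · -- labels on leaves
      intro w
      constructor
      · rintro ⟨x, hx⟩
        have hwe : w % 2 = 0 := by
          by_contra h
          have : w = 2*(w/2)+1 := by omega
          rw [this, beadify_label_o] at hx
          exact nomatch hx
        have hw2 : w = 2*(w/2) := by omega
        rw [hw2, beadify_label_e] at hx
        have hleaf : D.IsLeafNode (w/2) := (hD.labels (w/2)).mp ⟨x, hx⟩
        have hnd : ¬ D.IsDupNode (w/2) := by
          rintro ⟨-, -, hh⟩
          have := hleaf.2.2
          omega
        refine ⟨?_, ?_, ?_⟩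
        · rw [hw2]; exact beadify_mem_verts.mpr (Or.inl ⟨w/2, hleaf.1, rfl⟩)
        · rw [hw2, beadify_inDeg_e, hleaf.2.1]
        · rw [hw2, beadify_outDeg_e, if_neg hnd, hleaf.2.2]
      · rintro ⟨hwv, hw1, hw2⟩
        rcases beadify_mem_verts.mp hwv with ⟨v, hv, rfl⟩ | ⟨d, hd, rfl⟩
        · rw [beadify_inDeg_e] at hw1
          rw [beadify_outDeg_e] at hw2
          have hnd : ¬ D.IsDupNode v := by
            rintro hdup
            rw [if_pos hdup] at hw2
            omega
          rw [if_neg hnd] at hw2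
          obtain ⟨x, hx⟩ := (hD.labels v).mpr ⟨hv, hw1, hw2⟩
          exact ⟨x, by rw [beadify_label_e]; exact hx⟩
        · rw [beadify_outDeg_o, if_pos hd, hd.2.2] at hw2
          omega
    · -- labelsSub
      intro w x hx
      have hwe : w % 2 = 0 := by
        by_contra h
        have : w = 2*(w/2)+1 := by omega
        rw [this, beadify_label_o] at hx
        exact nomatch hx
      have hw2 : w = 2*(w/2) := by omega
      rw [hw2, beadify_label_e] at hx
      exact hD.labelsSub _ _ hx
    · -- labelsOnto
      intro x hx
      obtain ⟨v, hv, hvu⟩ := hD.labelsOnto x hx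
      refine ⟨2*v, ?_, ?_⟩
      · show (beadify D).label (2*v) = some x
        rw [beadify_label_e]; exact hv
      intro w hw
      have hw' : (beadify D).label w = some x := hw
      have hwe : w % 2 = 0 := by
        by_contra h
        have : w = 2*(w/2)+1 := by omega
        rw [this, beadify_label_o] at hw'
        exact nomatch hw'
      have hw2 : w = 2*(w/2) := by omega
      rw [hw2, beadify_label_e] at hw'
      rw [hw2, hvu _ hw']
  · -- bead condition
    intro v hv h2
    rcases beadify_mem_verts.mp hv with ⟨w, hw, rfl⟩ | ⟨d, hd, rfl⟩
    · rw [beadify_inDeg_e] at h2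
      rcases hD.nodes w hw with h | h | h | h <;> (first | (exfalso; omega) |
        (exfalso; rw [h.2.1] at h2; omega))
    · refine ⟨2*d, ?_⟩
      rw [beadify_mult_eo, if_pos ⟨rfl, hd⟩]

lemma beadify_beadNum (hD : IsDupTree X D) : (beadify D).beadNum = D.dupNum := by
  unfold beadNum dupNum
  have hset : (beadify D).verts.filter (fun v => ∃ u ∈ (beadify D).verts, (beadify D).mult u v = 2)
      = (D.verts.filter (fun v => D.IsDupNode v)).image (fun d => 2*d+1) := by
    ext w
    simp only [Finset.mem_filter, Finset.mem_image]
    constructor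
    · rintro ⟨hwv, u, hu, hmu⟩
      have : w = u + 1 ∧ u % 2 = 0 ∧ D.IsDupNode (u/2) := by
        by_contra hcon
        simp only [beadify] at hmu
        rw [if_neg hcon] at hmu
        split_ifs at hmu with h
        all_goals
          have := hD.simple (u/2) (w/2)
          omega
      obtain ⟨rfl, hue, hud⟩ := this
      exact ⟨u/2, ⟨hud.1, hud⟩, by omega⟩
    · rintro ⟨d, hd, rfl⟩
      refine ⟨beadify_mem_verts.mpr (Or.inr ⟨d, hd.2, rfl⟩),
        2*d, beadify_mem_verts.mpr (Or.inl ⟨d, hd.1, rfl⟩), ?_⟩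
      rw [beadify_mult_eo, if_pos ⟨rfl, hd.2⟩]
  rw [hset, Finset.card_image_of_injective _ (fun a b h => by
    change 2*a+1 = 2*b+1 at h; omega)]
  congr 1
  apply Finset.filter_congr
  intro v hv
  unfold IsDupNode
  simp [hv]

end DG

namespace DG

/-! ### Walk infrastructure -/

lemma isWalk_single {G : DG} {e : Arc} (he : G.ArcOK e) : G.IsWalk [e] e.1 e.2.1 :=
  ⟨by simp, by simpa using he, List.isChain_singleton _, by simp, by simp⟩

lemma IsWalk.append {G : DG} {p q : List Arc} {a b c : ℕ}
    (hp : G.IsWalk p a b) (hq : G.IsWalk q b c) : G.IsWalk (p ++ q) a c := by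
  obtain ⟨hp0, hp1, hp2, hp3, hp4⟩ := hp
  obtain ⟨hq0, hq1, hq2, hq3, hq4⟩ := hq
  refine ⟨by simp [hp0], ?_, ?_, ?_, ?_⟩
  · intro e he
    rcases List.mem_append.mp he with h | h
    · exact hp1 e h
    · exact hq1 e h
  · unfold List.Chain'
    rw [List.isChain_append]
    refine ⟨hp2, hq2, ?_⟩
    intro e he f hf
    have he2 : e.2.1 = b := by
      rw [he] at hp4
      simpa using hp4
    have hf1 : f.1 = b := by
      rw [hf] at hq3
      simpa using hq3
    rw [he2, hf1]
  · rwa [List.head?_append_of_ne_nil _ hp0]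
  · rw [List.getLast?_append_of_ne_nil _ hq0]
    exact hq4

/-! ### Arcs in the beaded tree along a chain of the duplication tree -/

open Classical in
noncomputable def arcsAux (D : DG) : ℕ → ℕ → List ℕ → List Arc
  | _, _, [] => []
  | c, a, b :: l =>
    (if D.IsDupNode a then [(2*a, 2*a+1, c), (2*a+1, 2*b, 0)] else [(2*a, 2*b, (0:ℕ))])
      ++ arcsAux D 0 b l

variable {D : DG} {X : Finset ℕ}

lemma arcsAux_step_isWalk {a b c : ℕ} (hc : c < 2) (hab : D.Adj a b) :
    (beadify D).IsWalk
      (if D.IsDupNode a then [(2*a, 2*a+1, c), (2*a+1, 2*b, 0)] else [(2*a, 2*b, (0:ℕ))])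
      (2*a) (2*b) := by
  by_cases hd : D.IsDupNode a
  · rw [if_pos hd]
    have h1 : (beadify D).IsWalk [((2*a : ℕ), (2*a+1 : ℕ), c)] (2*a) (2*a+1) := by
      have := isWalk_single (G := beadify D) (e := ((2*a : ℕ), (2*a+1 : ℕ), c))
        (by unfold ArcOK; simp only; rw [beadify_mult_eo, if_pos ⟨rfl, hd⟩]; omega)
      exact this
    have h2 : (beadify D).IsWalk [((2*a+1 : ℕ), (2*b : ℕ), (0:ℕ))] (2*a+1) (2*b) := by
      have := isWalk_single (G := beadify D) (e := ((2*a+1 : ℕ), (2*b : ℕ), (0:ℕ)))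
        (by unfold ArcOK; simp only; rw [beadify_mult_oe, if_pos hd]; exact hab)
      exact this
    exact h1.append h2
  · rw [if_neg hd]
    have := isWalk_single (G := beadify D) (e := ((2*a : ℕ), (2*b : ℕ), (0:ℕ)))
      (by unfold ArcOK; simp only; rw [beadify_mult_ee, if_neg hd]; exact hab)
    exact this

lemma arcsAux_isWalk : ∀ (l : List ℕ) (a c : ℕ), c < 2 → List.Chain D.Adj a l → l ≠ [] →
    (beadify D).IsWalk (arcsAux D c a l) (2*a)
      (2*((a :: l).getLast (List.cons_ne_nil _ _))) := by
  intro l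
  induction l with
  | nil => intro a c hc hch h0; exact absurd rfl h0
  | cons b l' ih =>
    intro a c hc hch h0
    unfold List.Chain at hch
    rw [List.chain_cons] at hch
    cases l' with
    | nil =>
      have : arcsAux D c a [b] =
          (if D.IsDupNode a then [(2*a, 2*a+1, c), (2*a+1, 2*b, 0)] else [(2*a, 2*b, (0:ℕ))]) := by
        simp [arcsAux]
      rw [this]
      have hlast : ((a :: [b]).getLast (List.cons_ne_nil _ _)) = b := by simp
      rw [hlast]
      exact arcsAux_step_isWalk hc hch.1
    | cons b' l'' =>
      have hrec := ih b 0 (by omega) hch.2 (by simp)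
      have hstep := arcsAux_step_isWalk hc hch.1
      have hlast : ((a :: b :: b' :: l'').getLast (List.cons_ne_nil _ _)) =
          ((b :: b' :: l'').getLast (List.cons_ne_nil _ _)) := by
        rw [List.getLast_cons (List.cons_ne_nil _ _)]
      rw [hlast]
      show (beadify D).IsWalk
        ((if D.IsDupNode a then [(2*a, 2*a+1, c), (2*a+1, 2*(b:ℕ), 0)] else [(2*a, 2*b, (0:ℕ))])
          ++ arcsAux D 0 b (b' :: l'')) _ _
      exact hstep.append hrec

lemma arcsAux_head (c a b : ℕ) (l : List ℕ) :
    (arcsAux D c a (b :: l)).head? =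
      some (if D.IsDupNode a then (2*a, 2*a+1, c) else (2*a, 2*b, (0:ℕ))) := by
  show ((if D.IsDupNode a then [(2*a, 2*a+1, c), (2*a+1, 2*b, 0)] else [(2*a, 2*b, (0:ℕ))])
      ++ arcsAux D 0 b l).head? = _
  by_cases hd : D.IsDupNode a <;> simp [hd]

end DG

namespace DG

lemma exists_child_of_outDeg_pos {G : DG} {v : ℕ} (h : 0 < G.outDeg v) : ∃ w, G.Adj v w := by
  unfold outDeg at h
  have h' : ∑ w ∈ G.verts, G.mult v w ≠ 0 := by omega
  obtain ⟨w, hw, hne⟩ := Finset.exists_ne_zero_of_sum_ne_zero h'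
  exact ⟨w, Nat.pos_of_ne_zero (by simpa using hne)⟩

lemma three_mults_le_outDeg {G : DG} (hS : G.Supported) {a y y' z : ℕ}
    (h1 : y ≠ y') (h2 : z ≠ y) (h3 : z ≠ y')
    (hy : G.Adj a y) (hy' : G.Adj a y') (hz : G.Adj a z) :
    G.mult a z + (G.mult a y + G.mult a y') ≤ G.outDeg a := by
  have hsub : ({z, y, y'} : Finset ℕ) ⊆ G.verts := by
    intro x hx
    simp only [Finset.mem_insert, Finset.mem_singleton] at hx
    rcases hx with rfl | rfl | rfl
    · exact adj_mem_right hS hz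
    · exact adj_mem_right hS hy
    · exact adj_mem_right hS hy'
  have := Finset.sum_le_sum_of_subset (f := fun v => G.mult a v) hsub
  rwa [Finset.sum_insert (by simp [h2, h3]), Finset.sum_pair h1] at this

variable {D : DG} {X : Finset ℕ}

theorem beadify_displays {T : DG} {M : ℕ → ℕ} (hD : IsDupTree X D) (hT : IsMulTree X T)
    (hM : DupMapping T D M) : (beadify D).Displays T := by
  classical
  obtain ⟨hMleaf, hMedge, hMlca⟩ := hM
  have key : ∀ u v, T.Adj u v → ∃ l : List ℕ, l ≠ [] ∧ List.Chain D.Adj (M u) l ∧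
      ((M u :: l).getLast (List.cons_ne_nil _ _)) = M v :=
    fun u v huv => chain_of_sreaches (hMedge u v huv)
  choose L hL1 hL2 hL3 using key
  refine ⟨fun v => 2 * M v,
    fun u v => if h : T.Adj u v then
      arcsAux D (if (∃ z, T.Adj u z ∧ z < v) then 1 else 0) (M u) (L u v h) else [],
    ?_, ?_, ?_, ?_⟩
  · -- vertices
    intro v hv
    have hMv : M v ∈ D.verts := by
      rcases hT.nodes v hv with h | h | h
      · obtain ⟨w, hw⟩ := exists_child_of_outDeg_pos (by rw [h.2.2]; omega)
        obtain ⟨s, hs, -⟩ := Relation.TransGen.head'_iff.mp (hMedge v w hw)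
        exact (hD.supported _ _ hs).1
      · obtain ⟨w, hw⟩ := exists_child_of_outDeg_pos (by rw [h.2.2]; omega)
        obtain ⟨s, hs, -⟩ := Relation.TransGen.head'_iff.mp (hMedge v w hw)
        exact (hD.supported _ _ hs).1
      · exact (hMleaf v h).1.1
    exact beadify_mem_verts.mpr (Or.inl ⟨M v, hMv, rfl⟩)
  · -- leaves
    intro v hlf
    obtain ⟨hDleaf, hlab⟩ := hMleaf v hlf
    have hnd : ¬ D.IsDupNode (M v) := by
      rintro ⟨-, -, hh⟩
      have := hDleaf.2.2
      omega
    refine ⟨⟨beadify_mem_verts.mpr (Or.inl ⟨M v, hDleaf.1, rfl⟩), ?_, ?_⟩, ?_⟩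
    · rw [beadify_inDeg_e, hDleaf.2.1]
    · rw [beadify_outDeg_e, if_neg hnd, hDleaf.2.2]
    · rw [beadify_label_e]; exact hlab
  · -- walks
    intro u v huv
    dsimp only
    rw [dif_pos huv]
    have hw := arcsAux_isWalk (L u v huv) (M u)
      (if (∃ z, T.Adj u z ∧ z < v) then 1 else 0) (by split <;> omega)
      (hL2 u v huv) (hL1 u v huv)
    rwa [hL3 u v huv] at hw
  · -- distinct first arcs
    intro x y y' hxy hxy' hne
    dsimp only
    rw [dif_pos hxy, dif_pos hxy']
    obtain ⟨w, rest, hw⟩ := List.exists_cons_of_ne_nil (hL1 x y hxy)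
    obtain ⟨w', rest', hw'⟩ := List.exists_cons_of_ne_nil (hL1 x y' hxy')
    rw [hw, hw', arcsAux_head, arcsAux_head]
    intro heq
    by_cases hd : D.IsDupNode (M x)
    · rw [if_pos hd, if_pos hd] at heq
      simp only [Option.some.injEq, Prod.mk.injEq] at heq
      have hci := heq.2.2
      -- x has exactly the two children y, y'
      have hx : x ∈ T.verts := (hT.supported x y hxy).1
      have hsum := two_mults_le_outDeg hT.supported hne hxy hxy'
      have hy1 : 0 < T.mult x y := hxy
      have hy2 : 0 < T.mult x y' := hxy'
      have hod : T.outDeg x = 2 := by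
        rcases hT.nodes x hx with h | h | h
        · rw [h.2.2] at hsum; omega
        · exact h.2.2
        · rw [h.2.2] at hsum; omega
      have hch : ∀ z, T.Adj x z → z = y ∨ z = y' := by
        intro z hz
        by_contra hcon
        push_neg at hcon
        have := three_mults_le_outDeg hT.supported hne hcon.1 hcon.2 hxy hxy' hz
        have hz1 : 0 < T.mult x z := hz
        omega
      rcases Nat.lt_or_ge y y' with hlt | hge
      · have h1 : ¬(∃ z, T.Adj x z ∧ z < y) := by
          rintro ⟨z, hz, hzy⟩
          rcases hch z hz with rfl | rfl <;> omega
        rw [if_neg h1, if_pos ⟨y, hxy, hlt⟩] at hci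
        exact Nat.noConfusion hci
      · have hlt : y' < y := by omega
        have h1 : ¬(∃ z, T.Adj x z ∧ z < y') := by
          rintro ⟨z, hz, hzy⟩
          rcases hch z hz with rfl | rfl <;> omega
        rw [if_pos ⟨y', hxy', hlt⟩, if_neg h1] at hci
        exact Nat.noConfusion hci
    · rw [if_neg hd, if_neg hd] at heq
      simp only [Option.some.injEq, Prod.mk.injEq] at heq
      have hww : w = w' := by omega
      rcases hMlca x y y' hxy hxy' hne with hlca | hdup
      · obtain ⟨-, -, hmin⟩ := hlca
        have hadj : D.Adj (M x) w := by
          have := hL2 x y hxy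
          rw [hw] at this
          exact (List.chain_cons.mp this).1
        have hry : D.Reaches w (M y) := by
          have hc2 := hL2 x y hxy
          rw [hw] at hc2
          have hr := reaches_of_chain rest w (List.chain_cons.mp hc2).2
          have h3 := hL3 x y hxy
          rw [hw, List.getLast_cons (List.cons_ne_nil _ _)] at h3
          rwa [h3] at hr
        have hry' : D.Reaches w (M y') := by
          have hc2 := hL2 x y' hxy'
          rw [hw'] at hc2
          have hr := reaches_of_chain rest' w' (List.chain_cons.mp hc2).2
          have h3 := hL3 x y' hxy'
          rw [hw', List.getLast_cons (List.cons_ne_nil _ _)] at h3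
          rw [h3] at hr
          rwa [hww]
        exact hmin w (Relation.TransGen.single hadj) ⟨hry, hry'⟩
      · exact hd hdup

end DG

namespace DG

/-! ### Direction 2: from a beaded tree to a duplication tree -/

def IsTop (B : DG) (a : ℕ) : Prop := ∃ v, B.mult a v = 2
def IsBot (B : DG) (b : ℕ) : Prop := ∃ u, B.mult u b = 2

open Classical in
noncomputable def topOf (B : DG) (b : ℕ) : ℕ := if h : B.IsBot b then h.choose else 0
open Classical in
noncomputable def botOf (B : DG) (a : ℕ) : ℕ := if h : B.IsTop a then h.choose else 0

noncomputable def debead (B : DG) : DG where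
  verts := B.verts.filter (fun a => ¬ B.IsTop a)
  mult := fun a b =>
    if B.IsTop a ∨ B.IsTop b then 0
    else B.mult a b + (if B.IsBot b then B.mult a (B.topOf b) else 0)
  label := fun a => if B.IsTop a then none else B.label a

variable {B : DG} {X : Finset ℕ}

lemma topOf_spec {b : ℕ} (hb : B.IsBot b) : B.mult (B.topOf b) b = 2 := by
  rw [topOf, dif_pos hb]
  exact hb.choose_spec

lemma botOf_spec {a : ℕ} (ha : B.IsTop a) : B.mult a (B.botOf a) = 2 := by
  rw [botOf, dif_pos ha]
  exact ha.choose_spec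

lemma top_mem (hB : IsBeadedTree X B) {a : ℕ} (ha : B.IsTop a) : a ∈ B.verts :=
  (hB.1.supported a (B.botOf a) (by unfold Adj; rw [botOf_spec ha]; omega)).1

lemma bot_mem (hB : IsBeadedTree X B) {b : ℕ} (hb : B.IsBot b) : b ∈ B.verts :=
  (hB.1.supported (B.topOf b) b (by unfold Adj; rw [topOf_spec hb]; omega)).2

lemma deg_le_two (hB : IsBeadedTree X B) {v : ℕ} (hv : v ∈ B.verts) :
    B.inDeg v ≤ 2 ∧ B.outDeg v ≤ 2 := by
  rcases hB.1.nodes v hv with h | h | h | h <;>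
    obtain ⟨-, h1, h2⟩ := h <;> omega

lemma top_isTree (hB : IsBeadedTree X B) {a : ℕ} (ha : B.IsTop a) :
    B.inDeg a = 1 ∧ B.outDeg a = 2 := by
  have hmem := top_mem hB ha
  have hout : 2 ≤ B.outDeg a := by
    have := mult_le_outDeg hB.1.supported (G := B) (a := a) (b := B.botOf a)
    rw [botOf_spec ha] at this
    omega
  rcases hB.1.nodes a hmem with h | h | h | h <;>
    obtain ⟨-, h1, h2⟩ := h <;> omega

lemma bot_isRetic (hB : IsBeadedTree X B) {b : ℕ} (hb : B.IsBot b) :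
    B.inDeg b = 2 ∧ B.outDeg b = 1 := by
  have hmem := bot_mem hB hb
  have hin : 2 ≤ B.inDeg b := by
    have := mult_le_inDeg hB.1.supported (G := B) (a := B.topOf b) (b := b)
    rw [topOf_spec hb] at this
    omega
  rcases hB.1.nodes b hmem with h | h | h | h <;>
    obtain ⟨-, h1, h2⟩ := h <;> omega

lemma not_top_and_bot (hB : IsBeadedTree X B) {v : ℕ} : ¬ (B.IsTop v ∧ B.IsBot v) := by
  rintro ⟨ht, hb⟩
  have h1 := top_isTree hB ht
  have h2 := bot_isRetic hB hb
  omega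

lemma top_out_only (hB : IsBeadedTree X B) {a z : ℕ} (ha : B.IsTop a) (hz : B.Adj a z) :
    z = B.botOf a :=
  children_eq_of_outDeg_two hB.1.supported (top_isTree hB ha).2 (botOf_spec ha) hz

lemma bot_in_only (hB : IsBeadedTree X B) {b u : ℕ} (hb : B.IsBot b) (hu : B.Adj u b) :
    u = B.topOf b := by
  by_contra hne
  have h2 := two_mults_le_inDeg hB.1.supported hne hu
    (by unfold Adj; rw [topOf_spec hb]; omega)
  rw [topOf_spec hb] at h2
  have := (bot_isRetic hB hb).1
  unfold Adj at hu
  omega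

lemma topOf_eq (hB : IsBeadedTree X B) {u b : ℕ} (h : B.mult u b = 2) : B.topOf b = u := by
  have hb : B.IsBot b := ⟨u, h⟩
  exact (bot_in_only hB hb (by unfold Adj; omega)).symm

lemma botOf_eq (hB : IsBeadedTree X B) {a v : ℕ} (h : B.mult a v = 2) : B.botOf a = v := by
  have ha : B.IsTop a := ⟨v, h⟩
  exact (top_out_only hB ha (by unfold Adj; omega)).symm

lemma isBot_botOf (hB : IsBeadedTree X B) {a : ℕ} (ha : B.IsTop a) : B.IsBot (B.botOf a) :=
  ⟨a, botOf_spec ha⟩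

lemma isTop_topOf (hB : IsBeadedTree X B) {b : ℕ} (hb : B.IsBot b) : B.IsTop (B.topOf b) :=
  ⟨b, topOf_spec hb⟩

/-- multiplicities in a beaded tree are at most 1 unless to a bead bottom. -/
lemma mult_le_one_of_not_bot (hB : IsBeadedTree X B) {a b : ℕ} (hb : ¬ B.IsBot b) :
    B.mult a b ≤ 1 := by
  by_contra h
  push_neg at h
  have hadj : B.Adj a b := by unfold Adj; omega
  have hbv := (hB.1.supported a b hadj).2
  have := mult_le_inDeg hB.1.supported (G := B) (a := a) (b := b)
  have hle := (deg_le_two hB hbv).1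
  have : B.mult a b = 2 := by omega
  exact hb ⟨a, this⟩

lemma top_mult_eq_zero (hB : IsBeadedTree X B) {t b : ℕ} (ht : B.IsTop t)
    (hb : b ≠ B.botOf t) : B.mult t b = 0 := by
  by_contra h
  exact hb (top_out_only hB ht (by unfold Adj; omega))

lemma bot_mult_eq_zero (hB : IsBeadedTree X B) {a b : ℕ} (hb : B.IsBot b)
    (ha : a ≠ B.topOf b) : B.mult a b = 0 := by
  by_contra h
  exact ha (bot_in_only hB hb (by unfold Adj; omega))

end DG

namespace DG

noncomputable def proj (B : DG) (a : ℕ) : ℕ := if B.IsTop a then B.botOf a else a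

variable {B : DG} {X : Finset ℕ}

lemma debead_mem {a : ℕ} : a ∈ (debead B).verts ↔ a ∈ B.verts ∧ ¬ B.IsTop a := by
  simp [debead]

lemma debead_label {a : ℕ} (ha : ¬ B.IsTop a) : (debead B).label a = B.label a := by
  simp [debead, ha]

lemma debead_mult {a b : ℕ} (ha : ¬ B.IsTop a) (hb : ¬ B.IsTop b) :
    (debead B).mult a b = B.mult a b + (if B.IsBot b then B.mult a (B.topOf b) else 0) := by
  simp only [debead]
  rw [if_neg (by tauto)]

lemma bots_to_tops_sum (hB : IsBeadedTree X B) (f : ℕ → ℕ) :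
    ∑ b ∈ B.verts.filter (fun b => B.IsBot b), f (B.topOf b)
      = ∑ t ∈ B.verts.filter (fun t => B.IsTop t), f t := by
  apply Finset.sum_bij' (fun b _ => B.topOf b) (fun t _ => B.botOf t)
  · intro b hb
    rw [Finset.mem_filter] at hb ⊢
    exact ⟨top_mem hB (isTop_topOf hB hb.2), isTop_topOf hB hb.2⟩
  · intro t ht
    rw [Finset.mem_filter] at ht ⊢
    exact ⟨bot_mem hB (isBot_botOf hB ht.2), isBot_botOf hB ht.2⟩
  · intro b hb
    rw [Finset.mem_filter] at hb
    exact botOf_eq hB (topOf_spec hb.2)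
  · intro t ht
    rw [Finset.mem_filter] at ht
    exact topOf_eq hB (botOf_spec ht.2)
  · intro b hb
    rfl

lemma debead_outDeg (hB : IsBeadedTree X B) {a : ℕ} (ha : ¬ B.IsTop a) :
    (debead B).outDeg a = B.outDeg a := by
  unfold outDeg
  have hv : (debead B).verts = B.verts.filter (fun x => ¬ B.IsTop x) := rfl
  rw [hv]
  have hcong : ∑ b ∈ B.verts.filter (fun x => ¬ B.IsTop x), (debead B).mult a b
      = ∑ b ∈ B.verts.filter (fun x => ¬ B.IsTop x),
          (B.mult a b + (if B.IsBot b then B.mult a (B.topOf b) else 0)) := by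
    apply Finset.sum_congr rfl
    intro b hb
    exact debead_mult ha (Finset.mem_filter.mp hb).2
  rw [hcong, Finset.sum_add_distrib]
  have h2 : ∑ b ∈ B.verts.filter (fun x => ¬ B.IsTop x),
      (if B.IsBot b then B.mult a (B.topOf b) else 0)
      = ∑ b ∈ B.verts.filter (fun b => B.IsBot b), B.mult a (B.topOf b) := by
    rw [← Finset.sum_filter, Finset.filter_filter]
    apply Finset.sum_congr _ (fun _ _ => rfl)
    apply Finset.filter_congr
    intro b hb
    constructor
    · rintro ⟨-, h⟩; exact h
    · intro h; exact ⟨fun ht => not_top_and_bot hB ⟨ht, h⟩, h⟩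
  rw [h2, bots_to_tops_sum hB]
  rw [add_comm, ← Finset.sum_filter_add_sum_filter_not B.verts (fun t => B.IsTop t)]

lemma debead_inDeg (hB : IsBeadedTree X B) {b : ℕ} (hb : ¬ B.IsTop b) :
    (debead B).inDeg b = if B.IsBot b then 1 else B.inDeg b := by
  unfold inDeg
  have hv : (debead B).verts = B.verts.filter (fun x => ¬ B.IsTop x) := rfl
  rw [hv]
  have hcong : ∑ a ∈ B.verts.filter (fun x => ¬ B.IsTop x), (debead B).mult a b
      = ∑ a ∈ B.verts.filter (fun x => ¬ B.IsTop x),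
          (B.mult a b + (if B.IsBot b then B.mult a (B.topOf b) else 0)) := by
    apply Finset.sum_congr rfl
    intro a haf
    exact debead_mult (Finset.mem_filter.mp haf).2 hb
  rw [hcong, Finset.sum_add_distrib]
  by_cases hbot : B.IsBot b
  · simp only [if_pos hbot]
    have h1 : ∑ a ∈ B.verts.filter (fun x => ¬ B.IsTop x), B.mult a b = 0 := by
      apply Finset.sum_eq_zero
      intro a haf
      apply bot_mult_eq_zero hB hbot
      intro h
      exact (Finset.mem_filter.mp haf).2 (h ▸ isTop_topOf hB hbot)
    have h2 : ∑ a ∈ B.verts.filter (fun x => ¬ B.IsTop x), B.mult a (B.topOf b)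
        = B.inDeg (B.topOf b) := by
      unfold inDeg
      have h3 : ∑ a ∈ B.verts.filter (fun t => B.IsTop t), B.mult a (B.topOf b) = 0 := by
        apply Finset.sum_eq_zero
        intro t htf
        apply top_mult_eq_zero hB (Finset.mem_filter.mp htf).2
        intro h
        exact not_top_and_bot hB ⟨isTop_topOf hB hbot,
          h ▸ isBot_botOf hB (Finset.mem_filter.mp htf).2⟩
      rw [← Finset.sum_filter_add_sum_filter_not B.verts (fun t => B.IsTop t)
        (fun a => B.mult a (B.topOf b)), h3, zero_add]
    rw [h1, h2, (top_isTree hB (isTop_topOf hB hbot)).1, zero_add]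
  · simp only [if_neg hbot]
    rw [Finset.sum_const_zero, add_zero]
    have h3 : ∑ a ∈ B.verts.filter (fun t => B.IsTop t), B.mult a b = 0 := by
      apply Finset.sum_eq_zero
      intro t htf
      apply top_mult_eq_zero hB (Finset.mem_filter.mp htf).2
      intro h
      exact hbot (h ▸ isBot_botOf hB (Finset.mem_filter.mp htf).2)
    rw [← Finset.sum_filter_add_sum_filter_not B.verts (fun t => B.IsTop t)
      (fun a => B.mult a b), h3, zero_add]

lemma debead_adj_char {a b : ℕ} :
    (debead B).Adj a b ↔
      ¬ B.IsTop a ∧ ¬ B.IsTop b ∧ (B.Adj a b ∨ (B.IsBot b ∧ B.Adj a (B.topOf b))) := by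
  unfold Adj
  constructor
  · intro h
    simp only [debead] at h
    split_ifs at h with h1 h2
    · omega
    · push_neg at h1
      refine ⟨h1.1, h1.2, ?_⟩
      by_cases hm : 0 < B.mult a b
      · exact Or.inl hm
      · right
        exact ⟨h2, by omega⟩
    · push_neg at h1
      refine ⟨h1.1, h1.2, Or.inl (by omega)⟩
  · rintro ⟨ha, hb, hor⟩
    simp only [debead]
    rw [if_neg (by tauto)]
    rcases hor with h | ⟨hbot, h⟩
    · have : 0 ≤ if B.IsBot b then B.mult a (B.topOf b) else 0 := Nat.zero_le _
      omega
    · rw [if_pos hbot]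
      omega

lemma debead_supported (hB : IsBeadedTree X B) : (debead B).Supported := by
  intro a b h
  rw [debead_adj_char] at h
  obtain ⟨ha, hb, hor⟩ := h
  rw [debead_mem, debead_mem]
  rcases hor with h | ⟨hbot, h⟩
  · exact ⟨⟨(hB.1.supported a b h).1, ha⟩, ⟨(hB.1.supported a b h).2, hb⟩⟩
  · exact ⟨⟨(hB.1.supported _ _ h).1, ha⟩, ⟨bot_mem hB hbot, hb⟩⟩

lemma debead_adj_proj (hB : IsBeadedTree X B) {a b : ℕ} (ha : ¬ B.IsTop a)
    (hadj : B.Adj a b) : (debead B).Adj a (B.proj b) := by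
  unfold proj
  by_cases hb : B.IsTop b
  · rw [if_pos hb]
    have hbot : B.IsBot (B.botOf b) := isBot_botOf hB hb
    rw [debead_adj_char]
    refine ⟨ha, fun h => not_top_and_bot hB ⟨h, hbot⟩, Or.inr ⟨hbot, ?_⟩⟩
    rwa [topOf_eq hB (botOf_spec hb)]
  · rw [if_neg hb]
    rw [debead_adj_char]
    exact ⟨ha, hb, Or.inl hadj⟩

lemma sreaches_of_debead_adj (hB : IsBeadedTree X B) {a b : ℕ} (h : (debead B).Adj a b) :
    B.SReaches a b := by
  rw [debead_adj_char] at h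
  rcases h.2.2 with h' | ⟨hbot, h'⟩
  · exact Relation.TransGen.single h'
  · exact Relation.TransGen.head h' (Relation.TransGen.single
      (by unfold Adj; rw [topOf_spec hbot]; omega))

lemma sreaches_of_debead_sreaches (hB : IsBeadedTree X B) {a b : ℕ}
    (h : (debead B).SReaches a b) : B.SReaches a b := by
  induction h with
  | single h' => exact sreaches_of_debead_adj hB h'
  | tail h' hadj ih => exact Relation.TransGen.trans ih (sreaches_of_debead_adj hB hadj)

lemma debead_acyclic (hB : IsBeadedTree X B) : (debead B).Acyclic :=
  fun v hv => hB.1.acyclic v (sreaches_of_debead_sreaches hB hv)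

lemma proj_of_not_top {a : ℕ} (h : ¬ B.IsTop a) : B.proj a = a := if_neg h

lemma proj_of_top {a : ℕ} (h : B.IsTop a) : B.proj a = B.botOf a := if_pos h

lemma debead_sreaches_proj (hB : IsBeadedTree X B) {a b : ℕ} (h : B.SReaches a b) :
    (debead B).Reaches (B.proj a) (B.proj b) ∧
      ((debead B).SReaches (B.proj a) (B.proj b) ∨ (B.IsTop a ∧ b = B.botOf a)) := by
  induction h with
  | @single b hadj =>
    by_cases ha : B.IsTop a
    · have hb : b = B.botOf a := top_out_only hB ha hadj
      have hpb : B.proj b = B.botOf a := by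
        rw [hb, proj_of_not_top (fun h => not_top_and_bot hB ⟨h, isBot_botOf hB ha⟩)]
      rw [proj_of_top ha, hpb]
      exact ⟨Relation.ReflTransGen.refl, Or.inr ⟨ha, hb⟩⟩
    · rw [proj_of_not_top ha]
      have := debead_adj_proj hB ha hadj
      exact ⟨Relation.ReflTransGen.single this, Or.inl (Relation.TransGen.single this)⟩
  | @tail b c hab hbc ih =>
    obtain ⟨ihR, ihS⟩ := ih
    by_cases hb : B.IsTop b
    · have hc : c = B.botOf b := top_out_only hB hb hbc
      have hpc : B.proj c = B.proj b := by
        rw [hc, proj_of_not_top (fun h => not_top_and_bot hB ⟨h, isBot_botOf hB hb⟩),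
          proj_of_top hb]
      rw [hpc]
      refine ⟨ihR, ?_⟩
      rcases ihS with h | ⟨hta, hba⟩
      · exact Or.inl h
      · exfalso
        have : B.IsBot b := hba ▸ isBot_botOf hB hta
        exact not_top_and_bot hB ⟨hb, this⟩
    · have hadjD : (debead B).Adj b (B.proj c) := debead_adj_proj hB hb hbc
      rw [← proj_of_not_top hb] at hadjD
      exact ⟨ihR.tail hadjD, Or.inl (Relation.TransGen.tail' ihR hadjD)⟩

end DG

namespace DG

variable {B : DG} {X : Finset ℕ}

lemma debead_root_of (hB : IsBeadedTree X B) {r : ℕ} (hr : B.IsRoot r) :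
    (debead B).IsRoot r := by
  have hnt : ¬ B.IsTop r := by
    intro h
    have := (top_isTree hB h).2
    have := hr.2.2
    omega
  have hnb : ¬ B.IsBot r := by
    intro h
    have := (bot_isRetic hB h).1
    have := hr.2.1
    omega
  refine ⟨debead_mem.mpr ⟨hr.1, hnt⟩, ?_, ?_⟩
  · rw [debead_inDeg hB hnt, if_neg hnb, hr.2.1]
  · rw [debead_outDeg hB hnt, hr.2.2]

theorem debead_isDupTree (hB : IsBeadedTree X B) : IsDupTree X (debead B) := by
  obtain ⟨r, hr, hru⟩ := hB.1.root
  constructor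
  · -- root
    refine ⟨r, debead_root_of hB hr, ?_⟩
    intro w hw
    obtain ⟨hwv, hw1, hw2⟩ := hw
    obtain ⟨hwB, hwnt⟩ := debead_mem.mp hwv
    rw [debead_inDeg hB hwnt] at hw1
    rw [debead_outDeg hB hwnt] at hw2
    split_ifs at hw1 with hbot
    exact hru w ⟨hwB, hw1, hw2⟩
  · -- nodes
    intro w hwv
    obtain ⟨hwB, hwnt⟩ := debead_mem.mp hwv
    have hin := debead_inDeg hB hwnt
    have hout := debead_outDeg hB hwnt
    rcases hB.1.nodes w hwB with h | h | h | h
    · exact Or.inl (debead_root_of hB h)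
    · -- tree node
      have hnb : ¬ B.IsBot w := by
        intro hb
        have := (bot_isRetic hB hb).1
        have := h.2.1
        omega
      refine Or.inr (Or.inl ⟨hwv, ?_, ?_⟩)
      · rw [hin, if_neg hnb, h.2.1]
      · rw [hout, h.2.2]
    · -- reticulation: must be a bead bottom, becomes duplication node
      have hbot : B.IsBot w := by
        obtain ⟨u, hu⟩ := hB.2 w hwB h.2.1
        exact ⟨u, hu⟩
      refine Or.inr (Or.inr (Or.inl ⟨hwv, ?_, ?_⟩))
      · rw [hin, if_pos hbot]
      · rw [hout, h.2.2]
    · -- leaf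
      have hnb : ¬ B.IsBot w := by
        intro hb
        have := (bot_isRetic hB hb).1
        have := h.2.1
        omega
      refine Or.inr (Or.inr (Or.inr ⟨hwv, ?_, ?_⟩))
      · rw [hin, if_neg hnb, h.2.1]
      · rw [hout, h.2.2]
  · exact debead_acyclic hB
  · -- simple
    intro a b
    by_cases hc : ¬ B.IsTop a ∧ ¬ B.IsTop b
    · rw [debead_mult hc.1 hc.2]
      by_cases hbot : B.IsBot b
      · rw [if_pos hbot]
        have h1 : B.mult a b = 0 :=
          bot_mult_eq_zero hB hbot (fun h => hc.1 (h ▸ isTop_topOf hB hbot))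
        have h2 : B.mult a (B.topOf b) ≤ 1 :=
          mult_le_one_of_not_bot hB
            (fun h => not_top_and_bot hB ⟨isTop_topOf hB hbot, h⟩)
        omega
      · rw [if_neg hbot, Nat.add_zero]
        exact mult_le_one_of_not_bot hB hbot
    · have : (debead B).mult a b = 0 := by
        simp only [debead]
        rw [if_pos (by tauto)]
      omega
  · exact debead_supported hB
  · -- labels on leaves
    intro w
    constructor
    · rintro ⟨x, hx⟩
      have hwnt : ¬ B.IsTop w := by
        intro h
        rw [show (debead B).label w = none by simp [debead, h]] at hx
        exact nomatch hx
      rw [debead_label hwnt] at hx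
      have hleaf := (hB.1.labels w).mp ⟨x, hx⟩
      have hnb : ¬ B.IsBot w := by
        intro hb
        have := (bot_isRetic hB hb).1
        have := hleaf.2.1
        omega
      refine ⟨debead_mem.mpr ⟨hleaf.1, hwnt⟩, ?_, ?_⟩
      · rw [debead_inDeg hB hwnt, if_neg hnb, hleaf.2.1]
      · rw [debead_outDeg hB hwnt, hleaf.2.2]
    · rintro ⟨hwv, hw1, hw2⟩
      obtain ⟨hwB, hwnt⟩ := debead_mem.mp hwv
      rw [debead_inDeg hB hwnt] at hw1
      rw [debead_outDeg hB hwnt] at hw2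
      have hnb : ¬ B.IsBot w := by
        intro hb
        have := (bot_isRetic hB hb).2
        omega
      rw [if_neg hnb] at hw1
      obtain ⟨x, hx⟩ := (hB.1.labels w).mpr ⟨hwB, hw1, hw2⟩
      exact ⟨x, by rw [debead_label hwnt]; exact hx⟩
  · -- labelsSub
    intro w x hx
    by_cases hwnt : B.IsTop w
    · rw [show (debead B).label w = none by simp [debead, hwnt]] at hx
      exact nomatch hx
    · rw [debead_label hwnt] at hx
      exact hB.1.labelsSub w x hx
  · -- labelsOnto
    intro x hx
    obtain ⟨v, hv, hvu⟩ := hB.1.labelsOnto x hx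
    have hvnt : ¬ B.IsTop v := by
      intro h
      have hleaf := (hB.1.labels v).mp ⟨x, hv⟩
      have := (top_isTree hB h).2
      have := hleaf.2.2
      omega
    refine ⟨v, ?_, ?_⟩
    · show (debead B).label v = some x
      rw [debead_label hvnt]; exact hv
    · intro w hw
      have hw' : (debead B).label w = some x := hw
      have hwnt : ¬ B.IsTop w := by
        intro h
        rw [show (debead B).label w = none by simp [debead, h]] at hw'
        exact nomatch hw'
      rw [debead_label hwnt] at hw'
      exact hvu w hw'

lemma debead_dupNum (hB : IsBeadedTree X B) : (debead B).dupNum = B.beadNum := by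
  unfold dupNum beadNum
  congr 1
  ext w
  simp only [Finset.mem_filter, debead_mem]
  constructor
  · rintro ⟨⟨hwB, hwnt⟩, h1, h2⟩
    rw [debead_inDeg hB hwnt] at h1
    rw [debead_outDeg hB hwnt] at h2
    have hbot : B.IsBot w := by
      by_contra hnb
      rw [if_neg hnb] at h1
      rcases hB.1.nodes w hwB with h | h | h | h <;> (obtain ⟨-, e1, e2⟩ := h; omega)
    obtain ⟨u, hu⟩ := hbot
    exact ⟨hwB, u, (hB.1.supported u w (by unfold Adj; omega)).1, hu⟩
  · rintro ⟨hwB, u, huB, hu⟩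
    have hbot : B.IsBot w := ⟨u, hu⟩
    have hwnt : ¬ B.IsTop w := fun h => not_top_and_bot hB ⟨h, hbot⟩
    refine ⟨⟨hwB, hwnt⟩, ?_, ?_⟩
    · rw [debead_inDeg hB hwnt, if_pos hbot]
    · rw [debead_outDeg hB hwnt]
      exact (bot_isRetic hB hbot).2

end DG

namespace DG

lemma isWalk_head {G : DG} {p : List Arc} {a b : ℕ} (hw : G.IsWalk p a b) :
    ∃ e rest, p = e :: rest ∧ G.ArcOK e ∧ e.1 = a ∧
      (e.2.1 = b ∨ G.IsWalk rest e.2.1 b) := by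
  obtain ⟨h0, hok, hch, hhd, hlast⟩ := hw
  obtain ⟨e, rest, rfl⟩ := List.exists_cons_of_ne_nil h0
  refine ⟨e, rest, rfl, hok e (List.mem_cons_self), ?_, ?_⟩
  · simp only [List.head?_cons, Option.map_some] at hhd
    injection hhd
  · cases rest with
    | nil =>
      left
      simp only [List.getLast?, Option.map_some] at hlast
      injection hlast
    | cons f rest' =>
      right
      refine ⟨by simp, fun x hx => hok x (List.mem_cons_of_mem _ hx),
        (List.isChain_cons_cons.mp hch).2, ?_, ?_⟩
      · simp only [List.head?_cons, Option.map_some]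
        rw [(List.isChain_cons_cons.mp hch).1]
      · rw [← hlast]
        simp [List.getLast?_cons_cons]

variable {B : DG} {X : Finset ℕ}

lemma proj_ne (hB : IsBeadedTree X B) {a c c' : ℕ} (ha : ¬ B.IsTop a)
    (hc : B.Adj a c) (hc' : B.Adj a c') (hne : c ≠ c') : B.proj c ≠ B.proj c' := by
  intro hpp
  by_cases htc : B.IsTop c <;> by_cases htc' : B.IsTop c'
  · rw [proj_of_top htc, proj_of_top htc'] at hpp
    apply hne
    rw [← topOf_eq hB (botOf_spec htc), ← topOf_eq hB (botOf_spec htc'), hpp]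
  · rw [proj_of_top htc, proj_of_not_top htc'] at hpp
    have h2 : B.mult c c' = 2 := by rw [← hpp]; exact botOf_spec htc
    have hbot : B.IsBot c' := ⟨c, h2⟩
    have ha2 : a = B.topOf c' := bot_in_only hB hbot hc'
    rw [topOf_eq hB h2] at ha2
    exact ha (ha2 ▸ htc)
  · rw [proj_of_not_top htc, proj_of_top htc'] at hpp
    have h2 : B.mult c' c = 2 := by rw [hpp]; exact botOf_spec htc'
    have hbot : B.IsBot c := ⟨c', h2⟩
    have ha2 : a = B.topOf c := bot_in_only hB hbot hc
    rw [topOf_eq hB h2] at ha2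
    exact ha (ha2 ▸ htc')
  · rw [proj_of_not_top htc, proj_of_not_top htc'] at hpp
    exact hne hpp

theorem debead_consistent {T : DG} (hB : IsBeadedTree X B) (hT : IsMulTree X T)
    (hdisp : B.Displays T) : (debead B).ConsistentWith T := by
  classical
  obtain ⟨h, hE, hvmap, hleaf, hwalk, hdiv⟩ := hdisp
  have hDT := debead_isDupTree hB
  have hDsupp := debead_supported hB
  have hDacyc := debead_acyclic hB
  have hindeg1 : ∀ z ∈ (debead B).verts, (debead B).inDeg z ≤ 1 := by
    intro z hz
    rcases hDT.nodes z hz with hh | hh | hh | hh <;> (obtain ⟨-, e1, -⟩ := hh; omega)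
  -- no child of any T-node is mapped to a bead bottom
  have hnobot : ∀ x y, T.Adj x y → ¬ B.IsBot (h y) := by
    intro x y hxy hbot
    have hyv : y ∈ T.verts := (hT.supported x y hxy).2
    have hyin : 0 < T.inDeg y := by
      have := mult_le_inDeg hT.supported (G := T) (a := x) (b := y)
      have hx : 0 < T.mult x y := hxy
      omega
    rcases hT.nodes y hyv with hroot | htree | hleafy
    · rw [hroot.2.1] at hyin; omega
    · obtain ⟨z, z', hzz, hz, hz'⟩ := two_children hT.supported hT.simple htree.2.2
      obtain ⟨e, r1, hp1, hok1, he1, -⟩ := isWalk_head (hwalk y z hz)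
      obtain ⟨f, r2, hp2, hok2, hf1, -⟩ := isWalk_head (hwalk y z' hz')
      have hdd := hdiv y z z' hz hz' hzz
      rw [hp1, hp2] at hdd
      simp only [List.head?_cons, ne_eq, Option.some.injEq] at hdd
      exact hdd (out_arc_unique hB.1.supported (bot_isRetic hB hbot).2 hok1 hok2 he1 hf1)
    · have := (hleaf y hleafy).1.2.1
      have := (bot_isRetic hB hbot).1
      omega
  refine ⟨fun v => B.proj (h v), ?_, ?_, ?_⟩
  · -- leaves
    intro v hlv
    obtain ⟨hBleaf, hlab⟩ := hleaf v hlv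
    have hnt : ¬ B.IsTop (h v) := by
      intro ht
      have := (top_isTree hB ht).2
      have := hBleaf.2.2
      omega
    have hnb : ¬ B.IsBot (h v) := by
      intro hb
      have := (bot_isRetic hB hb).1
      have := hBleaf.2.1
      omega
    dsimp only
    rw [proj_of_not_top hnt]
    refine ⟨⟨debead_mem.mpr ⟨hBleaf.1, hnt⟩, ?_, ?_⟩, ?_⟩
    · rw [debead_inDeg hB hnt, if_neg hnb, hBleaf.2.1]
    · rw [debead_outDeg hB hnt, hBleaf.2.2]
    · rw [debead_label hnt]; exact hlab
  · -- edges map to strict reachability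
    intro u v huv
    have hS := sreaches_of_isWalk (hwalk u v huv)
    obtain ⟨-, hor⟩ := debead_sreaches_proj hB hS
    rcases hor with hgood | ⟨htop, hbv⟩
    · exact hgood
    · exact absurd (hbv ▸ isBot_botOf hB htop) (hnobot u v huv)
  · -- LCA or duplication node
    intro x y y' hxy hxy' hne
    by_cases htx : B.IsTop (h x)
    · right
      dsimp only
      rw [proj_of_top htx]
      have hbot := isBot_botOf hB htx
      have hnt : ¬ B.IsTop (B.botOf (h x)) := fun hh => not_top_and_bot hB ⟨hh, hbot⟩
      refine ⟨debead_mem.mpr ⟨bot_mem hB hbot, hnt⟩, ?_, ?_⟩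
      · rw [debead_inDeg hB hnt, if_pos hbot]
      · rw [debead_outDeg hB hnt]
        exact (bot_isRetic hB hbot).2
    · left
      dsimp only
      rw [proj_of_not_top htx]
      obtain ⟨e, r1, hp1, hok1, he1, hor1⟩ := isWalk_head (hwalk x y hxy)
      obtain ⟨f, r2, hp2, hok2, hf1, hor2⟩ := isWalk_head (hwalk x y' hxy')
      have hef : e ≠ f := by
        have hdd := hdiv x y y' hxy hxy' hne
        rw [hp1, hp2] at hdd
        simpa using hdd
      have hBadjc : B.Adj (h x) e.2.1 := by
        have := hok1
        unfold ArcOK at this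
        rw [he1] at this
        unfold Adj
        omega
      have hBadjc' : B.Adj (h x) f.2.1 := by
        have := hok2
        unfold ArcOK at this
        rw [hf1] at this
        unfold Adj
        omega
      have hcc' : e.2.1 ≠ f.2.1 := by
        intro hcc
        have hjj : e.2.2 ≠ f.2.2 := by
          intro hj
          apply hef
          have h1 : e = (e.1, e.2.1, e.2.2) := rfl
          have h2 : f = (f.1, f.2.1, f.2.2) := rfl
          rw [h1, h2, he1, hf1, hcc, hj]
        have hm2 : 2 ≤ B.mult (h x) e.2.1 := by
          have t1 := hok1
          have t2 := hok2
          unfold ArcOK at t1 t2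
          rw [he1] at t1
          rw [hf1, ← hcc] at t2
          omega
        have hcv : e.2.1 ∈ B.verts := (hB.1.supported _ _ hBadjc).2
        have hin2 : 2 ≤ B.inDeg e.2.1 := by
          have := mult_le_inDeg hB.1.supported (G := B) (a := h x) (b := e.2.1)
          omega
        have hinEq : B.inDeg e.2.1 = 2 := by
          have := (deg_le_two hB hcv).1
          omega
        obtain ⟨u, hu⟩ := hB.2 e.2.1 hcv hinEq
        have hbotc : B.IsBot e.2.1 := ⟨u, hu⟩
        have := bot_in_only hB hbotc hBadjc
        exact htx (this ▸ isTop_topOf hB hbotc)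
      have hadjc : (debead B).Adj (h x) (B.proj e.2.1) := debead_adj_proj hB htx hBadjc
      have hadjc' : (debead B).Adj (h x) (B.proj f.2.1) := debead_adj_proj hB htx hBadjc'
      have hpcc' : B.proj e.2.1 ≠ B.proj f.2.1 := proj_ne hB htx hBadjc hBadjc' hcc'
      have hry : (debead B).Reaches (B.proj e.2.1) (B.proj (h y)) := by
        rcases hor1 with hcb | hwrest
        · rw [hcb]
          exact Relation.ReflTransGen.refl
        · exact (debead_sreaches_proj hB (sreaches_of_isWalk hwrest)).1
      have hry' : (debead B).Reaches (B.proj f.2.1) (B.proj (h y')) := by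
        rcases hor2 with hcb | hwrest
        · rw [hcb]
          exact Relation.ReflTransGen.refl
        · exact (debead_sreaches_proj hB (sreaches_of_isWalk hwrest)).1
      refine ⟨Relation.ReflTransGen.head hadjc hry, Relation.ReflTransGen.head hadjc' hry', ?_⟩
      rintro z hz ⟨hzy, hzy'⟩
      have hnr : ∀ u u', (debead B).Adj (h x) u → (debead B).Adj (h x) u' → u ≠ u' →
          ¬ (debead B).Reaches u u' := by
        intro u u' hu hu' huu hr
        rcases hr.cases_tail with heq | ⟨q, hq, hqu'⟩
        · exact huu heq.symm
        · have hq2 : q = h x := parent_unique hDsupp hindeg1 hqu' hu'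
          rw [hq2] at hq
          exact hDacyc u (Relation.TransGen.tail' hq hu)
      have key : ∀ w t, (debead B).Adj (h x) w → (debead B).Reaches w t →
          (debead B).Reaches z t → z = w ∨ (debead B).Reaches w z := by
        intro w t hw hwt hzt
        rcases reaches_comparable hDsupp hindeg1 hwt hzt with hwz | hzw
        · exact Or.inr hwz
        · rcases hzw.cases_tail with heq | ⟨q, hq, hqw⟩
          · exact Or.inl heq.symm
          · have hq2 : q = h x := parent_unique hDsupp hindeg1 hqw hw
            rw [hq2] at hq
            exact absurd (Relation.TransGen.trans_left hz hq) (hDacyc (h x))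
      rcases key _ _ hadjc hry hzy with h1 | h1 <;>
        rcases key _ _ hadjc' hry' hzy' with h2 | h2
      · exact hpcc' (h1 ▸ h2 ▸ rfl)
      · rw [h1] at h2
        exact hnr _ _ hadjc' hadjc hpcc'.symm h2
      · rw [h2] at h1
        exact hnr _ _ hadjc hadjc' hpcc' h1
      · rcases reaches_comparable hDsupp hindeg1 h1 h2 with hh | hh
        · exact hnr _ _ hadjc hadjc' hpcc' hh
        · exact hnr _ _ hadjc' hadjc hpcc'.symm hh

end DG

/-- Lemma 1: there is a duplication tree on `X` with exactly `k`
duplication nodes consistent with every MUL-tree in `𝒯` iff there is a beaded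
tree on `X` with exactly `k` beads weakly displaying every MUL-tree in `𝒯`. -/
theorem duplication_tree_iff_beaded_tree (X : Finset ℕ) (Ts : Set DG)
    (hT : ∀ T ∈ Ts, DG.IsMulTree X T) (k : ℕ) :
    (∃ D : DG, DG.IsDupTree X D ∧ D.dupNum = k ∧ ∀ T ∈ Ts, D.ConsistentWith T) ↔
    (∃ B : DG, DG.IsBeadedTree X B ∧ B.beadNum = k ∧ ∀ T ∈ Ts, B.Displays T) := by
  constructor
  · rintro ⟨D, hD, hk, hcons⟩
    refine ⟨DG.beadify D, DG.beadify_isBeadedTree hD, ?_, ?_⟩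
    · rw [DG.beadify_beadNum hD]
      exact hk
    · intro T hTs
      obtain ⟨M, hM⟩ := hcons T hTs
      exact DG.beadify_displays hD (hT T hTs) hM
  · rintro ⟨B, hB, hk, hdisp⟩
    refine ⟨DG.debead B, DG.debead_isDupTree hB, ?_, ?_⟩
    · rw [DG.debead_dupNum hB]
      exact hk
    · intro T hTs
      exact DG.debead_consistent hB (hT T hTs) (hdisp T hTs)
end

section
/- For any set 𝒯 of MUL-trees with label sets contained in a finite species set X and any integer k, there exists a phylogenetic network on X with k reticulation nodes that weakly displays every MUL-tree in 𝒯 if and only if there exists a beaded tree on X with k reticulation nodes that weakly displays every MUL-tree in 𝒯. -/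
/-!
Common formal framework for MUL-trees, phylogenetic networks, beaded trees,
duplication trees, weak embeddings and related operations, following
van Iersel, Janssen, Jones, Murakami, Zeh,
"Polynomial-Time Algorithms for Phylogenetic Inference Problems involving
duplication and reticulation".

All graphs are directed multigraphs on natural-number vertices, given by a
finite vertex set, an edge-multiplicity function and a (partial) leaf
labelling by species (also natural numbers).
-/

open scoped Classical

/-! ### Auxiliary development for the proof -/

namespace DG

/-- Two distinct out-arcs of `w` starting paths towards `a` and `b`. -/
def Rel2 (N : DG) (w a b : ℕ) : Prop :=
  ∃ e f : Arc, N.ArcOK e ∧ N.ArcOK f ∧ e ≠ f ∧ e.1 = w ∧ f.1 = w ∧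
    N.Reaches e.2.1 a ∧ N.Reaches f.2.1 b

/-- Abstract form of a weak embedding. -/
def AbsEmb (T N : DG) (h : ℕ → ℕ) : Prop :=
  (∀ x, T.IsLeafNode x → N.IsLeafNode (h x) ∧ N.label (h x) = T.label x) ∧
  (∀ u y, T.Adj u y → N.SReaches (h u) (h y)) ∧
  (∀ x y y', T.Adj x y → T.Adj x y' → y ≠ y' → N.Rel2 (h x) (h y) (h y'))

section WalkLemmas

variable {N : DG}

lemma IsWalk.sub {e : Arc} {l : List Arc} {a b : ℕ} (h : N.IsWalk (e :: l) a b)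
    (hl : l ≠ []) : N.IsWalk l e.2.1 b := by
  obtain ⟨-, harcs, hchain, hhead, hlast⟩ := h
  obtain ⟨f, l', rfl⟩ : ∃ f l', l = f :: l' := by
    cases l with
    | nil => exact absurd rfl hl
    | cons f l' => exact ⟨f, l', rfl⟩
  refine ⟨by simp, fun g hg => harcs g (by simp [hg]), hchain.tail, ?_, ?_⟩
  · have : e.2.1 = f.1 := (List.isChain_cons_cons.1 hchain).1
    simp [this]
  · simpa using hlast

lemma IsWalk.sreaches {l : List Arc} {a b : ℕ} (h : N.IsWalk l a b) :
    N.SReaches a b := by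
  induction l generalizing a with
  | nil => exact absurd rfl h.1
  | cons e l ih =>
    have ha : e.1 = a := by
      have := h.2.2.2.1; simpa using this
    have hadj : N.Adj a e.2.1 := by
      have harc : N.ArcOK e := h.2.1 e (by simp)
      have : 0 < N.mult e.1 e.2.1 := lt_of_le_of_lt (Nat.zero_le _) harc
      rwa [ha] at this
    rcases eq_or_ne l [] with rfl | hl
    · have hb : e.2.1 = b := by have := h.2.2.2.2; simpa using this
      exact Relation.TransGen.single (hb ▸ hadj)
    · exact Relation.TransGen.head hadj (ih (h.sub hl))

lemma IsWalk.head_reaches {e : Arc} {l : List Arc} {a b : ℕ}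
    (h : N.IsWalk (e :: l) a b) : N.Reaches e.2.1 b := by
  rcases eq_or_ne l [] with rfl | hl
  · have hb : e.2.1 = b := by have := h.2.2.2.2; simpa using this
    exact hb ▸ Relation.ReflTransGen.refl
  · exact (h.sub hl).sreaches.to_reflTransGen

lemma exists_walk_cons' {a b : ℕ} (hr : N.Reaches a b) :
    ∀ e : Arc, N.ArcOK e → e.2.1 = a → ∃ l, N.IsWalk (e :: l) e.1 b := by
  induction hr using Relation.ReflTransGen.head_induction_on with
  | refl =>
    intro e he hee
    exact ⟨[], by simp, fun g hg => by rw [List.mem_singleton.1 hg]; exact he,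
      List.isChain_singleton _, by simp, by simp [hee]⟩
  | head hadj _ ih =>
    rename_i a' c _
    intro e he hee
    have hg : N.ArcOK (a', c, 0) := hadj
    obtain ⟨l', hw⟩ := ih (a', c, 0) hg rfl
    obtain ⟨-, harcs, hchain, hhead, hlast⟩ := hw
    refine ⟨(a', c, 0) :: l', by simp, ?_, ?_, by simp, ?_⟩
    · intro g hg'
      rcases List.mem_cons.1 hg' with rfl | hg'
      · exact he
      · exact harcs g (by simpa using hg')
    · refine List.isChain_cons_cons.2 ⟨by simp [hee], ?_⟩
      exact hchain
    · simpa using hlast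

lemma exists_walk_cons {e : Arc} {b : ℕ} (he : N.ArcOK e) (hr : N.Reaches e.2.1 b) :
    ∃ l, N.IsWalk (e :: l) e.1 b :=
  exists_walk_cons' hr e he rfl

lemma walk_of_sreaches {a b : ℕ} (h : N.SReaches a b) : ∃ p, N.IsWalk p a b := by
  obtain ⟨c, hac, hcb⟩ := Relation.TransGen.head'_iff.1 h
  have he : N.ArcOK (a, c, 0) := hac
  obtain ⟨l, hw⟩ := exists_walk_cons he hcb
  exact ⟨(a, c, 0) :: l, hw⟩

end WalkLemmas

section SumLemmas

lemma sum_pair_le {s : Finset ℕ} {f : ℕ → ℕ} {a b : ℕ} (ha : a ∈ s) (hb : b ∈ s)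
    (hne : a ≠ b) : f a + f b ≤ ∑ t ∈ s, f t := by
  classical
  have hbe : b ∈ s.erase a := Finset.mem_erase.2 ⟨hne.symm, hb⟩
  calc f a + f b ≤ f a + ∑ t ∈ s.erase a, f t := by
        exact Nat.add_le_add_left (Finset.single_le_sum (fun i _ => Nat.zero_le _) hbe) _
    _ = ∑ t ∈ s, f t := Finset.add_sum_erase s f ha

lemma sum_pair_eq {s : Finset ℕ} {f : ℕ → ℕ} {a b : ℕ} (ha : a ∈ s) (hb : b ∈ s)
    (hne : a ≠ b) (htot : ∑ t ∈ s, f t = f a + f b) :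
    ∀ c ∈ s, c ≠ a → c ≠ b → f c = 0 := by
  classical
  intro c hc hca hcb
  by_contra hfc
  have h1 : f c + (f a + f b) ≤ ∑ t ∈ s, f t := by
    have hbe : b ∈ s.erase c := Finset.mem_erase.2 ⟨fun h => hcb h.symm, hb⟩
    have hae : a ∈ s.erase c := Finset.mem_erase.2 ⟨fun h => hca h.symm, ha⟩
    calc f c + (f a + f b) ≤ f c + ∑ t ∈ s.erase c, f t :=
          Nat.add_le_add_left (sum_pair_le hae hbe hne) _
      _ = ∑ t ∈ s, f t := Finset.add_sum_erase s f hc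
  omega

lemma exists_adj_of_outDeg_pos {N : DG} {x : ℕ} (h : 0 < N.outDeg x) :
    ∃ t ∈ N.verts, N.Adj x t := by
  classical
  obtain ⟨t, ht, hpos⟩ := Finset.exists_ne_zero_of_sum_ne_zero (by omega : N.outDeg x ≠ 0)
  exact ⟨t, ht, Nat.pos_of_ne_zero hpos⟩

lemma exists_adj_of_inDeg_pos {N : DG} {x : ℕ} (h : 0 < N.inDeg x) :
    ∃ u ∈ N.verts, N.Adj u x := by
  classical
  obtain ⟨u, hu, hpos⟩ := Finset.exists_ne_zero_of_sum_ne_zero (by omega : N.inDeg x ≠ 0)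
  exact ⟨u, hu, Nat.pos_of_ne_zero hpos⟩

end SumLemmas


section Structure

variable {X : Finset ℕ} {N T : DG}

lemma mult_le_one_of_ne {w a b : ℕ} (hsup : N.Supported)
    (hdeg : N.outDeg w = 2) (ha : N.Adj w a) (hb : N.Adj w b) (hne : a ≠ b) :
    N.mult w a = 1 ∧ N.mult w b = 1 ∧ ∀ c, c ≠ a → c ≠ b → N.mult w c = 0 := by
  have hav : a ∈ N.verts := (hsup w a ha).2
  have hbv : b ∈ N.verts := (hsup w b hb).2
  have hle := sum_pair_le (f := N.mult w) hav hbv hne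
  unfold outDeg at hdeg
  have ha' : 1 ≤ N.mult w a := ha
  have hb' : 1 ≤ N.mult w b := hb
  have hma : N.mult w a = 1 := by omega
  have hmb : N.mult w b = 1 := by omega
  refine ⟨hma, hmb, ?_⟩
  have htot : ∑ t ∈ N.verts, N.mult w t = N.mult w a + N.mult w b := by omega
  intro c hca hcb
  by_cases hcv : c ∈ N.verts
  · exact sum_pair_eq hav hbv hne htot c hcv hca hcb
  · by_contra hpos
    exact hcv (hsup w c (Nat.pos_of_ne_zero hpos)).2

lemma children_eq (hT : IsMulTree X T) {x a b c : ℕ} (h1 : T.Adj x a) (h2 : T.Adj x b)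
    (hne : a ≠ b) (h3 : T.Adj x c) : c = a ∨ c = b := by
  have hx : x ∈ T.verts := (hT.supported x a h1).1
  have hav : a ∈ T.verts := (hT.supported x a h1).2
  have hbv : b ∈ T.verts := (hT.supported x b h2).2
  have hcv : c ∈ T.verts := (hT.supported x c h3).2
  have hle := sum_pair_le (f := T.mult x) hav hbv hne
  have h1' : 1 ≤ T.mult x a := h1
  have h2' : 1 ≤ T.mult x b := h2
  have hdeg : T.outDeg x = 2 := by
    rcases hT.nodes x hx with hr | ht | hl
    · exfalso; have := hr.2.2; unfold outDeg at this; omega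
    · exact ht.2.2
    · exfalso; have := hl.2.2; unfold outDeg at this; omega
  unfold outDeg at hdeg
  have hma : T.mult x a = 1 := le_antisymm (hT.simple x a) h1
  have hmb : T.mult x b = 1 := le_antisymm (hT.simple x b) h2
  have htot : ∑ t ∈ T.verts, T.mult x t = T.mult x a + T.mult x b := by omega
  by_contra hcon
  push_neg at hcon
  have := sum_pair_eq hav hbv hne htot c hcv hcon.1 hcon.2
  have h3' : 0 < T.mult x c := h3
  omega

/-- The unique child of a node of out-degree one. -/
lemma unique_child {x a b : ℕ} (hdeg : N.outDeg x = 1)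
    (ha : N.Adj x a) (hb : N.Adj x b) (hav : a ∈ N.verts) (hbv : b ∈ N.verts) :
    a = b := by
  by_contra hne
  have := sum_pair_le (f := N.mult x) hav hbv hne
  have h1' : 1 ≤ N.mult x a := ha
  have h2' : 1 ≤ N.mult x b := hb
  unfold outDeg at hdeg
  omega

/-- Every tree node of a MUL-tree has two distinct children. -/
lemma exists_two_children {T : DG} (hT : T.IsMulTree X) {y : ℕ} (hy : T.IsTreeNode y) :
    ∃ c1 c2, T.Adj y c1 ∧ T.Adj y c2 ∧ c1 ≠ c2 := by
  classical
  have hdeg : ∑ t ∈ T.verts, T.mult y t = 2 := hy.2.2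
  obtain ⟨c1, hc1, hpos1⟩ : ∃ c1 ∈ T.verts, 0 < T.mult y c1 := by
    by_contra hcon
    push_neg at hcon
    have : ∑ t ∈ T.verts, T.mult y t = 0 :=
      Finset.sum_eq_zero (fun t ht => by have := hcon t ht; omega)
    omega
  have hm1 : T.mult y c1 = 1 := le_antisymm (hT.simple y c1) hpos1
  have hrest : ∑ t ∈ T.verts.erase c1, T.mult y t = 1 := by
    have := Finset.add_sum_erase T.verts (T.mult y) hc1
    omega
  obtain ⟨c2, hc2, hpos2⟩ : ∃ c2 ∈ T.verts.erase c1, 0 < T.mult y c2 := by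
    by_contra hcon
    push_neg at hcon
    have : ∑ t ∈ T.verts.erase c1, T.mult y t = 0 :=
      Finset.sum_eq_zero (fun t ht => by have := hcon t ht; omega)
    omega
  exact ⟨c1, c2, hpos1, hpos2, fun hcc => (Finset.mem_erase.1 hc2).1 hcc.symm⟩

lemma root_reaches_all (hN : IsNetwork X N) {r : ℕ} (hr : N.IsRoot r) :
    ∀ x ∈ N.verts, N.Reaches r x := by
  classical
  have key : ∀ n (x : ℕ), x ∈ N.verts →
      (N.verts.filter (fun u => N.SReaches u x)).card ≤ n → N.Reaches r x := by
    intro n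
    induction n with
    | zero =>
      intro x hx hcard
      rcases eq_or_ne x r with rfl | hxr
      · exact Relation.ReflTransGen.refl
      · exfalso
        have hpos : 0 < N.inDeg x := by
          rcases hN.nodes x hx with h | h | h | h
          · exact absurd (hN.root.unique h hr) hxr
          · rw [h.2.1]; omega
          · rw [h.2.1]; omega
          · rw [h.2.1]; omega
        obtain ⟨u, hu, hadj⟩ := exists_adj_of_inDeg_pos hpos
        have : u ∈ N.verts.filter (fun u => N.SReaches u x) :=
          Finset.mem_filter.2 ⟨hu, Relation.TransGen.single hadj⟩
        have := Finset.card_pos.2 ⟨u, this⟩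
        omega
    | succ n ih =>
      intro x hx hcard
      rcases eq_or_ne x r with rfl | hxr
      · exact Relation.ReflTransGen.refl
      · have hpos : 0 < N.inDeg x := by
          rcases hN.nodes x hx with h | h | h | h
          · exact absurd (hN.root.unique h hr) hxr
          · rw [h.2.1]; omega
          · rw [h.2.1]; omega
          · rw [h.2.1]; omega
        obtain ⟨u, hu, hadj⟩ := exists_adj_of_inDeg_pos hpos
        have hsub : N.verts.filter (fun w => N.SReaches w u) ⊂
            N.verts.filter (fun w => N.SReaches w x) := by
          refine Finset.ssubset_iff_of_subset ?_ |>.2 ?_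
          · intro w hw
            obtain ⟨hw1, hw2⟩ := Finset.mem_filter.1 hw
            exact Finset.mem_filter.2 ⟨hw1, hw2.tail hadj⟩
          · refine ⟨u, Finset.mem_filter.2 ⟨hu, Relation.TransGen.single hadj⟩, ?_⟩
            intro hmem
            exact hN.acyclic u (Finset.mem_filter.1 hmem).2
        have hcard' : (N.verts.filter (fun w => N.SReaches w u)).card ≤ n := by
          have := Finset.card_lt_card hsub
          omega
        exact (ih u hu hcard').tail hadj
  intro x hx
  exact key _ x hx le_rfl

lemma exists_sreach_min (hac : N.Acyclic) (s : Finset ℕ) (hs : s.Nonempty) :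
    ∃ w ∈ s, ∀ y ∈ s, ¬ N.SReaches w y := by
  classical
  have key : ∀ n (t : Finset ℕ), t.Nonempty → t.card ≤ n →
      ∃ w ∈ t, ∀ y ∈ t, ¬ N.SReaches w y := by
    intro n
    induction n with
    | zero =>
      intro t ht hcard
      obtain ⟨w, hw⟩ := ht
      have := Finset.card_pos.2 ⟨w, hw⟩
      omega
    | succ n ih =>
      intro t ht hcard
      obtain ⟨w, hw⟩ := ht
      by_cases h : ∃ y ∈ t, N.SReaches w y
      · obtain ⟨y, hy, hsy⟩ := h
        set t' := t.filter (fun z => N.SReaches w z) with ht'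
        have hw' : w ∉ t' := fun hmem => hac w (Finset.mem_filter.1 hmem).2
        have hsub : t' ⊂ t := by
          refine Finset.ssubset_iff_of_subset (Finset.filter_subset _ _) |>.2 ⟨w, hw, hw'⟩
        have hcard' : t'.card ≤ n := by
          have := Finset.card_lt_card hsub
          omega
        obtain ⟨w', hw'1, hw'2⟩ := ih t' ⟨y, Finset.mem_filter.2 ⟨hy, hsy⟩⟩ hcard'
        refine ⟨w', (Finset.filter_subset _ _) hw'1, ?_⟩
        intro z hz hsz
        have hwz : N.SReaches w z :=
          Relation.TransGen.trans (Finset.mem_filter.1 hw'1).2 hsz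
        exact hw'2 z (Finset.mem_filter.2 ⟨hz, hwz⟩) hsz
      · push_neg at h
        exact ⟨w, hw, h⟩
  exact key s.card s hs le_rfl

lemma acyclic_addArc (hac : N.Acyclic) {a b : ℕ} (hnr : ¬ N.Reaches b a) :
    ∀ x, ¬ Relation.TransGen (fun s t => N.Adj s t ∨ (s = a ∧ t = b)) x x := by
  have key : ∀ x y, Relation.TransGen (fun s t => N.Adj s t ∨ (s = a ∧ t = b)) x y →
      N.SReaches x y ∨ (N.Reaches x a ∧ N.Reaches b y) := by
    intro x y h
    induction h with
    | single h =>
      rcases h with h | ⟨rfl, rfl⟩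
      · exact Or.inl (Relation.TransGen.single h)
      · exact Or.inr ⟨Relation.ReflTransGen.refl, Relation.ReflTransGen.refl⟩
    | tail hxy hyz ih =>
      rcases hyz with hadj | ⟨rfl, rfl⟩
      · rcases ih with h | ⟨h1, h2⟩
        · exact Or.inl (h.tail hadj)
        · exact Or.inr ⟨h1, h2.tail hadj⟩
      · rcases ih with h | ⟨h1, h2⟩
        · exact Or.inr ⟨h.to_reflTransGen, Relation.ReflTransGen.refl⟩
        · exact absurd h2 hnr
  intro x hx
  rcases key x x hx with h | ⟨h1, h2⟩
  · exact hac x h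
  · exact hnr (h2.trans h1)

end Structure

section Char

variable {X : Finset ℕ} {N T : DG}

lemma abs_of_displays (hd : N.Displays T) : ∃ h, AbsEmb T N h := by
  obtain ⟨h, hE, h1, h2, h3, h4⟩ := hd
  refine ⟨h, h2, fun u y ha => (h3 u y ha).sreaches, ?_⟩
  intro x y y' hy hy' hne
  have w1 := h3 x y hy
  have w2 := h3 x y' hy'
  obtain ⟨e, l, hw1⟩ : ∃ e l, hE x y = e :: l := by
    cases hw : hE x y with
    | nil => rw [hw] at w1; exact absurd rfl w1.1
    | cons e l => exact ⟨e, l, rfl⟩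
  obtain ⟨f, l', hw2⟩ : ∃ f l', hE x y' = f :: l' := by
    cases hw : hE x y' with
    | nil => rw [hw] at w2; exact absurd rfl w2.1
    | cons f l' => exact ⟨f, l', rfl⟩
  rw [hw1] at w1
  rw [hw2] at w2
  have hef : e ≠ f := by
    intro hcontra
    exact h4 x y y' hy hy' hne (by rw [hw1, hw2, hcontra]; rfl)
  have he1 : e.1 = h x := by have := w1.2.2.2.1; simpa using this
  have hf1 : f.1 = h x := by have := w2.2.2.2.1; simpa using this
  exact ⟨e, f, w1.2.1 e (by simp), w2.2.1 f (by simp), hef, he1, hf1,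
    w1.head_reaches, w2.head_reaches⟩

lemma displays_of_abs (hT : IsMulTree X T) (hsup : N.Supported) {h : ℕ → ℕ}
    (hA : AbsEmb T N h) : N.Displays T := by
  classical
  obtain ⟨hL, hR, h2c⟩ := hA
  let P : ℕ → Prop := fun x => ∃ yz : ℕ × ℕ, T.Adj x yz.1 ∧ T.Adj x yz.2 ∧ yz.1 ≠ yz.2
  have hwalk : ∀ u y, T.Adj u y → ∃ p, N.IsWalk p (h u) (h y) := fun u y ha =>
    walk_of_sreaches (hR u y ha)
  have hdata : ∀ x, ∃ d : (ℕ × ℕ) × (List Arc × List Arc), P x →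
      (T.Adj x d.1.1 ∧ T.Adj x d.1.2 ∧ d.1.1 ≠ d.1.2 ∧
        N.IsWalk d.2.1 (h x) (h d.1.1) ∧ N.IsWalk d.2.2 (h x) (h d.1.2) ∧
        d.2.1.head? ≠ d.2.2.head?) := by
    intro x
    by_cases hx : P x
    · obtain ⟨⟨y1, y2⟩, h1, h2, h3⟩ := hx
      obtain ⟨e, f, he, hf, hef, he1, hf1, her, hfr⟩ := h2c x y1 y2 h1 h2 h3
      obtain ⟨l1, hw1⟩ := exists_walk_cons he her
      obtain ⟨l2, hw2⟩ := exists_walk_cons hf hfr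
      rw [he1] at hw1
      rw [hf1] at hw2
      refine ⟨((y1, y2), (e :: l1, f :: l2)), fun _ => ⟨h1, h2, h3, hw1, hw2, ?_⟩⟩
      simpa using hef
    · exact ⟨((0, 0), ([], [])), fun hpx => absurd hpx hx⟩
  let D : ℕ → (ℕ × ℕ) × (List Arc × List Arc) := fun x => Classical.choose (hdata x)
  have hspec : ∀ x, P x → (T.Adj x (D x).1.1 ∧ T.Adj x (D x).1.2 ∧ (D x).1.1 ≠ (D x).1.2 ∧
      N.IsWalk (D x).2.1 (h x) (h (D x).1.1) ∧ N.IsWalk (D x).2.2 (h x) (h (D x).1.2) ∧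
      (D x).2.1.head? ≠ (D x).2.2.head?) := fun x => Classical.choose_spec (hdata x)
  let hE : ℕ → ℕ → List Arc := fun x y =>
    if P x then (if y = (D x).1.1 then (D x).2.1 else (D x).2.2)
    else if hxy : T.Adj x y then Classical.choose (hwalk x y hxy) else []
  have hchild : ∀ x, P x → ∀ y, T.Adj x y → y = (D x).1.1 ∨ y = (D x).1.2 := by
    intro x hx y hy
    obtain ⟨h1, h2, h3, -⟩ := hspec x hx
    exact children_eq hT h1 h2 h3 hy
  refine ⟨h, hE, ?_, hL, ?_, ?_⟩
  · -- vertices map to vertices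
    intro v hv
    have hout : ∀ w, T.Adj v w → h v ∈ N.verts := by
      intro w hw
      obtain ⟨c, hc, -⟩ := Relation.TransGen.head'_iff.1 (hR v w hw)
      exact (hsup _ _ hc).1
    rcases hT.nodes v hv with hr | ht | hl
    · obtain ⟨t, -, hadj⟩ := exists_adj_of_outDeg_pos (by rw [hr.2.2]; omega)
      exact hout t hadj
    · obtain ⟨t, -, hadj⟩ := exists_adj_of_outDeg_pos (by rw [ht.2.2]; omega)
      exact hout t hadj
    · exact (hL v hl).1.1
  · -- walks
    intro u v hadj
    show N.IsWalk
      (if P u then (if v = (D u).1.1 then (D u).2.1 else (D u).2.2)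
        else if hxy : T.Adj u v then Classical.choose (hwalk u v hxy) else [])
      (h u) (h v)
    by_cases hx : P u
    · rw [if_pos hx]
      obtain ⟨-, -, -, hwa, hwb, -⟩ := hspec u hx
      by_cases hv1 : v = (D u).1.1
      · rw [if_pos hv1, hv1]; exact hwa
      · rcases hchild u hx v hadj with hc | hc
        · exact absurd hc hv1
        · rw [if_neg hv1, hc]; exact hwb
    · rw [if_neg hx, dif_pos hadj]
      exact Classical.choose_spec (hwalk u v hadj)
  · -- distinct heads
    intro x y y' hy hy' hne
    have hx : P x := ⟨(y, y'), hy, hy', hne⟩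
    obtain ⟨-, -, hne12, -, -, hhead⟩ := hspec x hx
    show (if P x then (if y = (D x).1.1 then (D x).2.1 else (D x).2.2)
        else if hxy : T.Adj x y then Classical.choose (hwalk x y hxy) else []).head? ≠
      (if P x then (if y' = (D x).1.1 then (D x).2.1 else (D x).2.2)
        else if hxy : T.Adj x y' then Classical.choose (hwalk x y' hxy) else []).head?
    rw [if_pos hx, if_pos hx]
    rcases hchild x hx y hy with hc | hc
    · have hy'1 : y' ≠ (D x).1.1 := fun hcon => hne (hc ▸ hcon ▸ rfl)
      rw [if_pos hc, if_neg hy'1]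
      exact hhead
    · by_cases hy1 : y = (D x).1.1
      · have hy'1 : y' ≠ (D x).1.1 := fun hcon => hne (hy1 ▸ hcon ▸ rfl)
        rw [if_pos hy1, if_neg hy'1]
        exact hhead
      · rw [if_neg hy1]
        rcases hchild x hx y' hy' with hc' | hc'
        · rw [if_pos hc']
          exact hhead.symm
        · exact absurd (hc ▸ hc' ▸ rfl : y = y') hne

end Char


section Surgery

/-- Data for relocating a non-bead reticulation `v` into a bead just below `w0`. -/
structure SurgData (N : DG) where
  v : ℕ
  z : ℕ
  p : ℕ
  q : ℕ
  w0 : ℕ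
  cp : ℕ
  cq : ℕ
  V : ℕ
  hv : v ∈ N.verts
  hvin : N.inDeg v = 2
  hvout : N.outDeg v = 1
  hmpv : N.mult p v = 1
  hmqv : N.mult q v = 1
  hpq : p ≠ q
  hnoin : ∀ u, u ≠ p → u ≠ q → N.mult u v = 0
  hmvz : N.mult v z = 1
  hnoout : ∀ t, t ≠ z → N.mult v t = 0
  hVfresh : V ∉ N.verts
  hw0v : w0 ∈ N.verts
  hw0deg : N.outDeg w0 = 2
  hacp : N.Adj w0 cp
  hacq : N.Adj w0 cq
  hcpcq : cp ≠ cq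
  hcp : (w0 = p ∧ cp = v) ∨ (w0 ≠ p ∧ cp ≠ v ∧ N.Reaches cp p)
  hcq : (w0 = q ∧ cq = v) ∨ (w0 ≠ q ∧ cq ≠ v ∧ N.Reaches cq q)
  hnr : ¬ N.Reaches cq p

namespace SurgData

variable {X : Finset ℕ} {N : DG} (S : SurgData N)

/-- Head of the serialized chain hanging below `p`. -/
def hd2 : ℕ := if S.q = S.w0 then S.z else S.cq
/-- Head of the serialized chain hanging below the new bead. -/
def hd1 : ℕ := if S.p = S.w0 then S.hd2 else S.cp

/-- The transformed graph. -/
def out : DG where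
  verts := insert S.V (N.verts.erase S.v)
  label := N.label
  mult := fun s t =>
    if s = S.v ∨ t = S.v ∨ s = S.w0 ∨ s = S.V ∨ t = S.V then
      (if s = S.w0 ∧ t = S.V then 2 else if s = S.V ∧ t = S.hd1 then 1 else 0)
    else N.mult s t + (if s = S.p ∧ t = S.hd2 ∧ S.p ≠ S.w0 then 1 else 0)
      + (if s = S.q ∧ t = S.z ∧ S.q ≠ S.w0 then 1 else 0)

set_option linter.unusedSectionVars false

section Derived

variable (hN : N.IsNetwork X)

lemma hpv : N.Adj S.p S.v := by rw [Adj, S.hmpv]; omega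
lemma hqv : N.Adj S.q S.v := by rw [Adj, S.hmqv]; omega
lemma hvz : N.Adj S.v S.z := by rw [Adj, S.hmvz]; omega

include hN

lemma hpverts : S.p ∈ N.verts := (hN.supported _ _ S.hpv).1
lemma hqverts : S.q ∈ N.verts := (hN.supported _ _ S.hqv).1
lemma hzverts : S.z ∈ N.verts := (hN.supported _ _ S.hvz).2
lemma hcpverts : S.cp ∈ N.verts := (hN.supported _ _ S.hacp).2
lemma hcqverts : S.cq ∈ N.verts := (hN.supported _ _ S.hacq).2

lemma hvz' : S.v ≠ S.z := by
  intro h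
  exact hN.acyclic S.v (Relation.TransGen.single (h ▸ S.hvz))

lemma hpv' : S.p ≠ S.v := by
  intro h
  exact hN.acyclic S.v (Relation.TransGen.single (h ▸ S.hpv))

lemma hqv' : S.q ≠ S.v := by
  intro h
  exact hN.acyclic S.v (Relation.TransGen.single (h ▸ S.hqv))

lemma hw0v' : S.w0 ≠ S.v := by
  intro h
  have := S.hvout
  rw [← h] at this
  rw [S.hw0deg] at this
  omega

lemma hcpw0 : S.cp ≠ S.w0 := by
  intro h
  exact hN.acyclic S.w0 (Relation.TransGen.single (h ▸ S.hacp))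

lemma hcqw0 : S.cq ≠ S.w0 := by
  intro h
  exact hN.acyclic S.w0 (Relation.TransGen.single (h ▸ S.hacq))

/-- `w0` strictly reaches `v`. -/
lemma hw0sv : N.SReaches S.w0 S.v := by
  rcases S.hcp with ⟨h1, -⟩ | ⟨-, -, hr⟩
  · exact Relation.TransGen.single (by rw [h1]; exact S.hpv)
  · exact Relation.TransGen.head S.hacp (Relation.TransGen.tail' hr S.hpv)

lemma hzw0 : S.z ≠ S.w0 := by
  intro h
  exact hN.acyclic S.v (Relation.TransGen.head S.hvz (by rw [h]; exact S.hw0sv hN))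

lemma hzp : S.z ≠ S.p := by
  intro h
  exact hN.acyclic S.v
    (Relation.TransGen.head S.hvz (Relation.TransGen.single (by rw [h]; exact S.hpv)))

lemma hzq : S.z ≠ S.q := by
  intro h
  exact hN.acyclic S.v
    (Relation.TransGen.head S.hvz (Relation.TransGen.single (by rw [h]; exact S.hqv)))

lemma hd2v : S.hd2 ≠ S.v := by
  unfold hd2
  split
  · exact S.hvz' hN |>.symm
  · next hne =>
    rcases S.hcq with ⟨h, -⟩ | ⟨-, h, -⟩
    · exact absurd h.symm hne
    · exact h

lemma hd1v : S.hd1 ≠ S.v := by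
  unfold hd1
  split
  · exact S.hd2v hN
  · next hne =>
    rcases S.hcp with ⟨h, -⟩ | ⟨-, h, -⟩
    · exact absurd h.symm hne
    · exact h

lemma hd2verts : S.hd2 ∈ N.verts := by
  unfold hd2; split
  · exact S.hzverts hN
  · exact S.hcqverts hN

lemma hd1verts : S.hd1 ∈ N.verts := by
  unfold hd1; split
  · exact S.hd2verts hN
  · exact S.hcpverts hN

lemma hd2w0 : S.hd2 ≠ S.w0 := by
  unfold hd2; split
  · exact S.hzw0 hN
  · exact S.hcqw0 hN

lemma hd1w0 : S.hd1 ≠ S.w0 := by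
  unfold hd1; split
  · exact S.hd2w0 hN
  · exact S.hcpw0 hN

lemma hpV : S.p ≠ S.V := fun h => S.hVfresh (h ▸ S.hpverts hN)
lemma hqV : S.q ≠ S.V := fun h => S.hVfresh (h ▸ S.hqverts hN)
lemma hzV : S.z ≠ S.V := fun h => S.hVfresh (h ▸ S.hzverts hN)
lemma hw0V : S.w0 ≠ S.V := fun h => S.hVfresh (h ▸ S.hw0v)
lemma hvV : S.v ≠ S.V := fun h => S.hVfresh (h ▸ S.hv)
lemma hd1V : S.hd1 ≠ S.V := fun h => S.hVfresh (h ▸ S.hd1verts hN)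
lemma hd2V : S.hd2 ≠ S.V := fun h => S.hVfresh (h ▸ S.hd2verts hN)

lemma hw0mults : N.mult S.w0 S.cp = 1 ∧ N.mult S.w0 S.cq = 1 ∧
    ∀ c, c ≠ S.cp → c ≠ S.cq → N.mult S.w0 c = 0 :=
  mult_le_one_of_ne hN.supported S.hw0deg S.hacp S.hacq S.hcpcq

lemma hw0arcs : ∀ t, N.Adj S.w0 t → t = S.cp ∨ t = S.cq := by
  intro t ht
  by_contra hcon
  push_neg at hcon
  have := (S.hw0mults hN).2.2 t hcon.1 hcon.2
  exact absurd this (by have : 0 < N.mult S.w0 t := ht; omega)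

/-- `w0` is adjacent to `hd1` in `N`. -/
lemma hadjw0hd1 : N.Adj S.w0 S.hd1 := by
  unfold hd1
  split
  · unfold hd2
    split
    · next h1 h2 =>
      exact absurd (h1.trans h2.symm) S.hpq
    · exact S.hacq
  · exact S.hacp

end Derived


section Mult

variable (hN : N.IsNetwork X)

lemma vertsout : S.out.verts = insert S.V (N.verts.erase S.v) := rfl
lemma labelout : S.out.label = N.label := rfl

lemma mult_w0V : S.out.mult S.w0 S.V = 2 := by
  show (if _ then _ else _) = 2
  rw [if_pos (Or.inr (Or.inr (Or.inl rfl))), if_pos ⟨rfl, rfl⟩]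

include hN

lemma mult_w0_other (t : ℕ) (ht : t ≠ S.V) : S.out.mult S.w0 t = 0 := by
  show (if _ then _ else _) = 0
  rw [if_pos (Or.inr (Or.inr (Or.inl rfl))), if_neg (fun h => ht h.2),
    if_neg (fun h => (S.hw0V hN) h.1)]

lemma mult_Vhd1 : S.out.mult S.V S.hd1 = 1 := by
  show (if _ then _ else _) = 1
  rw [if_pos (Or.inr (Or.inr (Or.inr (Or.inl rfl)))),
    if_neg (fun h => (S.hw0V hN) h.1.symm), if_pos ⟨rfl, rfl⟩]

lemma mult_V_other (t : ℕ) (ht : t ≠ S.hd1) : S.out.mult S.V t = 0 := by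
  show (if _ then _ else _) = 0
  rw [if_pos (Or.inr (Or.inr (Or.inr (Or.inl rfl)))),
    if_neg (fun h => (S.hw0V hN) h.1.symm), if_neg (fun h => ht h.2)]

lemma mult_row_v (t : ℕ) : S.out.mult S.v t = 0 := by
  show (if _ then _ else _) = 0
  rw [if_pos (Or.inl rfl), if_neg (fun h => (S.hw0v' hN) h.1.symm),
    if_neg (fun h => (S.hvV hN) h.1)]

lemma mult_col_v (s : ℕ) : S.out.mult s S.v = 0 := by
  show (if _ then _ else _) = 0
  rw [if_pos (Or.inr (Or.inl rfl)), if_neg (fun h => (S.hvV hN) h.2),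
    if_neg (fun h => (S.hd1v hN) h.2.symm)]

lemma mult_col_V (s : ℕ) (hs : s ≠ S.w0) : S.out.mult s S.V = 0 := by
  show (if _ then _ else _) = 0
  rw [if_pos (Or.inr (Or.inr (Or.inr (Or.inr rfl)))), if_neg (fun h => hs h.1),
    if_neg (fun h => (S.hd1V hN) h.2.symm)]

omit hN in
lemma mult_gen (s t : ℕ) (hsv : s ≠ S.v) (htv : t ≠ S.v) (hsw : s ≠ S.w0)
    (hsV : s ≠ S.V) (htV : t ≠ S.V) :
    S.out.mult s t = N.mult s t + (if s = S.p ∧ t = S.hd2 ∧ S.p ≠ S.w0 then 1 else 0)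
      + (if s = S.q ∧ t = S.z ∧ S.q ≠ S.w0 then 1 else 0) := by
  show (if _ then _ else _) = _
  rw [if_neg]
  push_neg
  exact ⟨hsv, htv, hsw, hsV, htV⟩

/-- `N.mult w0 x` as indicators. -/
lemma mult_w0_split (x : ℕ) :
    N.mult S.w0 x = (if x = S.cp then 1 else 0) + (if x = S.cq then 1 else 0) := by
  obtain ⟨h1, h2, h3⟩ := S.hw0mults hN
  by_cases hxcp : x = S.cp
  · rw [if_pos hxcp, if_neg (fun h => S.hcpcq (hxcp.symm.trans h)), hxcp, h1]
  · by_cases hxcq : x = S.cq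
    · rw [if_neg hxcp, if_pos hxcq, hxcq, h2]
    · rw [if_neg hxcp, if_neg hxcq, h3 x hxcp hxcq]

/-- `N.mult x v` as indicators. -/
lemma mult_col_v_split (x : ℕ) :
    N.mult x S.v = (if x = S.p then 1 else 0) + (if x = S.q then 1 else 0) := by
  by_cases hxp : x = S.p
  · rw [if_pos hxp, if_neg (fun h => S.hpq (hxp.symm.trans h)), hxp, S.hmpv]
  · by_cases hxq : x = S.q
    · rw [if_neg hxp, if_pos hxq, hxq, S.hmqv]
    · rw [if_neg hxp, if_neg hxq, S.hnoin x hxp hxq]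

omit hN in
lemma mult_row_v_split (t : ℕ) : N.mult S.v t = if t = S.z then 1 else 0 := by
  by_cases htz : t = S.z
  · rw [if_pos htz, htz, S.hmvz]
  · rw [if_neg htz, S.hnoout t htz]

lemma hVnotinA : S.V ∉ N.verts.erase S.v := fun h => S.hVfresh (Finset.mem_erase.1 h).2

lemma outDeg_V : S.out.outDeg S.V = 1 := by
  unfold outDeg
  rw [vertsout]
  rw [Finset.sum_insert (S.hVnotinA hN)]
  rw [S.mult_V_other hN S.V (Ne.symm (S.hd1V hN))]
  rw [Finset.sum_eq_single_of_mem S.hd1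
    (Finset.mem_erase.2 ⟨S.hd1v hN, S.hd1verts hN⟩)
    (fun b _ hb => S.mult_V_other hN b hb)]
  rw [S.mult_Vhd1 hN]

lemma inDeg_V : S.out.inDeg S.V = 2 := by
  unfold inDeg
  rw [vertsout]
  rw [Finset.sum_insert (S.hVnotinA hN)]
  rw [S.mult_col_V hN S.V (Ne.symm (S.hw0V hN))]
  rw [Finset.sum_eq_single_of_mem S.w0
    (Finset.mem_erase.2 ⟨S.hw0v' hN, S.hw0v⟩)
    (fun b _ hb => S.mult_col_V hN b hb)]
  rw [S.mult_w0V]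

lemma outDeg_w0 : S.out.outDeg S.w0 = 2 := by
  unfold outDeg
  rw [vertsout]
  rw [Finset.sum_insert (S.hVnotinA hN)]
  rw [Finset.sum_eq_zero (fun b hb => S.mult_w0_other hN b
    (fun hbV => S.hVnotinA hN (hbV ▸ hb)))]
  rw [S.mult_w0V]
  omega

omit hN in
lemma sum_ind {A : Finset ℕ} {b : ℕ} (hb : b ∈ A) :
    (∑ t ∈ A, if t = b then 1 else 0) = 1 := by
  rw [Finset.sum_eq_single_of_mem b hb (fun c _ hc => if_neg hc), if_pos rfl]

lemma outDeg_pres (x : ℕ) (hx : x ∈ N.verts) (hxv : x ≠ S.v) :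
    S.out.outDeg x = N.outDeg x := by
  by_cases hxw : x = S.w0
  · rw [hxw, S.outDeg_w0 hN, S.hw0deg]
  have hxV : x ≠ S.V := fun h => S.hVfresh (h ▸ hx)
  unfold outDeg
  rw [vertsout, Finset.sum_insert (S.hVnotinA hN), S.mult_col_V hN x hxw]
  have hcongr : ∀ t ∈ N.verts.erase S.v, S.out.mult x t =
      N.mult x t + (if x = S.p ∧ t = S.hd2 ∧ S.p ≠ S.w0 then 1 else 0)
        + (if x = S.q ∧ t = S.z ∧ S.q ≠ S.w0 then 1 else 0) := by
    intro t ht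
    obtain ⟨htv, htm⟩ := Finset.mem_erase.1 ht
    exact S.mult_gen x t hxv htv hxw hxV (fun h => S.hVfresh (h ▸ htm))
  rw [Finset.sum_congr rfl hcongr, Finset.sum_add_distrib, Finset.sum_add_distrib]
  have hA : N.mult x S.v + ∑ t ∈ N.verts.erase S.v, N.mult x t = N.outDeg x :=
    Finset.add_sum_erase _ _ S.hv
  have h1 : (∑ t ∈ N.verts.erase S.v, if x = S.p ∧ t = S.hd2 ∧ S.p ≠ S.w0 then 1 else 0)
      = if x = S.p then 1 else 0 := by
    by_cases hxp : x = S.p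
    · have hpw : S.p ≠ S.w0 := hxp ▸ hxw
      rw [if_pos hxp]
      calc (∑ t ∈ N.verts.erase S.v, if x = S.p ∧ t = S.hd2 ∧ S.p ≠ S.w0 then 1 else 0)
          = ∑ t ∈ N.verts.erase S.v, if t = S.hd2 then 1 else 0 :=
            Finset.sum_congr rfl (fun t _ => by simp [hxp, hpw])
        _ = 1 := sum_ind (Finset.mem_erase.2 ⟨S.hd2v hN, S.hd2verts hN⟩)
    · rw [if_neg hxp, Finset.sum_eq_zero (fun t _ => by simp [hxp])]
  have h2 : (∑ t ∈ N.verts.erase S.v, if x = S.q ∧ t = S.z ∧ S.q ≠ S.w0 then 1 else 0)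
      = if x = S.q then 1 else 0 := by
    by_cases hxq : x = S.q
    · have hqw : S.q ≠ S.w0 := hxq ▸ hxw
      rw [if_pos hxq]
      calc (∑ t ∈ N.verts.erase S.v, if x = S.q ∧ t = S.z ∧ S.q ≠ S.w0 then 1 else 0)
          = ∑ t ∈ N.verts.erase S.v, if t = S.z then 1 else 0 :=
            Finset.sum_congr rfl (fun t _ => by simp [hxq, hqw])
        _ = 1 := sum_ind (Finset.mem_erase.2 ⟨Ne.symm (S.hvz' hN), S.hzverts hN⟩)
    · rw [if_neg hxq, Finset.sum_eq_zero (fun t _ => by simp [hxq])]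
  rw [h1, h2]
  have hsplit := S.mult_col_v_split hN x
  unfold outDeg at hA
  by_cases hxp : x = S.p
  · have hxq : x ≠ S.q := fun h => S.hpq (hxp.symm.trans h)
    rw [if_pos hxp, if_neg hxq] at hsplit ⊢
    omega
  · by_cases hxq : x = S.q
    · rw [if_neg hxp, if_pos hxq] at hsplit ⊢
      omega
    · rw [if_neg hxp, if_neg hxq] at hsplit ⊢
      omega

lemma inDeg_pres (x : ℕ) (hx : x ∈ N.verts) (hxv : x ≠ S.v) :
    S.out.inDeg x = N.inDeg x := by
  have hxV : x ≠ S.V := fun h => S.hVfresh (h ▸ hx)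
  unfold inDeg
  rw [vertsout, Finset.sum_insert (S.hVnotinA hN)]
  have hVx : S.out.mult S.V x = if x = S.hd1 then 1 else 0 := by
    by_cases hxh : x = S.hd1
    · rw [if_pos hxh, hxh, S.mult_Vhd1 hN]
    · rw [if_neg hxh, S.mult_V_other hN x hxh]
  rw [hVx]
  have hcongr : ∀ s ∈ N.verts.erase S.v, S.out.mult s x =
      (if s = S.w0 then (0:ℕ) else N.mult s x)
        + (if s = S.p ∧ x = S.hd2 ∧ S.p ≠ S.w0 then 1 else 0)
        + (if s = S.q ∧ x = S.z ∧ S.q ≠ S.w0 then 1 else 0) := by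
    intro s hs
    obtain ⟨hsv, hsm⟩ := Finset.mem_erase.1 hs
    by_cases hsw : s = S.w0
    · have h0 : S.out.mult s x = 0 := by rw [hsw]; exact S.mult_w0_other hN x hxV
      have e1 : ¬ (s = S.p ∧ x = S.hd2 ∧ S.p ≠ S.w0) :=
        fun h => h.2.2 (h.1.symm.trans hsw)
      have e2 : ¬ (s = S.q ∧ x = S.z ∧ S.q ≠ S.w0) :=
        fun h => h.2.2 (h.1.symm.trans hsw)
      rw [h0, if_pos hsw, if_neg e1, if_neg e2]
    · rw [if_neg hsw]
      exact S.mult_gen s x hsv hxv hsw (fun h => S.hVfresh (h ▸ hsm)) hxV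
  rw [Finset.sum_congr rfl hcongr, Finset.sum_add_distrib, Finset.sum_add_distrib]
  -- the plain part
  have hw0A : S.w0 ∈ N.verts.erase S.v := Finset.mem_erase.2 ⟨S.hw0v' hN, S.hw0v⟩
  have e1 : ∑ s ∈ N.verts.erase S.v, (if s = S.w0 then (0:ℕ) else N.mult s x)
      = ∑ s ∈ (N.verts.erase S.v).erase S.w0, (if s = S.w0 then (0:ℕ) else N.mult s x) :=
    (Finset.sum_erase (f := fun s => if s = S.w0 then (0:ℕ) else N.mult s x)
      (a := S.w0) _ (if_pos rfl)).symm
  have e2 : ∑ s ∈ (N.verts.erase S.v).erase S.w0, (if s = S.w0 then (0:ℕ) else N.mult s x)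
      = ∑ s ∈ (N.verts.erase S.v).erase S.w0, N.mult s x :=
    Finset.sum_congr rfl (fun s hs => if_neg (Finset.mem_erase.1 hs).1)
  have hplain : N.mult S.w0 x
      + ∑ s ∈ N.verts.erase S.v, (if s = S.w0 then (0:ℕ) else N.mult s x)
      = ∑ s ∈ N.verts.erase S.v, N.mult s x := by
    rw [e1, e2]
    exact Finset.add_sum_erase _ (fun s => N.mult s x) hw0A
  have hs1 : (∑ s ∈ N.verts.erase S.v, if s = S.p ∧ x = S.hd2 ∧ S.p ≠ S.w0 then 1 else 0)
      = if x = S.hd2 ∧ S.p ≠ S.w0 then 1 else 0 := by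
    by_cases hc : x = S.hd2 ∧ S.p ≠ S.w0
    · rw [if_pos hc]
      calc (∑ s ∈ N.verts.erase S.v, if s = S.p ∧ x = S.hd2 ∧ S.p ≠ S.w0 then 1 else 0)
          = ∑ s ∈ N.verts.erase S.v, if s = S.p then 1 else 0 :=
            Finset.sum_congr rfl (fun s _ => by simp [hc.1, hc.2])
        _ = 1 := sum_ind (Finset.mem_erase.2 ⟨S.hpv' hN, S.hpverts hN⟩)
    · rw [if_neg hc, Finset.sum_eq_zero (fun s _ => if_neg (fun h => hc ⟨h.2.1, h.2.2⟩))]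
  have hs2 : (∑ s ∈ N.verts.erase S.v, if s = S.q ∧ x = S.z ∧ S.q ≠ S.w0 then 1 else 0)
      = if x = S.z ∧ S.q ≠ S.w0 then 1 else 0 := by
    by_cases hc : x = S.z ∧ S.q ≠ S.w0
    · rw [if_pos hc]
      calc (∑ s ∈ N.verts.erase S.v, if s = S.q ∧ x = S.z ∧ S.q ≠ S.w0 then 1 else 0)
          = ∑ s ∈ N.verts.erase S.v, if s = S.q then 1 else 0 :=
            Finset.sum_congr rfl (fun s _ => by simp [hc.1, hc.2])
        _ = 1 := sum_ind (Finset.mem_erase.2 ⟨S.hqv' hN, S.hqverts hN⟩)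
    · rw [if_neg hc, Finset.sum_eq_zero (fun s _ => if_neg (fun h => hc ⟨h.2.1, h.2.2⟩))]
  rw [hs1, hs2]
  have hB : N.mult S.v x + ∑ s ∈ N.verts.erase S.v, N.mult s x = N.inDeg x := by
    unfold inDeg
    exact Finset.add_sum_erase _ (fun s => N.mult s x) S.hv
  have hvx : N.mult S.v x = if x = S.z then 1 else 0 := S.mult_row_v_split x
  have hw0x := S.mult_w0_split hN x
  -- the indicator balance
  have key : (if x = S.hd1 then 1 else 0) + (if x = S.hd2 ∧ S.p ≠ S.w0 then 1 else 0)
      + (if x = S.z ∧ S.q ≠ S.w0 then 1 else 0)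
      = (if x = S.cp then 1 else 0) + (if x = S.cq then 1 else 0)
        + (if x = S.z then 1 else 0) := by
    rcases S.hcp with ⟨hpw, hcpv⟩ | ⟨hpw, hcpv, -⟩
    · -- w0 = p
      have hp' : S.p = S.w0 := hpw.symm
      have hq' : S.q ≠ S.w0 := fun h => S.hpq (hp'.trans h.symm)
      have hhd1 : S.hd1 = S.cq := by unfold hd1 hd2; rw [if_pos hp', if_neg hq']
      have hxcp : x ≠ S.cp := fun h => hxv (h.trans hcpv)
      have ha : (if x = S.hd2 ∧ S.p ≠ S.w0 then (1:ℕ) else 0) = 0 :=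
        if_neg (fun h => h.2 hp')
      have hb : (if x = S.z ∧ S.q ≠ S.w0 then (1:ℕ) else 0) = if x = S.z then 1 else 0 := by
        by_cases hxz : x = S.z
        · rw [if_pos ⟨hxz, hq'⟩, if_pos hxz]
        · rw [if_neg (fun h => hxz h.1), if_neg hxz]
      rw [hhd1, ha, hb, if_neg hxcp]
      omega
    · -- w0 ≠ p
      have hp' : S.p ≠ S.w0 := fun h => hpw h.symm
      have hhd1 : S.hd1 = S.cp := by unfold hd1; rw [if_neg hp']
      rcases S.hcq with ⟨hqw, hcqv⟩ | ⟨hqw, hcqv, -⟩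
      · -- w0 = q
        have hq' : S.q = S.w0 := hqw.symm
        have hhd2 : S.hd2 = S.z := by unfold hd2; rw [if_pos hq']
        have hxcq : x ≠ S.cq := fun h => hxv (h.trans hcqv)
        have ha : (if x = S.hd2 ∧ S.p ≠ S.w0 then (1:ℕ) else 0)
            = if x = S.z then 1 else 0 := by
          by_cases hxz : x = S.z
          · rw [if_pos ⟨hhd2 ▸ hxz, hp'⟩, if_pos hxz]
          · rw [if_neg (fun h => hxz (h.1.trans hhd2)), if_neg hxz]
        have hb : (if x = S.z ∧ S.q ≠ S.w0 then (1:ℕ) else 0) = 0 :=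
          if_neg (fun h => h.2 hq')
        rw [hhd1, ha, hb, if_neg hxcq]
        omega
      · -- general case
        have hq' : S.q ≠ S.w0 := fun h => hqw h.symm
        have hhd2 : S.hd2 = S.cq := by unfold hd2; rw [if_neg hq']
        have ha : (if x = S.hd2 ∧ S.p ≠ S.w0 then (1:ℕ) else 0)
            = if x = S.cq then 1 else 0 := by
          by_cases hxc : x = S.cq
          · rw [if_pos ⟨hhd2 ▸ hxc, hp'⟩, if_pos hxc]
          · rw [if_neg (fun h => hxc (h.1.trans hhd2)), if_neg hxc]
        have hb : (if x = S.z ∧ S.q ≠ S.w0 then (1:ℕ) else 0)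
            = if x = S.z then 1 else 0 := by
          by_cases hxz : x = S.z
          · rw [if_pos ⟨hxz, hq'⟩, if_pos hxz]
          · rw [if_neg (fun h => hxz h.1), if_neg hxz]
        rw [hhd1, ha, hb]
  unfold inDeg at hB
  omega

end Mult



section WellFormed

variable (hN : N.IsNetwork X)

/-- The comparison relation for acyclicity: `N` plus the arc `(p, cq)`. -/
def Adj2 : ℕ → ℕ → Prop := fun s t => N.Adj s t ∨ (s = S.p ∧ t = S.cq)

include hN

lemma acyc2 : ∀ x, ¬ Relation.TransGen S.Adj2 x x :=
  acyclic_addArc hN.acyclic S.hnr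

lemma adjout_cases : ∀ x y, S.out.Adj x y →
    (x = S.w0 ∧ y = S.V) ∨ (x = S.V ∧ y = S.hd1) ∨
      (x ≠ S.v ∧ y ≠ S.v ∧ x ≠ S.w0 ∧ x ≠ S.V ∧ y ≠ S.V ∧
        (N.Adj x y ∨ (x = S.p ∧ y = S.hd2 ∧ S.p ≠ S.w0) ∨
          (x = S.q ∧ y = S.z ∧ S.q ≠ S.w0))) := by
  intro x y h
  have h' : 0 < S.out.mult x y := h
  show _
  by_cases hc : x = S.v ∨ y = S.v ∨ x = S.w0 ∨ x = S.V ∨ y = S.V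
  · have hm : S.out.mult x y =
        (if x = S.w0 ∧ y = S.V then 2 else if x = S.V ∧ y = S.hd1 then 1 else 0) := by
      show (if _ then _ else _) = _
      rw [if_pos hc]
    rw [hm] at h'
    by_cases h1 : x = S.w0 ∧ y = S.V
    · exact Or.inl h1
    · rw [if_neg h1] at h'
      by_cases h2 : x = S.V ∧ y = S.hd1
      · exact Or.inr (Or.inl h2)
      · rw [if_neg h2] at h'
        omega
  · push_neg at hc
    obtain ⟨hxv, hyv, hxw, hxV, hyV⟩ := hc
    have hm := S.mult_gen x y hxv hyv hxw hxV hyV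
    rw [hm] at h'
    refine Or.inr (Or.inr ⟨hxv, hyv, hxw, hxV, hyV, ?_⟩)
    by_cases hA : N.Adj x y
    · exact Or.inl hA
    · have hA' : N.mult x y = 0 := Nat.eq_zero_of_not_pos hA
      rw [hA'] at h'
      by_cases h1 : x = S.p ∧ y = S.hd2 ∧ S.p ≠ S.w0
      · exact Or.inr (Or.inl h1)
      · rw [if_neg h1] at h'
        by_cases h2 : x = S.q ∧ y = S.z ∧ S.q ≠ S.w0
        · exact Or.inr (Or.inr h2)
        · rw [if_neg h2] at h'
          omega

lemma adj2_piece {x y : ℕ}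
    (h : N.Adj x y ∨ (x = S.p ∧ y = S.hd2 ∧ S.p ≠ S.w0) ∨
      (x = S.q ∧ y = S.z ∧ S.q ≠ S.w0)) :
    Relation.TransGen S.Adj2 x y := by
  rcases h with h | ⟨hx, hy, -⟩ | ⟨hx, hy, -⟩
  · exact Relation.TransGen.single (Or.inl h)
  · subst hx
    by_cases hq : S.q = S.w0
    · have : y = S.z := by rw [hy]; unfold hd2; rw [if_pos hq]
      subst this
      exact Relation.TransGen.head (Or.inl S.hpv)
        (Relation.TransGen.single (Or.inl S.hvz))
    · have : y = S.cq := by rw [hy]; unfold hd2; rw [if_neg hq]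
      subst this
      exact Relation.TransGen.single (Or.inr ⟨rfl, rfl⟩)
  · subst hx; subst hy
    exact Relation.TransGen.head (Or.inl S.hqv)
      (Relation.TransGen.single (Or.inl S.hvz))

lemma adj2_w0hd1 : Relation.TransGen S.Adj2 S.w0 S.hd1 :=
  Relation.TransGen.single (Or.inl (S.hadjw0hd1 hN))

lemma transout : ∀ x y, Relation.TransGen S.out.Adj x y →
    Relation.TransGen S.Adj2 (if x = S.V then S.w0 else x) (if y = S.V then S.w0 else y)
      ∨ (x = S.w0 ∧ y = S.V) := by
  intro x y h
  induction h with
  | single hstep =>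
    rename_i b
    rcases S.adjout_cases hN _ _ hstep with ⟨hx, hb⟩ | ⟨hx, hb⟩ | ⟨-, -, -, hxV, hbV, hp⟩
    · exact Or.inr ⟨hx, hb⟩
    · left
      rw [if_pos hx, if_neg (fun hh => (S.hd1V hN) (hb.symm.trans hh)), hb]
      exact S.adj2_w0hd1 hN
    · left
      rw [if_neg hxV, if_neg hbV]
      exact S.adj2_piece hN hp
  | tail hxy hstep ih =>
    rename_i b c
    rcases S.adjout_cases hN _ _ hstep with ⟨hb, hc⟩ | ⟨hb, hc⟩ | ⟨-, -, -, hbV, hcV, hp⟩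
    · -- step (w0, V)
      rcases ih with L | ⟨hx, hy⟩
      · left
        rw [if_pos hc]
        rw [if_neg (fun hh => (S.hw0V hN) (hb.symm.trans hh)), hb] at L
        exact L
      · exact absurd (hy.symm.trans hb) (Ne.symm (S.hw0V hN))
    · -- step (V, hd1)
      have hcV : c ≠ S.V := fun hh => (S.hd1V hN) (hc.symm.trans hh)
      rcases ih with L | ⟨hx, hy⟩
      · left
        rw [if_pos hb] at L
        rw [if_neg hcV, hc]
        exact L.trans (S.adj2_w0hd1 hN)
      · left
        rw [if_neg (fun hh => (S.hw0V hN) (hx.symm.trans hh)), if_neg hcV, hc, hx]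
        exact S.adj2_w0hd1 hN
    · -- step within Adj2
      rcases ih with L | ⟨hx, hy⟩
      · left
        rw [if_neg hbV] at L
        rw [if_neg hcV]
        exact L.trans (S.adj2_piece hN hp)
      · exact absurd hy hbV

lemma acyclicout : S.out.Acyclic := by
  intro x hx
  rcases S.transout hN x x hx with L | ⟨h1, h2⟩
  · exact S.acyc2 hN _ L
  · exact (S.hw0V hN) (h2 ▸ h1 ▸ rfl : S.w0 = S.V)

lemma hw0verts' : S.w0 ∈ S.out.verts := by
  rw [vertsout]
  exact Finset.mem_insert_of_mem (Finset.mem_erase.2 ⟨S.hw0v' hN, S.hw0v⟩)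

lemma hVverts' : S.V ∈ S.out.verts := by
  rw [vertsout]; exact Finset.mem_insert_self _ _

lemma mem_verts' {x : ℕ} (hx : x ∈ N.verts) (hxv : x ≠ S.v) : x ∈ S.out.verts := by
  rw [vertsout]
  exact Finset.mem_insert_of_mem (Finset.mem_erase.2 ⟨hxv, hx⟩)

lemma supportedout : S.out.Supported := by
  intro a b h
  rcases S.adjout_cases hN _ _ h with ⟨ha, hb⟩ | ⟨ha, hb⟩ | ⟨hav, hbv, -, -, -, hp⟩
  · exact ⟨ha ▸ S.hw0verts' hN, hb ▸ S.hVverts' hN⟩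
  · exact ⟨ha ▸ S.hVverts' hN, hb ▸ S.mem_verts' hN (S.hd1verts hN) (S.hd1v hN)⟩
  · rcases hp with hA | ⟨hx, hy, -⟩ | ⟨hx, hy, -⟩
    · exact ⟨S.mem_verts' hN (hN.supported a b hA).1 hav,
        S.mem_verts' hN (hN.supported a b hA).2 hbv⟩
    · exact ⟨hx ▸ S.mem_verts' hN (S.hpverts hN) (S.hpv' hN),
        hy ▸ S.mem_verts' hN (S.hd2verts hN) (S.hd2v hN)⟩
    · exact ⟨hx ▸ S.mem_verts' hN (S.hqverts hN) (S.hqv' hN),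
        hy ▸ S.mem_verts' hN (S.hzverts hN) (Ne.symm (S.hvz' hN))⟩

lemma vnotleaf : ¬ N.IsLeafNode S.v := by
  intro h
  have := h.2.1
  have := S.hvin
  omega

lemma outdeg_le_two {x : ℕ} (hx : x ∈ N.verts) : N.outDeg x ≤ 2 := by
  rcases hN.nodes x hx with ⟨-, -, h2⟩ | ⟨-, -, h2⟩ | ⟨-, -, h2⟩ | ⟨-, -, h2⟩ <;> omega

lemma isnetworkout : S.out.IsNetwork X := by
  obtain ⟨r, hr, hru⟩ := hN.root
  have hrv : r ≠ S.v := by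
    intro h
    have h0 := hr.2.1
    have h1 := S.hvin
    rw [h] at h0
    omega
  refine ⟨⟨r, ⟨S.mem_verts' hN hr.1 hrv, ?_, ?_⟩, ?_⟩, ?_, S.acyclicout hN,
    S.supportedout hN, ?_, ?_, ?_⟩
  · rw [S.inDeg_pres hN r hr.1 hrv]; exact hr.2.1
  · rw [S.outDeg_pres hN r hr.1 hrv]; exact hr.2.2
  · -- uniqueness
    intro x hx
    obtain ⟨hx1, hx2, hx3⟩ := hx
    have hx1' : x ∈ insert S.V (N.verts.erase S.v) := hx1
    rcases Finset.mem_insert.1 hx1' with hxV | hxm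
    · exfalso
      rw [hxV, S.inDeg_V hN] at hx2
      omega
    · obtain ⟨hxv, hxm'⟩ := Finset.mem_erase.1 hxm
      refine hru x ⟨hxm', ?_, ?_⟩
      · rw [← S.inDeg_pres hN x hxm' hxv]; exact hx2
      · rw [← S.outDeg_pres hN x hxm' hxv]; exact hx3
  · -- node classification
    intro x hx
    rw [vertsout] at hx
    rcases Finset.mem_insert.1 hx with hxV | hxm
    · subst hxV
      exact Or.inr (Or.inr (Or.inl ⟨S.hVverts' hN, S.inDeg_V hN, S.outDeg_V hN⟩))
    · obtain ⟨hxv, hxm'⟩ := Finset.mem_erase.1 hxm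
      have hi := S.inDeg_pres hN x hxm' hxv
      have ho := S.outDeg_pres hN x hxm' hxv
      have hmem := S.mem_verts' hN hxm' hxv
      rcases hN.nodes x hxm' with h | h | h | h
      · exact Or.inl ⟨hmem, by rw [hi]; exact h.2.1, by rw [ho]; exact h.2.2⟩
      · exact Or.inr (Or.inl ⟨hmem, by rw [hi]; exact h.2.1, by rw [ho]; exact h.2.2⟩)
      · exact Or.inr (Or.inr (Or.inl ⟨hmem, by rw [hi]; exact h.2.1,
          by rw [ho]; exact h.2.2⟩))
      · exact Or.inr (Or.inr (Or.inr ⟨hmem, by rw [hi]; exact h.2.1,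
          by rw [ho]; exact h.2.2⟩))
  · -- labels on leaves
    intro y
    constructor
    · intro hy
      have hl := (hN.labels y).1 hy
      have hyv : y ≠ S.v := fun h => S.vnotleaf hN (h ▸ hl)
      exact ⟨S.mem_verts' hN hl.1 hyv, by
        rw [S.inDeg_pres hN y hl.1 hyv]; exact hl.2.1, by
        rw [S.outDeg_pres hN y hl.1 hyv]; exact hl.2.2⟩
    · intro hy
      obtain ⟨hy1, hy2, hy3⟩ := hy
      have hy1' : y ∈ insert S.V (N.verts.erase S.v) := hy1
      rcases Finset.mem_insert.1 hy1' with hyV | hym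
      · exfalso
        rw [hyV, S.inDeg_V hN] at hy2
        omega
      · obtain ⟨hyv, hym'⟩ := Finset.mem_erase.1 hym
        refine (hN.labels y).2 ⟨hym', ?_, ?_⟩
        · rw [← S.inDeg_pres hN y hym' hyv]; exact hy2
        · rw [← S.outDeg_pres hN y hym' hyv]; exact hy3
  · exact hN.labelsSub
  · exact hN.labelsOnto

lemma reticNum_out : S.out.reticNum = N.reticNum := by
  classical
  have hset : S.out.verts.filter (fun x => S.out.inDeg x = 2 ∧ S.out.outDeg x = 1)
      = insert S.V ((N.verts.filter (fun x => N.inDeg x = 2 ∧ N.outDeg x = 1)).erase S.v)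
      := by
    ext x
    simp only [Finset.mem_filter, Finset.mem_insert, Finset.mem_erase]
    constructor
    · rintro ⟨hx, h2, h1⟩
      rw [vertsout] at hx
      rcases Finset.mem_insert.1 hx with hxV | hxm
      · exact Or.inl hxV
      · obtain ⟨hxv, hxm'⟩ := Finset.mem_erase.1 hxm
        refine Or.inr ⟨hxv, hxm', ?_, ?_⟩
        · rw [← S.inDeg_pres hN x hxm' hxv]; exact h2
        · rw [← S.outDeg_pres hN x hxm' hxv]; exact h1
    · rintro (rfl | ⟨hxv, hxm, h2, h1⟩)
      · exact ⟨S.hVverts' hN, S.inDeg_V hN, S.outDeg_V hN⟩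
      · exact ⟨S.mem_verts' hN hxm hxv, by rw [S.inDeg_pres hN x hxm hxv]; exact h2,
          by rw [S.outDeg_pres hN x hxm hxv]; exact h1⟩
  unfold reticNum
  rw [hset]
  have hVn : S.V ∉ (N.verts.filter (fun x => N.inDeg x = 2 ∧ N.outDeg x = 1)).erase S.v :=
    fun h => S.hVfresh (Finset.mem_filter.1 (Finset.mem_erase.1 h).2).1
  rw [Finset.card_insert_of_notMem hVn]
  have hvmem : S.v ∈ N.verts.filter (fun x => N.inDeg x = 2 ∧ N.outDeg x = 1) :=
    Finset.mem_filter.2 ⟨S.hv, S.hvin, S.hvout⟩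
  rw [Finset.card_erase_of_mem hvmem]
  have : 0 < (N.verts.filter (fun x => N.inDeg x = 2 ∧ N.outDeg x = 1)).card :=
    Finset.card_pos.2 ⟨S.v, hvmem⟩
  omega

end WellFormed


section Reach

variable (hN : N.IsNetwork X)

lemma hd1_eq (hp : S.p ≠ S.w0) : S.hd1 = S.cp := by unfold hd1; rw [if_neg hp]
lemma hd1_eq' (hp : S.p = S.w0) : S.hd1 = S.hd2 := by unfold hd1; rw [if_pos hp]
lemma hd2_eq (hq : S.q ≠ S.w0) : S.hd2 = S.cq := by unfold hd2; rw [if_neg hq]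
lemma hd2_eq' (hq : S.q = S.w0) : S.hd2 = S.z := by unfold hd2; rw [if_pos hq]

lemma hcp_right (hp : S.p ≠ S.w0) : S.cp ≠ S.v ∧ N.Reaches S.cp S.p := by
  rcases S.hcp with ⟨h1, -⟩ | ⟨-, h2, h3⟩
  · exact absurd h1.symm hp
  · exact ⟨h2, h3⟩

lemma hcq_right (hq : S.q ≠ S.w0) : S.cq ≠ S.v ∧ N.Reaches S.cq S.q := by
  rcases S.hcq with ⟨h1, -⟩ | ⟨-, h2, h3⟩
  · exact absurd h1.symm hq
  · exact ⟨h2, h3⟩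

lemma p_ne_w0_of_cp (hcpv : S.cp ≠ S.v) : S.p ≠ S.w0 := by
  rcases S.hcp with ⟨-, h2⟩ | ⟨h1, -, -⟩
  · exact absurd h2 hcpv
  · exact fun h => h1 h.symm

lemma q_ne_w0_of_cq (hcqv : S.cq ≠ S.v) : S.q ≠ S.w0 := by
  rcases S.hcq with ⟨-, h2⟩ | ⟨h1, -, -⟩
  · exact absurd h2 hcqv
  · exact fun h => h1 h.symm

include hN

lemma adj_w0_V : S.out.Adj S.w0 S.V := by
  show 0 < S.out.mult S.w0 S.V
  rw [S.mult_w0V]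
  omega

lemma adj_V_hd1 : S.out.Adj S.V S.hd1 := by
  show 0 < S.out.mult S.V S.hd1
  rw [S.mult_Vhd1 hN]
  omega

lemma adj_q_z (hq : S.q ≠ S.w0) : S.out.Adj S.q S.z := by
  show 0 < S.out.mult S.q S.z
  rw [S.mult_gen S.q S.z (S.hqv' hN) (Ne.symm (S.hvz' hN)) hq (S.hqV hN) (S.hzV hN)]
  have h2 : (if S.q = S.q ∧ S.z = S.z ∧ S.q ≠ S.w0 then 1 else 0) = 1 :=
    if_pos ⟨rfl, rfl, hq⟩
  omega

lemma adj_p_hd2 (hp : S.p ≠ S.w0) : S.out.Adj S.p S.hd2 := by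
  show 0 < S.out.mult S.p S.hd2
  rw [S.mult_gen S.p S.hd2 (S.hpv' hN) (S.hd2v hN) hp (S.hpV hN) (S.hd2V hN)]
  have h2 : (if S.p = S.p ∧ S.hd2 = S.hd2 ∧ S.p ≠ S.w0 then 1 else 0) = 1 :=
    if_pos ⟨rfl, rfl, hp⟩
  omega

/-- Lifting a path of `N` that lies strictly between `w0` and `v`. -/
lemma liftavoid : ∀ {a b : ℕ}, N.Reaches a b → N.SReaches S.w0 a → N.SReaches b S.v →
    S.out.Reaches a b := by
  intro a b h
  induction h using Relation.ReflTransGen.head_induction_on with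
  | refl => exact fun _ _ => Relation.ReflTransGen.refl
  | head hadj hrest ih =>
    rename_i a' x
    intro ha hb
    have hav : a' ≠ S.v := by
      intro hh
      exact hN.acyclic S.v (Relation.TransGen.trans_right
        (hh ▸ (Relation.ReflTransGen.head hadj hrest) :
          N.Reaches S.v b) hb)
    have hxv : x ≠ S.v := by
      intro hh
      exact hN.acyclic S.v (Relation.TransGen.trans_right (hh ▸ hrest) hb)
    have haw : a' ≠ S.w0 := by
      intro hh
      exact hN.acyclic S.w0 (hh ▸ ha)
    have haV : a' ≠ S.V := fun hh => S.hVfresh (hh ▸ (hN.supported _ _ hadj).1)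
    have hxV : x ≠ S.V := fun hh => S.hVfresh (hh ▸ (hN.supported _ _ hadj).2)
    have hadj' : S.out.Adj a' x := by
      show 0 < S.out.mult a' x
      rw [S.mult_gen a' x hav hxv haw haV hxV]
      have : 0 < N.mult a' x := hadj
      omega
    exact Relation.ReflTransGen.head hadj' (ih (ha.tail hadj) hb)

lemma reach_cq_q (hq : S.q ≠ S.w0) : S.out.Reaches S.cq S.q :=
  S.liftavoid hN (S.hcq_right hq).2 (Relation.TransGen.single S.hacq)
    (Relation.TransGen.single S.hqv)

lemma reach_cp_p (hp : S.p ≠ S.w0) : S.out.Reaches S.cp S.p :=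
  S.liftavoid hN (S.hcp_right hp).2 (Relation.TransGen.single S.hacp)
    (Relation.TransGen.single S.hpv)

lemma reach_hd2_z : S.out.Reaches S.hd2 S.z := by
  by_cases hq : S.q = S.w0
  · rw [S.hd2_eq' hq]
    exact Relation.ReflTransGen.refl
  · rw [S.hd2_eq hq]
    exact (S.reach_cq_q hN hq).tail (S.adj_q_z hN hq)


lemma sreach_p_hd2 (hp : S.p ≠ S.w0) : S.out.SReaches S.p S.z := by
  exact Relation.TransGen.head' (S.adj_p_hd2 hN hp) (S.reach_hd2_z hN)

lemma reach_V_z : S.out.Reaches S.V S.z := by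
  by_cases hp : S.p = S.w0
  · have h1 : S.hd1 = S.hd2 := S.hd1_eq' hp
    exact Relation.ReflTransGen.head (S.adj_V_hd1 hN) (h1 ▸ S.reach_hd2_z hN)
  · have h1 : S.hd1 = S.cp := S.hd1_eq hp
    refine Relation.ReflTransGen.head (S.adj_V_hd1 hN) ?_
    rw [h1]
    exact (S.reach_cp_p hN hp).trans (S.sreach_p_hd2 hN hp).to_reflTransGen

lemma sreach_q_z : S.out.SReaches S.q S.z := by
  by_cases hq : S.q = S.w0
  · rw [hq]
    exact Relation.TransGen.head' (hq ▸ S.adj_w0_V hN) (S.reach_V_z hN)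
  · exact Relation.TransGen.single (S.adj_q_z hN hq)

lemma sreach_p_z : S.out.SReaches S.p S.z := by
  by_cases hp : S.p = S.w0
  · rw [hp]
    exact Relation.TransGen.head' (S.adj_w0_V hN) (S.reach_V_z hN)
  · exact S.sreach_p_hd2 hN hp

lemma reach_V_cq (hq : S.q ≠ S.w0) : S.out.Reaches S.V S.cq := by
  by_cases hp : S.p = S.w0
  · have h1 : S.hd1 = S.cq := (S.hd1_eq' hp).trans (S.hd2_eq hq)
    exact Relation.ReflTransGen.single (h1 ▸ S.adj_V_hd1 hN)
  · have h1 : S.hd1 = S.cp := S.hd1_eq hp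
    refine Relation.ReflTransGen.head (S.adj_V_hd1 hN) ?_
    rw [h1]
    refine (S.reach_cp_p hN hp).tail ?_
    have h2 : S.hd2 = S.cq := S.hd2_eq hq
    exact h2 ▸ S.adj_p_hd2 hN hp

lemma sreach_w0_child {x : ℕ} (hx : N.Adj S.w0 x) (hxv : x ≠ S.v) :
    S.out.SReaches S.w0 x := by
  rcases S.hw0arcs hN x hx with rfl | rfl
  · have hp : S.p ≠ S.w0 := S.p_ne_w0_of_cp hxv
    have h1 : S.hd1 = S.cp := S.hd1_eq hp
    exact Relation.TransGen.head (S.adj_w0_V hN)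
      (Relation.TransGen.single (h1 ▸ S.adj_V_hd1 hN))
  · have hq : S.q ≠ S.w0 := S.q_ne_w0_of_cq hxv
    exact Relation.TransGen.head' (S.adj_w0_V hN) (S.reach_V_cq hN hq)

lemma vcone {a : ℕ} (h : N.Reaches S.v a) (ha : a ≠ S.v) : N.Reaches S.z a := by
  rcases Relation.ReflTransGen.cases_head h with rfl | ⟨t, ht, hrest⟩
  · exact absurd rfl ha
  · have : t = S.z := by
      by_contra hne
      have := S.hnoout t hne
      have : ¬ (0 < N.mult S.v t) := by omega
      exact this ht
    exact this ▸ hrest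

/-- One-arc reachability preservation, with `v` replaced by `z`. -/
lemma arcpres {a x : ℕ} (h : N.Adj a x) :
    S.out.Reaches (if a = S.v then S.z else a) (if x = S.v then S.z else x) := by
  by_cases hav : a = S.v
  · -- then x = z
    have hxz : x = S.z := by
      by_contra hne
      have h0 := S.hnoout x hne
      have : 0 < N.mult S.v x := hav ▸ h
      omega
    rw [if_pos hav, hxz, if_neg (Ne.symm (S.hvz' hN))]
    exact Relation.ReflTransGen.refl
  · rw [if_neg hav]
    by_cases hxv : x = S.v
    · rw [if_pos hxv]
      -- a ∈ {p, q}
      have hapq : a = S.p ∨ a = S.q := by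
        by_contra hcon
        push_neg at hcon
        have h0 := S.hnoin a hcon.1 hcon.2
        have : 0 < N.mult a x := h
        rw [hxv] at this
        omega
      rcases hapq with rfl | rfl
      · exact (S.sreach_p_z hN).to_reflTransGen
      · exact (S.sreach_q_z hN).to_reflTransGen
    · rw [if_neg hxv]
      by_cases haw : a = S.w0
      · exact (haw ▸ S.sreach_w0_child hN (haw ▸ h) hxv).to_reflTransGen
      · have haV : a ≠ S.V := fun hh => S.hVfresh (hh ▸ (hN.supported _ _ h).1)
        have hxV : x ≠ S.V := fun hh => S.hVfresh (hh ▸ (hN.supported _ _ h).2)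
        refine Relation.ReflTransGen.single ?_
        show 0 < S.out.mult a x
        rw [S.mult_gen a x hav hxv haw haV hxV]
        have : 0 < N.mult a x := h
        omega

/-- Reachability preservation. -/
lemma reachpres : ∀ {a b : ℕ}, N.Reaches a b →
    S.out.Reaches (if a = S.v then S.z else a) (if b = S.v then S.z else b) := by
  intro a b h
  induction h using Relation.ReflTransGen.head_induction_on with
  | refl => exact Relation.ReflTransGen.refl
  | head hadj hrest ih => exact (S.arcpres hN hadj).trans ih

lemma reachpres' {a b : ℕ} (h : N.Reaches a b) (ha : a ≠ S.v) (hb : b ≠ S.v) :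
    S.out.Reaches a b := by
  have := S.reachpres hN h
  rwa [if_neg ha, if_neg hb] at this

/-- One-arc strict preservation. -/
lemma arc_strict {a x : ℕ} (h : N.Adj a x) (hav : a ≠ S.v) :
    S.out.SReaches a (if x = S.v then S.z else x) := by
  by_cases hxv : x = S.v
  · rw [if_pos hxv]
    have hapq : a = S.p ∨ a = S.q := by
      by_contra hcon
      push_neg at hcon
      have h0 := S.hnoin a hcon.1 hcon.2
      have : 0 < N.mult a x := h
      rw [hxv] at this
      omega
    rcases hapq with rfl | rfl
    · exact S.sreach_p_z hN
    · exact S.sreach_q_z hN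
  · rw [if_neg hxv]
    by_cases haw : a = S.w0
    · exact haw ▸ S.sreach_w0_child hN (haw ▸ h) hxv
    · have haV : a ≠ S.V := fun hh => S.hVfresh (hh ▸ (hN.supported _ _ h).1)
      have hxV : x ≠ S.V := fun hh => S.hVfresh (hh ▸ (hN.supported _ _ h).2)
      refine Relation.TransGen.single ?_
      show 0 < S.out.mult a x
      rw [S.mult_gen a x hav hxv haw haV hxV]
      have : 0 < N.mult a x := h
      omega

/-- Strict reachability preservation. -/
lemma sreachpres {a b : ℕ} (h : N.SReaches a b) (hav : a ≠ S.v) :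
    S.out.SReaches a (if b = S.v then S.z else b) := by
  obtain ⟨c, hac, hcb⟩ := Relation.TransGen.head'_iff.1 h
  exact Relation.TransGen.trans_left (S.arc_strict hN hac hav) (S.reachpres hN hcb)

end Reach


section Rel2Pres

variable (hN : N.IsNetwork X)

include hN

lemma reach_V_from_child {t a : ℕ} (ht : t = S.cp ∨ t = S.cq) (hr : N.Reaches t a)
    (ha : a ≠ S.v) : S.out.Reaches S.V a := by
  rcases ht with rfl | rfl
  · by_cases hcpv : S.cp = S.v
    · -- then the whole cone of cp is below z
      have hza : N.Reaches S.z a := S.vcone hN (hcpv ▸ hr) ha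
      exact (S.reach_V_z hN).trans (S.reachpres' hN hza (Ne.symm (S.hvz' hN)) ha)
    · have hp : S.p ≠ S.w0 := S.p_ne_w0_of_cp hcpv
      have h1 : S.hd1 = S.cp := S.hd1_eq hp
      exact Relation.ReflTransGen.head (h1 ▸ S.adj_V_hd1 hN)
        (S.reachpres' hN hr hcpv ha)
  · by_cases hcqv : S.cq = S.v
    · have hza : N.Reaches S.z a := S.vcone hN (hcqv ▸ hr) ha
      exact (S.reach_V_z hN).trans (S.reachpres' hN hza (Ne.symm (S.hvz' hN)) ha)
    · have hq : S.q ≠ S.w0 := S.q_ne_w0_of_cq hcqv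
      exact (S.reach_V_cq hN hq).trans (S.reachpres' hN hr hcqv ha)

lemma rel2pres {w a b : ℕ} (h : N.Rel2 w a b) (hw : w ≠ S.v) (ha : a ≠ S.v)
    (hb : b ≠ S.v) : S.out.Rel2 w a b := by
  obtain ⟨e, f, he, hf, hef, he1, hf1, hra, hrb⟩ := h
  have hwverts : w ∈ N.verts := by
    have : N.Adj w e.2.1 := by
      have : 0 < N.mult e.1 e.2.1 := lt_of_le_of_lt (Nat.zero_le _) he
      rwa [he1] at this
    exact (hN.supported _ _ this).1
  have hAdje : N.Adj w e.2.1 := by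
    have : 0 < N.mult e.1 e.2.1 := lt_of_le_of_lt (Nat.zero_le _) he
    rwa [he1] at this
  have hAdjf : N.Adj w f.2.1 := by
    have : 0 < N.mult f.1 f.2.1 := lt_of_le_of_lt (Nat.zero_le _) hf
    rwa [hf1] at this
  by_cases hww : w = S.w0
  · -- use the two parallel bead arcs
    subst hww
    refine ⟨(S.w0, S.V, 0), (S.w0, S.V, 1), ?_, ?_, ?_, rfl, rfl, ?_, ?_⟩
    · show 0 < S.out.mult S.w0 S.V
      rw [S.mult_w0V]; omega
    · show 1 < S.out.mult S.w0 S.V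
      rw [S.mult_w0V]; omega
    · simp
    · exact S.reach_V_from_child hN (S.hw0arcs hN _ hAdje) hra ha
    · exact S.reach_V_from_child hN (S.hw0arcs hN _ hAdjf) hrb hb
  · -- map each arc
    have key : ∀ (g : Arc) (c : ℕ), N.ArcOK g → g.1 = w → N.Reaches g.2.1 c → c ≠ S.v →
        ∃ g' : Arc, S.out.ArcOK g' ∧ g'.1 = w ∧ S.out.Reaches g'.2.1 c ∧
          ((g.2.1 = S.v ∧ g' = (w, (if w = S.p then S.hd2 else S.z),
            (if w = S.p then N.mult S.p S.hd2 else N.mult S.q S.z))) ∨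
           (g.2.1 ≠ S.v ∧ g' = g)) := by
      intro g c hg hg1 hgr hc
      by_cases hgv : g.2.1 = S.v
      · -- arc into v
        have hwpq : w = S.p ∨ w = S.q := by
          by_contra hcon
          push_neg at hcon
          have h0 := S.hnoin w hcon.1 hcon.2
          have : 0 < N.mult w S.v := by
            have : 0 < N.mult g.1 g.2.1 := lt_of_le_of_lt (Nat.zero_le _) hg
            rwa [hg1, hgv] at this
          omega
        have hzc : S.out.Reaches S.z c :=
          S.reachpres' hN (S.vcone hN (hgv ▸ hgr) hc) (Ne.symm (S.hvz' hN)) hc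
        rcases hwpq with rfl | rfl
        · have hp : S.p ≠ S.w0 := hww
          refine ⟨(S.p, S.hd2, N.mult S.p S.hd2), ?_, rfl, ?_, Or.inl ⟨hgv, by
            rw [if_pos rfl, if_pos rfl]⟩⟩
          · show N.mult S.p S.hd2 < S.out.mult S.p S.hd2
            rw [S.mult_gen S.p S.hd2 (S.hpv' hN) (S.hd2v hN) hp (S.hpV hN) (S.hd2V hN)]
            have h2 : (if S.p = S.p ∧ S.hd2 = S.hd2 ∧ S.p ≠ S.w0 then 1 else 0) = 1 :=
              if_pos ⟨rfl, rfl, hp⟩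
            omega
          · exact (S.reach_hd2_z hN).trans hzc
        · have hq : S.q ≠ S.w0 := hww
          have hwp : S.q ≠ S.p := Ne.symm S.hpq
          refine ⟨(S.q, S.z, N.mult S.q S.z), ?_, rfl, hzc, Or.inl ⟨hgv, by
            rw [if_neg hwp, if_neg hwp]⟩⟩
          · show N.mult S.q S.z < S.out.mult S.q S.z
            rw [S.mult_gen S.q S.z (S.hqv' hN) (Ne.symm (S.hvz' hN)) hq (S.hqV hN)
              (S.hzV hN)]
            have h2 : (if S.q = S.q ∧ S.z = S.z ∧ S.q ≠ S.w0 then 1 else 0) = 1 :=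
              if_pos ⟨rfl, rfl, hq⟩
            omega
      · -- arc staying
        refine ⟨g, ?_, hg1, ?_, Or.inr ⟨hgv, rfl⟩⟩
        · show g.2.2 < S.out.mult g.1 g.2.1
          have hwV : w ≠ S.V := fun hh => S.hVfresh (hh ▸ hwverts)
          have hgV : g.2.1 ≠ S.V := by
            intro hh
            have hAdj : N.Adj w g.2.1 := by
              have : 0 < N.mult g.1 g.2.1 := lt_of_le_of_lt (Nat.zero_le _) hg
              rwa [hg1] at this
            exact S.hVfresh (hh ▸ (hN.supported _ _ hAdj).2)
          rw [hg1, S.mult_gen w g.2.1 hw hgv hww hwV hgV]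
          have : g.2.2 < N.mult w g.2.1 := by rw [← hg1]; exact hg
          omega
        · exact S.reachpres' hN hgr hgv hc
    obtain ⟨e', he', he'1, he'r, he'c⟩ := key e a he he1 hra ha
    obtain ⟨f', hf', hf'1, hf'r, hf'c⟩ := key f b hf hf1 hrb hb
    refine ⟨e', f', he', hf', ?_, he'1, hf'1, he'r, hf'r⟩
    -- distinctness
    rcases he'c with ⟨hev, he'e⟩ | ⟨hev, he'e⟩
    · rcases hf'c with ⟨hfv, hf'f⟩ | ⟨hfv, hf'f⟩
      · -- both arcs into v: impossible since mult _ v = 1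
        exfalso
        have hwpq : w = S.p ∨ w = S.q := by
          by_contra hcon
          push_neg at hcon
          have h0 := S.hnoin w hcon.1 hcon.2
          have : 0 < N.mult w S.v := by
            have : 0 < N.mult e.1 e.2.1 := lt_of_le_of_lt (Nat.zero_le _) he
            rwa [he1, hev] at this
          omega
        have hmw : N.mult w S.v = 1 := by
          rcases hwpq with rfl | rfl
          · exact S.hmpv
          · exact S.hmqv
        have hee : e.2.2 = 0 := by
          have := he
          rw [ArcOK, he1, hev, hmw] at this
          omega
        have hff : f.2.2 = 0 := by
          have := hf
          rw [ArcOK, hf1, hfv, hmw] at this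
          omega
        apply hef
        have he2 : e = (w, S.v, 0) := by
          obtain ⟨e1, e2, e3⟩ := e
          simp only [Prod.mk.injEq] at *
          exact ⟨he1, hev, hee⟩
        have hf2 : f = (w, S.v, 0) := by
          obtain ⟨f1, f2, f3⟩ := f
          simp only [Prod.mk.injEq] at *
          exact ⟨hf1, hfv, hff⟩
        rw [he2, hf2]
      · -- e into v, f stays
        rw [he'e, hf'f]
        intro hcon
        -- then f = (w, hd2-or-z, mult ...) : its index is not a valid N-index
        have hf3 : f.2.2 < N.mult f.1 f.2.1 := hf
        rw [← hcon] at hf3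
        by_cases hwp : w = S.p
        · rw [if_pos hwp, if_pos hwp] at hf3
          simp only at hf3
          rw [hwp] at hf3
          omega
        · rw [if_neg hwp, if_neg hwp] at hf3
          simp only at hf3
          have hwq : w = S.q := by
            rcases (by
              by_contra hcon2
              push_neg at hcon2
              have h0 := S.hnoin w hcon2.1 hcon2.2
              have : 0 < N.mult w S.v := by
                have : 0 < N.mult e.1 e.2.1 := lt_of_le_of_lt (Nat.zero_le _) he
                rwa [he1, hev] at this
              omega : w = S.p ∨ w = S.q) with h | h
            · exact absurd h hwp
            · exact h
          rw [hwq] at hf3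
          omega
    · rcases hf'c with ⟨hfv, hf'f⟩ | ⟨hfv, hf'f⟩
      · rw [he'e, hf'f]
        intro hcon
        have he3 : e.2.2 < N.mult e.1 e.2.1 := he
        rw [hcon] at he3
        by_cases hwp : w = S.p
        · rw [if_pos hwp, if_pos hwp] at he3
          simp only at he3
          rw [hwp] at he3
          omega
        · rw [if_neg hwp, if_neg hwp] at he3
          simp only at he3
          have hwq : w = S.q := by
            rcases (by
              by_contra hcon2
              push_neg at hcon2
              have h0 := S.hnoin w hcon2.1 hcon2.2
              have : 0 < N.mult w S.v := by
                have : 0 < N.mult f.1 f.2.1 := lt_of_le_of_lt (Nat.zero_le _) hf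
                rwa [hf1, hfv] at this
              omega : w = S.p ∨ w = S.q) with h | h
            · exact absurd h hwp
            · exact h
          rw [hwq] at he3
          omega
      · rw [he'e, hf'f]
        exact hef

end Rel2Pres


section Transfer

variable (hN : N.IsNetwork X)

omit hN in
lemma not_rel2_v {a b : ℕ} : ¬ N.Rel2 S.v a b := by
  rintro ⟨e, f, he, hf, hef, he1, hf1, -, -⟩
  have hez : e.2.1 = S.z := by
    by_contra hne
    have h0 := S.hnoout e.2.1 hne
    have : e.2.2 < N.mult e.1 e.2.1 := he
    rw [he1, h0] at this
    omega
  have hfz : f.2.1 = S.z := by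
    by_contra hne
    have h0 := S.hnoout f.2.1 hne
    have : f.2.2 < N.mult f.1 f.2.1 := hf
    rw [hf1, h0] at this
    omega
  have hee : e.2.2 = 0 := by
    have : e.2.2 < N.mult e.1 e.2.1 := he
    rw [he1, hez, S.hmvz] at this
    omega
  have hff : f.2.2 = 0 := by
    have : f.2.2 < N.mult f.1 f.2.1 := hf
    rw [hf1, hfz, S.hmvz] at this
    omega
  apply hef
  obtain ⟨e1, e2, e3⟩ := e
  obtain ⟨f1, f2, f3⟩ := f
  simp only [Prod.mk.injEq] at *
  exact ⟨he1.trans hf1.symm, hez.trans hfz.symm, by omega⟩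

include hN

/-- Images of non-root nodes of `T` never equal `v`. -/
lemma child_image_ne_v {T : DG} (hT : T.IsMulTree X) {h : ℕ → ℕ} (hA : T.AbsEmb N h)
    {u y : ℕ} (hadj : T.Adj u y) : h y ≠ S.v := by
  have hyverts : y ∈ T.verts := (hT.supported u y hadj).2
  have huverts : u ∈ T.verts := (hT.supported u y hadj).1
  rcases hT.nodes y hyverts with hr | ht | hl
  · -- y cannot be the root
    exfalso
    have h0 : 0 < T.inDeg y := by
      have h1 : 0 < T.mult u y := hadj
      have h2 : T.mult u y ≤ ∑ s ∈ T.verts, T.mult s y :=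
        Finset.single_le_sum (f := fun s => T.mult s y)
          (fun i _ => Nat.zero_le _) huverts
      unfold inDeg
      omega
    have := hr.2.1
    omega
  · obtain ⟨c1, c2, h1, h2, h3⟩ := exists_two_children hT ht
    intro hcon
    exact S.not_rel2_v (hcon ▸ hA.2.2 y c1 c2 h1 h2 h3)
  · intro hcon
    exact S.vnotleaf hN (hcon ▸ (hA.1 y hl).1)

/-- Transfer of an abstract embedding along the surgery. -/
lemma absemb_out {T : DG} (hT : T.IsMulTree X) {h : ℕ → ℕ} (hA : T.AbsEmb N h) :
    T.AbsEmb S.out (fun x => if h x = S.v then S.q else h x) := by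
  refine ⟨?_, ?_, ?_⟩
  · intro x hl
    dsimp only
    have h1 := hA.1 x hl
    have hxv : h x ≠ S.v := fun hh => S.vnotleaf hN (hh ▸ h1.1)
    rw [if_neg hxv]
    refine ⟨⟨S.mem_verts' hN h1.1.1 hxv, ?_, ?_⟩, ?_⟩
    · rw [S.inDeg_pres hN _ h1.1.1 hxv]; exact h1.1.2.1
    · rw [S.outDeg_pres hN _ h1.1.1 hxv]; exact h1.1.2.2
    · show N.label (h x) = T.label x
      exact h1.2
  · intro u y hadj
    dsimp only
    have hyv : h y ≠ S.v := S.child_image_ne_v hN hT hA hadj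
    rw [if_neg hyv]
    by_cases huv : h u = S.v
    · rw [if_pos huv]
      -- h u = v : route through q
      have hsr : N.SReaches S.v (h y) := huv ▸ hA.2.1 u y hadj
      obtain ⟨c, hc, hcb⟩ := Relation.TransGen.head'_iff.1 hsr
      have hcz : c = S.z := by
        by_contra hne
        have h0 := S.hnoout c hne
        have : 0 < N.mult S.v c := hc
        omega
      subst hcz
      exact Relation.TransGen.trans_left (S.sreach_q_z hN)
        (S.reachpres' hN hcb (Ne.symm (S.hvz' hN)) hyv)
    · rw [if_neg huv]
      have := S.sreachpres hN (hA.2.1 u y hadj) huv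
      rwa [if_neg hyv] at this
  · intro x y y' hy hy' hne
    dsimp only
    have hyv : h y ≠ S.v := S.child_image_ne_v hN hT hA hy
    have hy'v : h y' ≠ S.v := S.child_image_ne_v hN hT hA hy'
    have hrel := hA.2.2 x y y' hy hy' hne
    have hxv : h x ≠ S.v := fun hh => S.not_rel2_v (hh ▸ hrel)
    rw [if_neg hxv, if_neg hyv, if_neg hy'v]
    exact S.rel2pres hN hrel hxv hyv hy'v

lemma displays_out {T : DG} (hT : T.IsMulTree X) (hd : N.Displays T) :
    S.out.Displays T := by
  obtain ⟨h, hA⟩ := abs_of_displays hd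
  exact displays_of_abs hT (S.supportedout hN) (S.absemb_out hN hT hA)

end Transfer

end SurgData

/-- The set of non-bead reticulations. -/
noncomputable def nbSet (G : DG) : Finset ℕ :=
  G.verts.filter (fun x => G.inDeg x = 2 ∧ G.outDeg x = 1 ∧ ¬ ∃ u, G.mult u x = 2)

namespace SurgData

variable {X : Finset ℕ} {N : DG} (S : SurgData N)

lemma nb_lt (hN : N.IsNetwork X) : S.out.nbSet.card < N.nbSet.card := by
  classical
  have hvmem : S.v ∈ N.nbSet := by
    refine Finset.mem_filter.2 ⟨S.hv, S.hvin, S.hvout, ?_⟩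
    rintro ⟨u, hu⟩
    by_cases h1 : u = S.p
    · rw [h1, S.hmpv] at hu; omega
    · by_cases h2 : u = S.q
      · rw [h2, S.hmqv] at hu; omega
      · rw [S.hnoin u h1 h2] at hu; omega
  have hsub : S.out.nbSet ⊆ N.nbSet.erase S.v := by
    intro x hx
    obtain ⟨hx1, h2, h1, hnb⟩ := Finset.mem_filter.1 hx
    have hx1' : x ∈ insert S.V (N.verts.erase S.v) := hx1
    rcases Finset.mem_insert.1 hx1' with hxV | hxm
    · exfalso
      exact hnb ⟨S.w0, hxV ▸ S.mult_w0V⟩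
    · obtain ⟨hxv, hxm'⟩ := Finset.mem_erase.1 hxm
      refine Finset.mem_erase.2 ⟨hxv, Finset.mem_filter.2 ⟨hxm', ?_, ?_, ?_⟩⟩
      · rw [← S.inDeg_pres hN x hxm' hxv]; exact h2
      · rw [← S.outDeg_pres hN x hxm' hxv]; exact h1
      · rintro ⟨u, hu⟩
        apply hnb
        refine ⟨u, ?_⟩
        have huverts : u ∈ N.verts := by
          refine (hN.supported u x ?_).1
          show 0 < N.mult u x
          omega
        have huv : u ≠ S.v := by
          intro hh
          rw [hh, S.mult_row_v_split x] at hu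
          split_ifs at hu <;> omega
        have huw : u ≠ S.w0 := by
          intro hh
          rw [hh, S.mult_w0_split hN x] at hu
          split_ifs at hu with hc1 hc2 hc3 <;>
            first
              | omega
              | exact S.hcpcq (hc1.symm.trans hc2)
        have huV : u ≠ S.V := fun hh => S.hVfresh (hh ▸ huverts)
        have hxV : x ≠ S.V := fun hh => S.hVfresh (hh ▸ hxm')
        rw [S.mult_gen u x huv hxv huw huV hxV]
        -- the extra arcs cannot double an existing double arc
        have hite1 : (if u = S.p ∧ x = S.hd2 ∧ S.p ≠ S.w0 then 1 else 0) = 0 := by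
          by_cases hc : u = S.p ∧ x = S.hd2 ∧ S.p ≠ S.w0
          · exfalso
            obtain ⟨rfl, rfl, -⟩ := hc
            have hle := sum_pair_le (f := N.mult S.p) (S.hv)
              (S.hd2verts hN) (Ne.symm (S.hd2v hN))
            have hd := outdeg_le_two hN (S.hpverts hN)
            unfold outDeg at hd
            have := S.hmpv
            omega
          · exact if_neg hc
        have hite2 : (if u = S.q ∧ x = S.z ∧ S.q ≠ S.w0 then 1 else 0) = 0 := by
          by_cases hc : u = S.q ∧ x = S.z ∧ S.q ≠ S.w0
          · exfalso
            obtain ⟨rfl, rfl, -⟩ := hc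
            have hle := sum_pair_le (f := N.mult S.q) (S.hv)
              (S.hzverts hN) (S.hvz' hN)
            have hd := outdeg_le_two hN (S.hqverts hN)
            unfold outDeg at hd
            have := S.hmqv
            omega
          · exact if_neg hc
        omega
  calc S.out.nbSet.card ≤ (N.nbSet.erase S.v).card := Finset.card_le_card hsub
    _ < N.nbSet.card := by
      rw [Finset.card_erase_of_mem hvmem]
      have : 0 < N.nbSet.card := Finset.card_pos.2 ⟨S.v, hvmem⟩
      omega

end SurgData


section Existence

variable {X : Finset ℕ} {N : DG}

lemma mult_le_one_into (hN : N.IsNetwork X) {v : ℕ} (hvin : N.inDeg v = 2)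
    (hvnb : ¬ ∃ u, N.mult u v = 2) : ∀ u, N.mult u v ≤ 1 := by
  intro u
  by_cases hu : u ∈ N.verts
  · have hle : N.mult u v ≤ N.inDeg v := by
      unfold inDeg
      exact Finset.single_le_sum (f := fun s => N.mult s v) (fun i _ => Nat.zero_le _) hu
    have hne : N.mult u v ≠ 2 := fun h => hvnb ⟨u, h⟩
    omega
  · by_contra hcon
    exact hu (hN.supported u v (by omega : 0 < N.mult u v)).1

lemma exists_surgdata (hN : N.IsNetwork X) (hnb : N.nbSet.Nonempty) :
    Nonempty (SurgData N) := by
  classical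
  obtain ⟨v, hv⟩ := hnb
  obtain ⟨hvverts, hvin, hvout, hvnb⟩ := Finset.mem_filter.1 hv
  have hle1 : ∀ u, N.mult u v ≤ 1 := mult_le_one_into hN hvin hvnb
  -- extract the two parents
  obtain ⟨p, hpmem, hppos⟩ : ∃ p ∈ N.verts, 0 < N.mult p v := by
    by_contra hcon
    push_neg at hcon
    have : N.inDeg v = 0 := Finset.sum_eq_zero (fun u hu => by have := hcon u hu; omega)
    omega
  have hmpv : N.mult p v = 1 := le_antisymm (hle1 p) hppos
  obtain ⟨q, hqmem, hqpos⟩ : ∃ q ∈ N.verts.erase p, 0 < N.mult q v := by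
    by_contra hcon
    push_neg at hcon
    have h0 : ∑ u ∈ N.verts.erase p, N.mult u v = 0 :=
      Finset.sum_eq_zero (fun u hu => by have := hcon u hu; omega)
    have hsum : N.mult p v + ∑ u ∈ N.verts.erase p, N.mult u v
        = ∑ u ∈ N.verts, N.mult u v :=
      Finset.add_sum_erase N.verts (fun u => N.mult u v) hpmem
    unfold inDeg at hvin
    omega
  have hpq : p ≠ q := fun h => (Finset.mem_erase.1 hqmem).1 h.symm
  have hqmem' : q ∈ N.verts := (Finset.mem_erase.1 hqmem).2
  have hmqv : N.mult q v = 1 := le_antisymm (hle1 q) hqpos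
  have hnoin : ∀ u, u ≠ p → u ≠ q → N.mult u v = 0 := by
    intro u hup huq
    by_cases hu : u ∈ N.verts
    · have htot : ∑ t ∈ N.verts, N.mult t v = (fun t => N.mult t v) p
          + (fun t => N.mult t v) q := by
        unfold inDeg at hvin
        simp only
        omega
      exact sum_pair_eq hpmem hqmem' hpq htot u hu hup huq
    · by_contra hcon
      exact hu (hN.supported u v (by omega : 0 < N.mult u v)).1
  -- extract the unique child
  obtain ⟨z, hzmem, hzpos⟩ : ∃ z ∈ N.verts, 0 < N.mult v z := by
    by_contra hcon
    push_neg at hcon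
    have : N.outDeg v = 0 := Finset.sum_eq_zero (fun t ht => by have := hcon t ht; omega)
    omega
  have hnoout : ∀ t, t ≠ z → N.mult v t = 0 := by
    intro t htz
    by_cases ht : t ∈ N.verts
    · have h1 : N.mult v z + ∑ t ∈ N.verts.erase z, N.mult v t = N.outDeg v :=
        Finset.add_sum_erase _ _ hzmem
      have h2 : ∑ u ∈ N.verts.erase z, N.mult v u = 0 := by omega
      have := Finset.sum_eq_zero_iff.1 h2 t (Finset.mem_erase.2 ⟨htz, ht⟩)
      exact this
    · by_contra hcon
      exact ht (hN.supported v t (by omega : 0 < N.mult v t)).2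
  have hmvz : N.mult v z = 1 := by
    have h1 : N.mult v z + ∑ t ∈ N.verts.erase z, N.mult v t = N.outDeg v :=
      Finset.add_sum_erase _ _ hzmem
    have h2 : 0 ≤ ∑ t ∈ N.verts.erase z, N.mult v t := Nat.zero_le _
    omega
  -- fresh vertex
  obtain ⟨V, hV⟩ := Infinite.exists_notMem_finset N.verts
  -- the minimal branching ancestor
  obtain ⟨r, hr, -⟩ := hN.root
  set Y := N.verts.filter (fun w => N.Reaches w p ∧ N.Reaches w q) with hY
  have hrY : r ∈ Y := Finset.mem_filter.2
    ⟨hr.1, root_reaches_all hN hr p hpmem, root_reaches_all hN hr q hqmem'⟩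
  obtain ⟨w0, hw0Y, hw0min⟩ := exists_sreach_min hN.acyclic Y ⟨r, hrY⟩
  obtain ⟨hw0verts, hw0p, hw0q⟩ :
      w0 ∈ N.verts ∧ N.Reaches w0 p ∧ N.Reaches w0 q := by
    have := Finset.mem_filter.1 hw0Y
    exact ⟨this.1, this.2.1, this.2.2⟩
  have hpv : N.Adj p v := by show 0 < N.mult p v; omega
  have hqv : N.Adj q v := by show 0 < N.mult q v; omega
  -- construct cp
  have hcpgen : ∃ cp, N.Adj w0 cp ∧ ((w0 = p ∧ cp = v) ∨ (w0 ≠ p ∧ cp ≠ v ∧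
      N.Reaches cp p ∧ cp ∈ N.verts)) := by
    by_cases hwp : w0 = p
    · exact ⟨v, by rw [hwp]; exact hpv, Or.inl ⟨hwp, rfl⟩⟩
    · rcases Relation.ReflTransGen.cases_head hw0p with heq | ⟨c, hc, hcp⟩
      · exact absurd heq hwp
      · refine ⟨c, hc, Or.inr ⟨hwp, ?_, hcp, (hN.supported _ _ hc).2⟩⟩
        intro hcv
        exact hN.acyclic p (Relation.TransGen.head' hpv (hcv ▸ hcp))
  have hcqgen : ∃ cq, N.Adj w0 cq ∧ ((w0 = q ∧ cq = v) ∨ (w0 ≠ q ∧ cq ≠ v ∧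
      N.Reaches cq q ∧ cq ∈ N.verts)) := by
    by_cases hwq : w0 = q
    · exact ⟨v, by rw [hwq]; exact hqv, Or.inl ⟨hwq, rfl⟩⟩
    · rcases Relation.ReflTransGen.cases_head hw0q with heq | ⟨c, hc, hcq⟩
      · exact absurd heq hwq
      · refine ⟨c, hc, Or.inr ⟨hwq, ?_, hcq, (hN.supported _ _ hc).2⟩⟩
        intro hcv
        exact hN.acyclic q (Relation.TransGen.head' hqv (hcv ▸ hcq))
  obtain ⟨cp, hacp, hcp⟩ := hcpgen
  obtain ⟨cq, hacq, hcq⟩ := hcqgen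
  -- cp ≠ cq
  have hcpcq : cp ≠ cq := by
    rcases hcp with ⟨hwp, hcpv⟩ | ⟨hwp, hcpv, hcpr, hcpm⟩
    · rcases hcq with ⟨hwq, hcqv⟩ | ⟨hwq, hcqv, hcqr, hcqm⟩
      · exact absurd (hwp.symm.trans hwq) hpq
      · rw [hcpv]; exact fun h => hcqv h.symm
    · rcases hcq with ⟨hwq, hcqv⟩ | ⟨hwq, hcqv, hcqr, hcqm⟩
      · rw [hcqv]; exact hcpv
      · intro heq
        refine hw0min cp (Finset.mem_filter.2 ⟨hcpm, hcpr, heq ▸ hcqr⟩) ?_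
        exact Relation.TransGen.single hacp
  -- w0 has out-degree 2
  have hw0deg : N.outDeg w0 = 2 := by
    have hcpmem : cp ∈ N.verts := (hN.supported _ _ hacp).2
    have hcqmem : cq ∈ N.verts := (hN.supported _ _ hacq).2
    have hge := sum_pair_le (f := N.mult w0) hcpmem hcqmem hcpcq
    have h1 : 1 ≤ N.mult w0 cp := hacp
    have h2 : 1 ≤ N.mult w0 cq := hacq
    rcases hN.nodes w0 hw0verts with ⟨-, -, hd⟩ | ⟨-, -, hd⟩ | ⟨-, -, hd⟩ | ⟨-, -, hd⟩ <;>
      unfold outDeg at hd ⊢ <;> omega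
  -- the no-return condition
  have hnr : ¬ N.Reaches cq p := by
    rcases hcq with ⟨hwq, hcqv⟩ | ⟨hwq, hcqv, hcqr, hcqm⟩
    · rw [hcqv]
      intro hreach
      exact hN.acyclic p (Relation.TransGen.head' hpv hreach)
    · intro hreach
      refine hw0min cq (Finset.mem_filter.2 ⟨hcqm, hreach, hcqr⟩) ?_
      exact Relation.TransGen.single hacq
  refine ⟨⟨v, z, p, q, w0, cp, cq, V, hvverts, hvin, hvout, hmpv, hmqv, hpq, hnoin,
    hmvz, hnoout, hV, hw0verts, hw0deg, hacp, hacq, hcpcq, ?_, ?_, hnr⟩⟩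
  · rcases hcp with ⟨h1, h2⟩ | ⟨h1, h2, h3, -⟩
    · exact Or.inl ⟨h1, h2⟩
    · exact Or.inr ⟨h1, h2, h3⟩
  · rcases hcq with ⟨h1, h2⟩ | ⟨h1, h2, h3, -⟩
    · exact Or.inl ⟨h1, h2⟩
    · exact Or.inr ⟨h1, h2, h3⟩

lemma isbeaded_of_nbempty (hN : N.IsNetwork X) (h : ¬ N.nbSet.Nonempty) :
    N.IsBeadedTree X := by
  refine ⟨hN, ?_⟩
  intro x hx h2
  by_contra hcon
  have hout : N.outDeg x = 1 := by
    rcases hN.nodes x hx with ⟨-, hi, ho⟩ | ⟨-, hi, ho⟩ | ⟨-, hi, ho⟩ | ⟨-, hi, ho⟩ <;>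
      omega
  exact h ⟨x, Finset.mem_filter.2 ⟨hx, h2, hout, hcon⟩⟩

lemma exists_beaded (Ts : Set DG) (hT : ∀ T ∈ Ts, T.IsMulTree X) :
    ∀ (n : ℕ) (N : DG), N.nbSet.card ≤ n → N.IsNetwork X → (∀ T ∈ Ts, N.Displays T) →
      ∃ B : DG, B.IsBeadedTree X ∧ B.reticNum = N.reticNum ∧ ∀ T ∈ Ts, B.Displays T := by
  intro n
  induction n with
  | zero =>
    intro N hcard hN hdisp
    have hempty : ¬ N.nbSet.Nonempty := by
      intro ⟨x, hx⟩
      have := Finset.card_pos.2 ⟨x, hx⟩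
      omega
    exact ⟨N, isbeaded_of_nbempty hN hempty, rfl, hdisp⟩
  | succ n ih =>
    intro N hcard hN hdisp
    by_cases hnb : N.nbSet.Nonempty
    · obtain ⟨S⟩ := exists_surgdata hN hnb
      have hlt := S.nb_lt hN
      obtain ⟨B, hB1, hB2, hB3⟩ := ih S.out (by omega) (S.isnetworkout hN)
        (fun T hTmem => S.displays_out hN (hT T hTmem) (hdisp T hTmem))
      exact ⟨B, hB1, hB2.trans (S.reticNum_out hN), hB3⟩
    · exact ⟨N, isbeaded_of_nbempty hN hnb, rfl, hdisp⟩

end Existence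

end Surgery

end DG

/-- Lemma 2: there is a phylogenetic network on `X` with `k`
reticulations weakly displaying every MUL-tree in `𝒯` iff there is a beaded
tree on `X` with `k` reticulations weakly displaying every MUL-tree in `𝒯`. -/
theorem network_iff_beaded_tree (X : Finset ℕ) (Ts : Set DG)
    (hT : ∀ T ∈ Ts, DG.IsMulTree X T) (k : ℕ) :
    (∃ N : DG, DG.IsNetwork X N ∧ N.reticNum = k ∧ ∀ T ∈ Ts, N.Displays T) ↔
    (∃ B : DG, DG.IsBeadedTree X B ∧ B.reticNum = k ∧ ∀ T ∈ Ts, B.Displays T) := by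
  constructor
  · rintro ⟨N, hN, hk, hdisp⟩
    obtain ⟨B, hB1, hB2, hB3⟩ :=
      DG.exists_beaded Ts hT N.nbSet.card N le_rfl hN hdisp
    exact ⟨B, hB1, hB2.trans hk, hB3⟩
  · rintro ⟨B, hB, hk, hdisp⟩
    exact ⟨B, hB.1, hk, hdisp⟩
end
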